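/- arXiv:2007.03649 — 9 statements merged into one kernel-verified Lean document; each statement's English description precedes it below -/
import Mathlib

section
/- Let T be a linear operator on a complex Hilbert space H defined on a subspace D(T) ⊆ H. Let x ∈ D(T) with ‖x‖ = 1 and set z = ⟨Tx, x⟩. Then for every 0 < ε < 1 and every w ∈ W(T), the point εw + (1−ε)z belongs to the set {⟨Ty, y⟩ : y ∈ D(T), ‖y‖ = 1, and |⟨x, y⟩|² ≥ 1 − ε}. -/
open Filter Topology
open scoped InnerProductSpace

noncomputable section

variable {H : Type*} [NormedAddCommGroup H] [InnerProductSpace ℂ H] [CompleteSpace H]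

/-- The numerical range of an operator `T` defined on a subspace `D(T) = D ⊆ H`. -/
def numRange (D : Submodule ℂ H) (T : D →ₗ[ℂ] H) : Set ℂ :=
  {z : ℂ | ∃ x : D, ‖(x : H)‖ = 1 ∧ ⟪(x : H), T x⟫_ℂ = z}

private lemma exists_coeffs (uu vv : ℂ) : ∃ a b : ℝ, a^2 + b^2 = 1 ∧ a * uu.im + b * vv.im = 0 ∧ 0 ≤ a * uu.re + b * vv.re := by
  have base : ∃ a b : ℝ, a^2 + b^2 = 1 ∧ a * uu.im + b * vv.im = 0 := by
    by_cases h : uu.im = 0 ∧ vv.im = 0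
    · exact ⟨1, 0, by norm_num, by simp [h.1, h.2]⟩
    · set A := uu.im; set B := vv.im
      have hn : 0 < A^2 + B^2 := by
        rcases not_and_or.mp h with h | h
        · positivity
        · positivity
      have hs : 0 < Real.sqrt (A^2 + B^2) := Real.sqrt_pos.mpr hn
      have h2 : Real.sqrt (A^2+B^2) ^ 2 = A^2+B^2 := Real.sq_sqrt hn.le
      refine ⟨B / Real.sqrt (A^2+B^2), -A / Real.sqrt (A^2+B^2), ?_, ?_⟩
      · field_simp
        linarith [h2]
      · field_simp
        ring
  obtain ⟨a, b, h1, h2⟩ := base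
  rcases le_or_gt 0 (a * uu.re + b * vv.re) with h | h
  · exact ⟨a, b, h1, h2, h⟩
  · exact ⟨-a, -b, by linarith [h1], by linarith [h2], by linarith [h]⟩


set_option maxHeartbeats 2000000 in
/-- for `x ∈ D(T)` a unit vector with `z = ⟨Tx, x⟩`, every `0 < ε < 1` and every
`w ∈ W(T)`, the point `ε w + (1-ε) z` is a numerical-range value `⟨Ty, y⟩` attained at a unit
vector `y ∈ D(T)` with `|⟨x, y⟩|² ≥ 1 - ε`. -/
theorem cap_theorem (D : Submodule ℂ H) (T : D →ₗ[ℂ] H)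
    (x : D) (hx : ‖(x : H)‖ = 1) (z : ℂ) (hz : z = ⟪(x : H), T x⟫_ℂ)
    (ε : ℝ) (hε0 : 0 < ε) (hε1 : ε < 1) (w : ℂ) (hw : w ∈ numRange D T) :
    (ε : ℂ) * w + ((1 : ℂ) - (ε : ℂ)) * z ∈
      {c : ℂ | ∃ y : D, ‖(y : H)‖ = 1 ∧ ‖⟪(x : H), (y : H)⟫_ℂ‖ ^ 2 ≥ 1 - ε ∧
        ⟪(y : H), T y⟫_ℂ = c} := by
  obtain ⟨u₀, hu₀n, hu₀w⟩ := hw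
  have hxx : ⟪(x:H), (x:H)⟫_ℂ = 1 := by
    rw [inner_self_eq_norm_sq_to_K, hx]; norm_num
  by_cases hwz : w = z
  · refine ⟨x, hx, ?_, ?_⟩
    · rw [hxx]; norm_num; linarith
    · rw [← hz, hwz]; ring
  -- phase rotation of u₀
  obtain ⟨δ, hδ, hδc⟩ : ∃ δ : ℂ, ‖δ‖ = 1 ∧ δ * ⟪(x:H), (u₀:H)⟫_ℂ = (‖⟪(x:H),(u₀:H)⟫_ℂ‖ : ℂ) := by
    by_cases h : ⟪(x:H),(u₀:H)⟫_ℂ = 0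
    · exact ⟨1, by norm_num, by simp [h]⟩
    · refine ⟨(‖⟪(x:H),(u₀:H)⟫_ℂ‖ : ℂ) / ⟪(x:H),(u₀:H)⟫_ℂ, ?_, by field_simp⟩
      rw [norm_div, Complex.norm_real, norm_norm, div_self (norm_ne_zero_iff.mpr h)]
  set u : D := δ • u₀ with hu_def
  have hucoe : (u : H) = δ • (u₀ : H) := rfl
  have hun : ‖(u:H)‖ = 1 := by rw [hucoe, norm_smul, hδ, hu₀n]; norm_num
  have hδδ : (starRingEnd ℂ) δ * δ = 1 := by
    have := Complex.normSq_eq_conj_mul_self (z := δ)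
    rw [← this, Complex.normSq_eq_norm_sq, hδ]; norm_num
  have huw : ⟪(u:H), T u⟫_ℂ = w := by
    have : T u = δ • T u₀ := by rw [hu_def, map_smul]
    rw [hucoe, this, inner_smul_left, inner_smul_right, ← mul_assoc, hδδ, one_mul, hu₀w]
  set c : ℝ := ‖⟪(x:H),(u₀:H)⟫_ℂ‖ with hc_def
  have hcu : ⟪(x:H), (u:H)⟫_ℂ = (c:ℂ) := by
    rw [hucoe, inner_smul_right, hδc]
  have hux : ⟪(u:H), (x:H)⟫_ℂ = (c:ℂ) := by
    rw [← inner_conj_symm, hcu, Complex.conj_ofReal]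
  have huu : ⟪(u:H), (u:H)⟫_ℂ = 1 := by
    rw [inner_self_eq_norm_sq_to_K, hun]; norm_num
  set p : ℂ := ⟪(x:H), T u⟫_ℂ with hp_def
  set r : ℂ := ⟪(u:H), T x⟫_ℂ with hr_def
  have hq : w - z ≠ 0 := sub_ne_zero.mpr hwz
  -- choose phase τ
  obtain ⟨a, b, hab, him, hre⟩ := exists_coeffs ((p + r - 2*c*z)/(w-z)) ((Complex.I*(p-r))/(w-z))
  set τ : ℂ := (a:ℂ) + (b:ℂ)*Complex.I with hτ_def
  have hτre : τ.re = a := by simp [hτ_def]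
  have hτim : τ.im = b := by simp [hτ_def]
  have hτconj : (starRingEnd ℂ) τ = (a:ℂ) - (b:ℂ)*Complex.I := by
    simp [hτ_def, Complex.conj_I]
    ring
  set Fτ : ℂ := (τ*p + (starRingEnd ℂ) τ * r - 2*c*τ.re*z)/(w-z) with hF_def
  have hFsplit : Fτ = (a:ℂ) * ((p + r - 2*c*z)/(w-z)) + (b:ℂ) * ((Complex.I*(p-r))/(w-z)) := by
    rw [hF_def, hτconj, hτre, hτ_def]
    field_simp
    ring
  have hFim : Fτ.im = 0 := by
    rw [hFsplit]
    simp only [Complex.add_im, Complex.mul_im, Complex.ofReal_re, Complex.ofReal_im, zero_mul, add_zero]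
    exact him
  have hFre : 0 ≤ Fτ.re := by
    rw [hFsplit]
    simp only [Complex.add_re, Complex.mul_re, Complex.ofReal_re, Complex.ofReal_im, zero_mul, sub_zero]
    exact hre
  set ρ : ℝ := Fτ.re with hρ_def
  have hFρ : Fτ = (ρ:ℂ) := Complex.ext (by simp [hρ_def]) (by simp [hFim])
  have hkey : τ*p + (starRingEnd ℂ) τ * r = (ρ:ℂ)*(w-z) + 2*c*τ.re*z := by
    have := hF_def
    field_simp [hq] at this
    rw [← hFρ, this]
    ring
  -- IVT
  set k : ℝ := ρ - 2*ε*c*τ.re with hk_def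
  set f : ℝ → ℝ := fun ν => ν^2 - ε + ν * Real.sqrt (1 - ν^2) * k with hf_def
  have hcont : ContinuousOn f (Set.Icc 0 1) := by
    apply Continuous.continuousOn
    exact (continuous_pow 2).sub continuous_const |>.add
      ((continuous_id.mul ((continuous_const.sub (continuous_pow 2)).sqrt)).mul continuous_const)
  have hIVT := intermediate_value_Icc (by norm_num : (0:ℝ) ≤ 1) hcont
  have hf0 : f 0 = -ε := by simp [hf_def]
  have hf1 : f 1 = 1 - ε := by norm_num [hf_def]
  have h0mem : (0:ℝ) ∈ Set.Icc (f 0) (f 1) := by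
    rw [hf0, hf1]; constructor <;> linarith
  obtain ⟨ν, hνmem, hfν⟩ := hIVT h0mem
  obtain ⟨hν0, hν1⟩ := hνmem
  have hνne0 : ν ≠ 0 := by
    intro h; rw [h, hf0] at hfν; linarith
  have hνne1 : ν ≠ 1 := by
    intro h; rw [h, hf1] at hfν; linarith
  have hνpos : 0 < ν := lt_of_le_of_ne hν0 (Ne.symm hνne0)
  have hνlt1 : ν < 1 := lt_of_le_of_ne hν1 hνne1
  set μ : ℝ := Real.sqrt (1 - ν^2) with hμ_def
  have hμsq : μ^2 = 1 - ν^2 := Real.sq_sqrt (by nlinarith)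
  have hμpos : 0 < μ := Real.sqrt_pos.mpr (by nlinarith)
  have heq : ν^2 - ε + ν*μ*k = 0 := hfν
  have hττ : (starRingEnd ℂ) τ * τ = 1 := by
    have h1 : ((Complex.normSq τ : ℝ) : ℂ) = (starRingEnd ℂ) τ * τ := Complex.normSq_eq_conj_mul_self
    have h2 : Complex.normSq τ = a^2 + b^2 := by
      rw [Complex.normSq_apply, hτre, hτim]; ring
    rw [← h1, h2, hab]; norm_num
  set Y : D := (μ:ℂ) • x + ((ν:ℂ) * τ) • u with hY_def
  have hYcoe : (Y : H) = (μ:ℂ) • (x:H) + ((ν:ℂ) * τ) • (u:H) := rfl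
  set n : ℝ := 1 + 2*μ*ν*c*τ.re with hn_def
  have habC : ((a:ℂ))^2 + ((b:ℂ))^2 = 1 := by exact_mod_cast hab
  have hμsqC : ((μ:ℂ))^2 = 1 - ((ν:ℂ))^2 := by exact_mod_cast hμsq
  have hYY : ⟪(Y:H), (Y:H)⟫_ℂ = (n:ℂ) := by
    rw [hYcoe, inner_add_add_self]
    simp only [inner_smul_left, inner_smul_right, hxx, hcu, hux, huu, map_mul,
      Complex.conj_ofReal, mul_one]
    rw [hn_def, hτconj, hτre, hτ_def]
    push_cast
    linear_combination ((ν:ℂ))^2 * habC + hμsqC - ((ν:ℂ))^2*((b:ℂ))^2 * Complex.I_sq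
  have hYnormsq : ‖(Y:H)‖^2 = n := by
    have h1 : ⟪(Y:H), (Y:H)⟫_ℂ = ((‖(Y:H)‖:ℝ):ℂ)^2 := inner_self_eq_norm_sq_to_K ((Y:H))
    rw [hYY] at h1
    exact_mod_cast h1.symm
  -- Y ≠ 0
  have hτne : τ ≠ 0 := by
    intro h
    rw [h] at hττ
    simp at hττ
  have hντ : ((ν:ℂ)*τ) ≠ 0 := by
    apply mul_ne_zero _ hτne
    exact_mod_cast hνne0
  set s : ℂ := -(((ν:ℂ)*τ)⁻¹ * (μ:ℂ)) with hs_def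
  have hY0 : (Y:H) ≠ 0 := by
    intro h0
    rw [hYcoe] at h0
    have hB : ((ν:ℂ)*τ) • (u:H) = -((μ:ℂ) • (x:H)) := eq_neg_of_add_eq_zero_right h0
    have hs : (u:H) = s • (x:H) := by
      calc (u:H) = ((ν:ℂ)*τ)⁻¹ • (((ν:ℂ)*τ) • (u:H)) := by
            rw [smul_smul, inv_mul_cancel₀ hντ, one_smul]
        _ = ((ν:ℂ)*τ)⁻¹ • (-((μ:ℂ) • (x:H))) := by rw [hB]
        _ = s • (x:H) := by rw [smul_neg, smul_smul, ← neg_smul, ← hs_def]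
    have huD : u = s • x := Subtype.ext (by exact hs)
    have hsu : ‖s‖ = 1 := by
      have h1 : ‖(u:H)‖ = ‖s‖ * ‖(x:H)‖ := by rw [hs, norm_smul]
      rw [hun, hx, mul_one] at h1
      exact h1.symm
    have hss : (starRingEnd ℂ) s * s = 1 := by
      have h1 : ((Complex.normSq s : ℝ) : ℂ) = (starRingEnd ℂ) s * s := Complex.normSq_eq_conj_mul_self
      rw [← h1, Complex.normSq_eq_norm_sq, hsu]
      norm_num
    have : w = z := by
      rw [← huw, huD, map_smul]
      have : ((s • x : D) : H) = s • (x : H) := rfl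
      rw [this, inner_smul_left, inner_smul_right, ← mul_assoc, hss, one_mul, ← hz]
    exact hwz this
  have hnpos : 0 < n := by
    rw [← hYnormsq]
    exact pow_pos (norm_pos_iff.mpr hY0) 2
  -- complex casts of the real equation
  have heqR : ν^2 - ε + ν*μ*(ρ - 2*ε*c*τ.re) = 0 := by rw [← hk_def]; exact heq
  have heqC : (ν:ℂ)^2 - (ε:ℂ) + (ν:ℂ)*(μ:ℂ)*((ρ:ℂ) - 2*(ε:ℂ)*(c:ℂ)*((τ.re :ℝ):ℂ)) = 0 := by
    exact_mod_cast heqR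
  -- the inner product value on Y
  have hQ : ⟪(Y:H), T Y⟫_ℂ = (n:ℂ) * ((ε:ℂ) * w + ((1:ℂ) - (ε:ℂ)) * z) := by
    have hTY : T Y = (μ:ℂ) • T x + ((ν:ℂ) * τ) • T u := by
      rw [hY_def, map_add, map_smul, map_smul]
    rw [hYcoe, hTY]
    simp only [inner_add_left, inner_add_right, inner_smul_left, inner_smul_right,
      ← hz, huw, ← hp_def, ← hr_def, map_mul, Complex.conj_ofReal]
    rw [hn_def, hτre]
    push_cast
    rw [← hτre]
    linear_combination ((μ:ℂ)*(ν:ℂ))*hkey + (w - z)*heqC + z*hμsqC + (ν:ℂ)^2*w*hττ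
  -- normalization
  have hsq0 : 0 < Real.sqrt n := Real.sqrt_pos.mpr hnpos
  set s₀ : ℝ := (Real.sqrt n)⁻¹ with hs₀_def
  have hs₀pos : 0 < s₀ := inv_pos.mpr hsq0
  have hs₀sq : s₀^2 = n⁻¹ := by
    rw [hs₀_def, inv_pow, Real.sq_sqrt hnpos.le]
  have hYnorm : ‖(Y:H)‖ = Real.sqrt n := by
    rw [← hYnormsq, Real.sqrt_sq (norm_nonneg _)]
  refine ⟨(s₀:ℂ) • Y, ?_, ?_, ?_⟩
  · have : (((s₀:ℂ) • Y : D) : H) = (s₀:ℂ) • (Y:H) := rfl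
    rw [this, norm_smul, hYnorm, Complex.norm_real, Real.norm_eq_abs,
      abs_of_pos hs₀pos, hs₀_def, inv_mul_cancel₀ hsq0.ne']
  · -- overlap constraint
    have hcoe : (((s₀:ℂ) • Y : D) : H) = (s₀:ℂ) • (Y:H) := rfl
    have hxY : ⟪(x:H), (Y:H)⟫_ℂ = (μ:ℂ) + (ν:ℂ)*(c:ℂ)*τ := by
      rw [hYcoe, inner_add_right, inner_smul_right, inner_smul_right, hxx, hcu]
      ring
    have hXval : ‖(μ:ℂ) + (ν:ℂ)*(c:ℂ)*τ‖^2 = μ^2 + ν^2*c^2 + 2*μ*ν*c*a := by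
      rw [Complex.sq_norm, Complex.normSq_apply]
      simp only [Complex.add_re, Complex.add_im, Complex.mul_re, Complex.mul_im,
        Complex.ofReal_re, Complex.ofReal_im, hτre, hτim]
      linear_combination (ν^2*c^2) * hab
    have hval : ‖⟪(x:H), (((s₀:ℂ) • Y : D) : H)⟫_ℂ‖^2 = (μ^2 + ν^2*c^2 + 2*μ*ν*c*a) / n := by
      rw [hcoe, inner_smul_right, norm_mul, Complex.norm_real, Real.norm_eq_abs,
        abs_of_pos hs₀pos, hxY, mul_pow, hXval, hs₀sq]
      ring
    rw [hval, ge_iff_le, le_div_iff₀ hnpos]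
    have hfin : (μ^2 + ν^2*c^2 + 2*μ*ν*c*a) - (1-ε)*n = μ*ν*ρ + ν^2*c^2 := by
      rw [hn_def, hτre]
      linear_combination hμsq - heqR - 2*μ*ν*c*ε*hτre
    have h1 : 0 ≤ μ*ν*ρ := mul_nonneg (mul_nonneg hμpos.le hν0) hFre
    have h2 : 0 ≤ ν^2*c^2 := by positivity
    linarith [hfin, h1, h2]
  · -- the value
    have hcoe : (((s₀:ℂ) • Y : D) : H) = (s₀:ℂ) • (Y:H) := rfl
    have hT : T ((s₀:ℂ) • Y) = (s₀:ℂ) • T Y := by rw [map_smul]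
    rw [hcoe, hT, inner_smul_left, inner_smul_right, Complex.conj_ofReal, ← mul_assoc, hQ]
    have : ((s₀:ℂ) * (s₀:ℂ)) * (n:ℂ) = 1 := by
      have : s₀ * s₀ * n = 1 := by
        rw [← pow_two, hs₀sq]
        field_simp
      exact_mod_cast this
    rw [← mul_assoc, this, one_mul]
end
end

section
/- Let T be a linear operator on a complex Hilbert space H defined on a subspace D(T) ⊆ H. Suppose w ∈ W_e(T) and (z_n) is a sequence in W(T) with |z_n| → ∞. If there exist v ∈ ℂ and a subsequence (z_{n_j}) such that (z_{n_j} − w)/|z_{n_j} − w| → v, then the ray {w + tv : t ≥ 0} is contained in W_e(T). -/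
open Filter Topology
open scoped InnerProductSpace

noncomputable section

variable {H : Type*} [NormedAddCommGroup H] [InnerProductSpace ℂ H] [CompleteSpace H]

/-- The essential numerical range of an operator `T` defined on a subspace `D(T) = D ⊆ H`. -/
def essNumRange (D : Submodule ℂ H) (T : D →ₗ[ℂ] H) : Set ℂ :=
  {l : ℂ | ∃ x : ℕ → D, (∀ n, ‖(x n : H)‖ = 1) ∧
    (∀ y : H, Tendsto (fun n => ⟪(x n : H), y⟫_ℂ) atTop (𝓝 0)) ∧
    Tendsto (fun n => ⟪(x n : H), T (x n)⟫_ℂ) atTop (𝓝 l)}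


set_option maxHeartbeats 1000000

def Complex.abs : AbsoluteValue ℂ ℝ where
  toFun z := ‖z‖
  map_mul' := norm_mul
  nonneg' := norm_nonneg
  eq_zero' _ := norm_eq_zero
  add_le' := norm_add_le

theorem Complex.norm_eq_abs (z : ℂ) : ‖z‖ = Complex.abs z := rfl

@[simp] theorem Complex.abs_ofReal (r : ℝ) : Complex.abs (r : ℂ) = |r| := Complex.norm_real r

@[simp] theorem Complex.abs_conj (z : ℂ) : Complex.abs ((starRingEnd ℂ) z) = Complex.abs z :=
  Complex.norm_conj z

theorem Complex.normSq_eq_abs (z : ℂ) : Complex.normSq z = Complex.abs z ^ 2 :=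
  Complex.normSq_eq_norm_sq z


lemma phase_lemma (B C : ℂ) : ∃ (u : ℂ) (r : ℝ), Complex.abs u = 1 ∧ 0 ≤ r ∧
    u * C + (starRingEnd ℂ) u * B = (r : ℂ) := by
  set m : ℂ := C - (starRingEnd ℂ) B with hm
  set u₀ : ℂ := if m = 0 then 1 else (starRingEnd ℂ) m / (Complex.abs m : ℂ) with hu₀
  have habs : Complex.abs u₀ = 1 := by
    rw [hu₀]
    split_ifs with h
    · simp
    · rw [map_div₀, Complex.abs_conj]
      simp [Complex.abs.ne_zero h, abs_of_nonneg (Complex.abs.nonneg m)]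
  have h1 : u₀ * m = (Complex.abs m : ℂ) := by
    rw [hu₀]
    split_ifs with h
    · simp [h]
    · have hne : (Complex.abs m : ℂ) ≠ 0 := by
        simpa using Complex.abs.ne_zero h
      field_simp
      rw [mul_comm, Complex.mul_conj, Complex.normSq_eq_abs]
      push_cast
      ring
  have hVval : u₀ * C + (starRingEnd ℂ) u₀ * B
      = ((Complex.abs m + 2 * ((starRingEnd ℂ) u₀ * B).re : ℝ) : ℂ) := by
    have hC : C = m + (starRingEnd ℂ) B := by rw [hm]; ring
    have hconj : u₀ * (starRingEnd ℂ) B = (starRingEnd ℂ) ((starRingEnd ℂ) u₀ * B) := by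
      simp [map_mul]
    have h2 : ((starRingEnd ℂ) u₀ * B) + (starRingEnd ℂ) ((starRingEnd ℂ) u₀ * B)
        = (2 * ((starRingEnd ℂ) u₀ * B).re : ℝ) := by
      rw [Complex.add_conj]
    calc u₀ * C + (starRingEnd ℂ) u₀ * B
        = u₀ * m + (((starRingEnd ℂ) u₀ * B) + (starRingEnd ℂ) ((starRingEnd ℂ) u₀ * B)) := by
          rw [hC, ← hconj]; ring
      _ = (Complex.abs m : ℂ) + ((2 * ((starRingEnd ℂ) u₀ * B).re : ℝ) : ℂ) := by
          rw [h1, h2]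
      _ = _ := by push_cast; ring
  set val : ℝ := Complex.abs m + 2 * ((starRingEnd ℂ) u₀ * B).re with hval
  rcases le_or_gt 0 val with hge | hlt
  · exact ⟨u₀, val, habs, hge, hVval⟩
  · refine ⟨-u₀, -val, by simpa using habs, by linarith, ?_⟩
    have : (-u₀) * C + (starRingEnd ℂ) (-u₀) * B = -(u₀ * C + (starRingEnd ℂ) u₀ * B) := by
      simp; ring
    rw [this, hVval]
    push_cast
    ring


lemma dir_close (p q : ℂ) (hq : q ≠ 0) (h2 : 2 * Complex.abs (p - q) ≤ Complex.abs q) :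
    Complex.abs (p / (Complex.abs p : ℂ) - q / (Complex.abs q : ℂ))
      ≤ 4 * Complex.abs (p - q) / Complex.abs q := by
  set P := Complex.abs p with hP
  set Q := Complex.abs q with hQ
  set E := Complex.abs (p - q) with hE
  have hQpos : 0 < Q := Complex.abs.pos hq
  have hEnn : 0 ≤ E := Complex.abs.nonneg _
  have hQle : Q ≤ P + E := by
    have h := norm_sub_le p (p - q)
    simp only [Complex.norm_eq_abs] at h
    have hq' : p - (p - q) = q := by ring
    rw [hq'] at h
    exact h
  have hPge : Q / 2 ≤ P := by linarith
  have hPpos : 0 < P := by linarith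
  have hPC : (P : ℂ) ≠ 0 := by exact_mod_cast hPpos.ne'
  have hQC : (Q : ℂ) ≠ 0 := by exact_mod_cast hQpos.ne'
  have htri : Complex.abs (p / (P : ℂ) - q / (Q : ℂ))
      ≤ Complex.abs ((p - q) / (P : ℂ)) + Complex.abs (q / (P : ℂ) - q / (Q : ℂ)) := by
    have h : p / (P : ℂ) - q / (Q : ℂ) = (p - q) / (P : ℂ) + (q / (P : ℂ) - q / (Q : ℂ)) := by
      ring
    rw [h]; exact Complex.abs.add_le _ _
  have h1 : Complex.abs ((p - q) / (P : ℂ)) = E / P := by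
    rw [map_div₀]
    simp [hE, abs_of_pos hPpos]
  have h2' : Complex.abs (q / (P : ℂ) - q / (Q : ℂ)) ≤ E / P := by
    have h : q / (P : ℂ) - q / (Q : ℂ) = q * (((Q - P : ℝ)) : ℂ) / ((P : ℂ) * (Q : ℂ)) := by
      push_cast; field_simp
    rw [h, map_div₀, map_mul, map_mul]
    simp only [Complex.abs_ofReal]
    rw [← hQ, abs_of_pos hPpos, abs_of_pos hQpos]
    have hQP : |Q - P| ≤ E := by
      have hh := Complex.abs.abs_abv_sub_le_abv_sub q p
      rw [← hQ, ← hP, Complex.abs.map_sub] at hh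
      exact hh.trans_eq hE.symm
    calc Q * |Q - P| / (P * Q) = |Q - P| / P := by field_simp
      _ ≤ E / P := by gcongr
  have h3 : E / P ≤ 2 * E / Q := by
    rw [div_le_div_iff₀ hPpos hQpos]
    nlinarith
  have h4 : 2 * (2 * E / Q) = 4 * E / Q := by ring
  calc Complex.abs (p / (P : ℂ) - q / (Q : ℂ)) ≤ E / P + E / P :=
        htri.trans (by rw [h1]; linarith [h2'])
    _ ≤ 4 * E / Q := by linarith

lemma key_point (D : Submodule ℂ H) (T : D →ₗ[ℂ] H) (x y : D)
    (hx : ‖(x:H)‖ = 1) (hy : ‖(y:H)‖ = 1) (t ε₁ : ℝ)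
    (ht : 0 ≤ t) (hε0 : 0 < ε₁) (hε1 : ε₁ ≤ 1/2)
    (hR : 4 * t ≤ ε₁ ^ 2 * Complex.abs (⟪(y:H), T y⟫_ℂ - ⟪(x:H), T x⟫_ℂ))
    (hne : ⟪(y:H), T y⟫_ℂ ≠ ⟪(x:H), T x⟫_ℂ) :
    ∃ u : D, ‖(u:H)‖ = 1 ∧
      ⟪(u:H), T u⟫_ℂ = ⟪(x:H), T x⟫_ℂ +
        (t : ℂ) * ((⟪(y:H), T y⟫_ℂ - ⟪(x:H), T x⟫_ℂ)
          / ((Complex.abs (⟪(y:H), T y⟫_ℂ - ⟪(x:H), T x⟫_ℂ) : ℝ) : ℂ)) ∧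
      ∀ e : H, ‖⟪(u:H), e⟫_ℂ‖ ≤ 2 * ‖⟪(x:H), e⟫_ℂ‖ + 2 * ε₁ * ‖e‖ := by
  set a := ⟪(x:H), T x⟫_ℂ with ha
  set zz := ⟪(y:H), T y⟫_ℂ with hzz
  set m := zz - a with hm
  have hmne : m ≠ 0 := sub_ne_zero.mpr hne
  set R := Complex.abs m with hRdef
  have hRpos : 0 < R := Complex.abs.pos hmne
  have hRC : ((R:ℝ):ℂ) ≠ 0 := by exact_mod_cast hRpos.ne'
  set d := m / ((R:ℝ):ℂ) with hd
  have habsd : Complex.abs d = 1 := by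
    rw [hd, map_div₀, Complex.abs_ofReal, abs_of_pos hRpos, ← hRdef, div_self hRpos.ne']
  have hdd : (starRingEnd ℂ) d * d = 1 := by
    have h := Complex.normSq_eq_abs d
    rw [habsd] at h
    rw [mul_comm, Complex.mul_conj, h]
    norm_num
  have hdm : d * ((R:ℝ):ℂ) = zz - a := by
    rw [hd]; field_simp; exact hm
  obtain ⟨u₁, r, hu₁abs, hr, hur⟩ := phase_lemma
    ((starRingEnd ℂ) d * (⟪(y:H), T x⟫_ℂ - a * ⟪(y:H), (x:H)⟫_ℂ))
    ((starRingEnd ℂ) d * (⟪(x:H), T y⟫_ℂ - a * ⟪(x:H), (y:H)⟫_ℂ))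
  have hu₁u₁ : (starRingEnd ℂ) u₁ * u₁ = 1 := by
    have h := Complex.normSq_eq_abs u₁
    rw [hu₁abs] at h
    rw [mul_comm, Complex.mul_conj, h]
    norm_num
  have hcross : u₁ * (⟪(x:H), T y⟫_ℂ - a * ⟪(x:H), (y:H)⟫_ℂ)
      + (starRingEnd ℂ) u₁ * (⟪(y:H), T x⟫_ℂ - a * ⟪(y:H), (x:H)⟫_ℂ) = d * (r:ℂ) := by
    linear_combination d * hur - (u₁ * (⟪(x:H), T y⟫_ℂ - a * ⟪(x:H), (y:H)⟫_ℂ)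
      + (starRingEnd ℂ) u₁ * (⟪(y:H), T x⟫_ℂ - a * ⟪(y:H), (x:H)⟫_ℂ)) * hdd
  have hxx : ⟪(x:H), (x:H)⟫_ℂ = 1 := by
    rw [inner_self_eq_norm_sq_to_K, hx]; norm_num
  have hyy : ⟪(y:H), (y:H)⟫_ℂ = 1 := by
    rw [inner_self_eq_norm_sq_to_K, hy]; norm_num
  have expand_q : ∀ β : ℂ,
      ⟪((x + β • y : D) : H), T (x + β • y)⟫_ℂ
        = a + β * ⟪(x:H), T y⟫_ℂ + (starRingEnd ℂ) β * ⟪(y:H), T x⟫_ℂ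
          + (starRingEnd ℂ) β * β * zz := by
    intro β
    simp only [Submodule.coe_add, Submodule.coe_smul, map_add, map_smul,
      inner_add_left, inner_add_right, inner_smul_left, inner_smul_right, ← ha, ← hzz]
    ring
  have expand_n : ∀ β : ℂ,
      ⟪((x + β • y : D) : H), ((x + β • y : D) : H)⟫_ℂ
        = 1 + β * ⟪(x:H), (y:H)⟫_ℂ + (starRingEnd ℂ) β * ⟪(y:H), (x:H)⟫_ℂ
          + (starRingEnd ℂ) β * β := by
    intro β
    simp only [Submodule.coe_add, Submodule.coe_smul, inner_add_left, inner_add_right,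
      inner_smul_left, inner_smul_right, hxx, hyy]
    ring
  set f : ℝ → ℝ := fun ε => ‖(x:H) + ((ε:ℂ) * u₁) • (y:H)‖ with hf
  have hsm : ∀ ε : ℝ, 0 ≤ ε → ‖((ε:ℂ) * u₁) • (y:H)‖ = ε := by
    intro ε h0
    rw [norm_smul, hy, norm_mul, Complex.norm_eq_abs, Complex.norm_eq_abs,
      Complex.abs_ofReal, hu₁abs, _root_.abs_of_nonneg h0]
    ring
  have hfub : ∀ ε : ℝ, 0 ≤ ε → ε ≤ ε₁ → f ε ≤ 1 + ε₁ := by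
    intro ε h0 h1
    calc f ε ≤ ‖(x:H)‖ + ‖((ε:ℂ) * u₁) • (y:H)‖ := norm_add_le _ _
      _ = 1 + ε := by rw [hx, hsm ε h0]
      _ ≤ 1 + ε₁ := by linarith
  have hflb : ∀ ε : ℝ, 0 ≤ ε → ε ≤ ε₁ → 1/2 ≤ f ε := by
    intro ε h0 h1
    have h := norm_sub_norm_le (x:H) (-(((ε:ℂ) * u₁) • (y:H)))
    rw [norm_neg, sub_neg_eq_add] at h
    rw [hx, hsm ε h0] at h
    have h2 : 1 - ε ≤ f ε := h
    linarith
  have hfcont : Continuous f :=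
    (continuous_const.add
      ((Complex.continuous_ofReal.mul continuous_const).smul continuous_const)).norm
  have hfsq : ∀ ε : ℝ, ⟪((x + ((ε:ℂ) * u₁) • y : D) : H), ((x + ((ε:ℂ) * u₁) • y : D) : H)⟫_ℂ
      = (((f ε)^2 : ℝ) : ℂ) := by
    intro ε
    have hcoe : ((x + ((ε:ℂ) * u₁) • y : D) : H) = (x:H) + ((ε:ℂ) * u₁) • (y:H) := by
      simp
    rw [hcoe, inner_self_eq_norm_sq_to_K]
    norm_cast
  have key : ∀ ε : ℝ,
      ⟪((x + ((ε:ℂ) * u₁) • y : D) : H), T (x + ((ε:ℂ) * u₁) • y)⟫_ℂ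
        = a * (((f ε)^2 : ℝ) : ℂ) + d * ((ε * r + ε^2 * R : ℝ) : ℂ) := by
    intro ε
    rw [expand_q, ← hfsq, expand_n]
    have hcβ : (starRingEnd ℂ) ((ε:ℂ) * u₁) = (ε:ℂ) * (starRingEnd ℂ) u₁ := by
      rw [map_mul, Complex.conj_ofReal]
    rw [hcβ]
    push_cast
    linear_combination (ε:ℂ) * hcross + (ε:ℂ)^2 * (zz - a) * hu₁u₁ - (ε:ℂ)^2 * hdm
  -- IVT
  set g : ℝ → ℝ := fun ε => (ε * r + ε^2 * R) / (f ε)^2 with hg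
  have hgcont : ContinuousOn g (Set.Icc 0 ε₁) := by
    apply ContinuousOn.div
    · exact ((continuous_id.mul continuous_const).add ((continuous_pow 2).mul continuous_const)).continuousOn
    · exact (hfcont.pow 2).continuousOn
    · intro ε hε
      have := hflb ε hε.1 hε.2
      positivity
  have hg0 : g 0 = 0 := by simp [hg]
  have hgε₁ : t ≤ g ε₁ := by
    have hlb := hflb ε₁ hε0.le le_rfl
    have hub := hfub ε₁ hε0.le le_rfl
    have hfpos : 0 < (f ε₁)^2 := by positivity
    rw [hg, le_div_iff₀ hfpos]
    have hsq : (f ε₁)^2 ≤ 4 := by nlinarith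
    have h1 : t * (f ε₁)^2 ≤ t * 4 := mul_le_mul_of_nonneg_left hsq ht
    have h2 : ε₁ * r + ε₁^2 * R ≥ ε₁^2 * R := by nlinarith
    nlinarith
  obtain ⟨ε, hεmem, hgε⟩ : ∃ ε ∈ Set.Icc 0 ε₁, g ε = t := by
    have hsub := intermediate_value_Icc hε0.le hgcont
    have ht' : t ∈ Set.Icc (g 0) (g ε₁) := by
      rw [hg0]; exact ⟨ht, hgε₁⟩
    obtain ⟨ε, hε, hgε⟩ := hsub ht'
    exact ⟨ε, hε, hgε⟩
  -- assemble
  have hfpos : 0 < f ε := lt_of_lt_of_le (by norm_num) (hflb ε hεmem.1 hεmem.2)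
  set u₀ : D := x + ((ε:ℂ) * u₁) • y with hu₀
  have hu₀norm : ‖(u₀:H)‖ = f ε := by
    rw [hu₀, hf]; simp
  set c : ℝ := (f ε)⁻¹ with hc
  have hcpos : 0 < c := by positivity
  refine ⟨((c:ℂ)) • u₀, ?_, ?_, ?_⟩
  · rw [Submodule.coe_smul, norm_smul, hu₀norm, Complex.norm_eq_abs, Complex.abs_ofReal,
      abs_of_pos hcpos, hc]
    field_simp
  · rw [Submodule.coe_smul, map_smul, inner_smul_left, inner_smul_right, Complex.conj_ofReal]
    rw [key ε]
    have hfne : (f ε : ℝ) ≠ 0 := hfpos.ne'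
    have hfC : ((f ε : ℝ) : ℂ) ≠ 0 := by exact_mod_cast hfne
    have hgε' : (ε * r + ε^2 * R) = t * (f ε)^2 := by
      have h := hgε
      simp only [hg] at h
      field_simp [hfne] at h
      linarith
    rw [hgε', hc]
    push_cast
    field_simp
  · intro e
    rw [Submodule.coe_smul, inner_smul_left, Complex.conj_ofReal]
    have hexp : ⟪(u₀:H), e⟫_ℂ = ⟪(x:H), e⟫_ℂ + (starRingEnd ℂ) ((ε:ℂ) * u₁) * ⟪(y:H), e⟫_ℂ := by
      rw [hu₀]
      simp [inner_add_left, inner_smul_left]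
      ring
    rw [hexp]
    have hb1 : ‖(starRingEnd ℂ) ((ε:ℂ) * u₁) * ⟪(y:H), e⟫_ℂ‖ ≤ ε * ‖e‖ := by
      rw [norm_mul]
      have h1 : ‖(starRingEnd ℂ) ((ε:ℂ) * u₁)‖ = ε := by
        rw [Complex.norm_eq_abs, Complex.abs_conj, map_mul, Complex.abs_ofReal, hu₁abs,
          _root_.abs_of_nonneg hεmem.1]
        ring
      rw [h1]
      have h2 : ‖⟪(y:H), e⟫_ℂ‖ ≤ ‖e‖ := by
        have := norm_inner_le_norm (𝕜 := ℂ) (y:H) e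
        rwa [hy, one_mul] at this
      exact mul_le_mul_of_nonneg_left h2 hεmem.1
    have hc2 : c ≤ 2 := by
      rw [hc]
      rw [inv_le_comm₀ hfpos (by norm_num)]
      linarith [hflb ε hεmem.1 hεmem.2]
    calc ‖(c:ℂ) * (⟪(x:H), e⟫_ℂ + (starRingEnd ℂ) ((ε:ℂ) * u₁) * ⟪(y:H), e⟫_ℂ)‖
        = c * ‖⟪(x:H), e⟫_ℂ + (starRingEnd ℂ) ((ε:ℂ) * u₁) * ⟪(y:H), e⟫_ℂ‖ := by
          rw [norm_mul, Complex.norm_eq_abs, Complex.abs_ofReal, abs_of_pos hcpos]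
      _ ≤ c * (‖⟪(x:H), e⟫_ℂ‖ + ε * ‖e‖) := by
          apply mul_le_mul_of_nonneg_left _ hcpos.le
          exact (norm_add_le _ _).trans (by linarith [hb1])
      _ ≤ 2 * (‖⟪(x:H), e⟫_ℂ‖ + ε₁ * ‖e‖) := by
          apply mul_le_mul hc2 _ (add_nonneg (norm_nonneg _) (mul_nonneg hεmem.1 (norm_nonneg _))) (by norm_num)
          have : ε * ‖e‖ ≤ ε₁ * ‖e‖ := mul_le_mul_of_nonneg_right hεmem.2 (norm_nonneg _)
          linarith
      _ = 2 * ‖⟪(x:H), e⟫_ℂ‖ + 2 * ε₁ * ‖e‖ := by ring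


/-- if `w ∈ W_e(T)`, `(z n)` is a sequence in `W(T)` with `|z n| → ∞` and some
subsequence of `(z n - w)/|z n - w|` converges to `v`, then the ray `{w + t v : t ≥ 0}` is
contained in `W_e(T)`. -/
theorem ray_in_essNumRange (D : Submodule ℂ H) (T : D →ₗ[ℂ] H)
    (w : ℂ) (hw : w ∈ essNumRange D T)
    (z : ℕ → ℂ) (hz : ∀ n, z n ∈ numRange D T)
    (hz' : Tendsto (fun n => ‖z n‖) atTop atTop)
    (v : ℂ) (φ : ℕ → ℕ) (hφ : StrictMono φ)
    (hv : Tendsto (fun j => (z (φ j) - w) / ((‖z (φ j) - w‖ : ℝ) : ℂ)) atTop (𝓝 v)) :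
    {c : ℂ | ∃ t : ℝ, 0 ≤ t ∧ c = w + (t : ℂ) * v} ⊆ essNumRange D T := by
  intro cpt hcpt
  obtain ⟨t, ht, rfl⟩ := hcpt
  obtain ⟨x, hx1, hx2, hx3⟩ := hw
  have hzφ : Tendsto (fun j => ‖z (φ j) - w‖) atTop atTop := by
    apply tendsto_atTop_mono (fun j => norm_sub_norm_le (z (φ j)) w)
    exact tendsto_atTop_add_const_right atTop (-‖w‖) (hz'.comp hφ.tendsto_atTop)
  have main : ∀ k : ℕ, ∃ (u : D) (n : ℕ), k ≤ n ∧ ‖(u:H)‖ = 1 ∧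
      ‖⟪(u:H), T u⟫_ℂ - (w + (t:ℂ) * v)‖ ≤ (1 + 2*t) / ((k:ℝ)+1) ∧
      ∀ e : H, ‖⟪(u:H), e⟫_ℂ‖ ≤ 2 * ‖⟪(x n : H), e⟫_ℂ‖ + (1/((k:ℝ)+1)) * ‖e‖ := by
    intro k
    set K : ℝ := (k:ℝ) + 1 with hKdef
    have hK1 : 1 ≤ K := by
      have : (0:ℝ) ≤ (k:ℝ) := Nat.cast_nonneg k
      rw [hKdef]; linarith
    have hKpos : 0 < K := by linarith
    -- choose n
    obtain ⟨N1, hN1⟩ := Metric.tendsto_atTop.mp hx3 (1/K) (by positivity)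
    set n := max k N1 with hn
    have hnk : k ≤ n := le_max_left _ _
    set a := ⟪(x n : H), T (x n)⟫_ℂ with hadef
    have haw : ‖a - w‖ < 1/K := by
      have := hN1 n (le_max_right _ _)
      rwa [dist_eq_norm] at this
    have hK1' : 1/K ≤ 1 := by
      rw [div_le_one hKpos]; exact hK1
    have haw1 : ‖a - w‖ ≤ 1 := le_trans haw.le hK1'
    -- choose j
    set M : ℝ := 16*(t+1)*K^2 + 4 with hMdef
    have hM4K : 4*K ≤ M := by nlinarith
    have e1 : ∀ᶠ j in atTop, M ≤ ‖z (φ j) - w‖ := hzφ.eventually_ge_atTop M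
    obtain ⟨N2, hN2⟩ := Metric.tendsto_atTop.mp hv (1/K) (by positivity)
    obtain ⟨j, hjM, hjN2⟩ : ∃ j, M ≤ ‖z (φ j) - w‖ ∧ N2 ≤ j := by
      obtain ⟨j, hj1, hj2⟩ := (e1.and (eventually_ge_atTop N2)).exists
      exact ⟨j, hj1, hj2⟩
    have hdirv : ‖(z (φ j) - w) / ((‖z (φ j) - w‖ : ℝ) : ℂ) - v‖ < 1/K := by
      have := hN2 j hjN2
      rwa [dist_eq_norm] at this
    obtain ⟨y, hy1, hy2⟩ := hz (φ j)
    set q : ℂ := z (φ j) - w with hqdef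
    set p : ℂ := ⟪(y:H), T y⟫_ℂ - a with hpdef
    have hpq : p - q = w - a := by rw [hpdef, hqdef, hy2]; ring
    have hpqn : ‖p - q‖ ≤ 1/K := by
      rw [hpq, norm_sub_rev]
      exact haw.le
    have hpqn1 : ‖p - q‖ ≤ 1 := le_trans hpqn hK1'
    have hMq : M ≤ ‖q‖ := hjM
    have hpn : M - 1 ≤ ‖p‖ := by
      have h := norm_sub_norm_le q p
      rw [norm_sub_rev q p] at h
      linarith [h, hMq, hpqn1]
    have hppos : 0 < ‖p‖ := by nlinarith
    have hpne : p ≠ 0 := norm_pos_iff.mp hppos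
    have hqne : q ≠ 0 := by
      intro h; rw [h] at hMq; simp at hMq; nlinarith
    have hne : ⟪(y:H), T y⟫_ℂ ≠ a := by
      intro h
      apply hpne
      rw [hpdef, h]; ring
    -- apply key_point
    have habs_p : Complex.abs p = ‖p‖ := (Complex.norm_eq_abs p).symm
    have hRcond : 4 * t ≤ (1/(2*K)) ^ 2 * Complex.abs (⟪(y:H), T y⟫_ℂ - a) := by
      rw [← hpdef, habs_p]
      have h0 : (1/(2*K))^2 = 1/(4*K^2) := by
        field_simp; ring
      have h1 : (1/(2*K))^2 * ‖p‖ = ‖p‖ / (4*K^2) := by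
        rw [h0]; ring
      rw [h1, le_div_iff₀ (by positivity)]
      nlinarith
    obtain ⟨u, hu1, hu2, hu3⟩ := key_point D T (x n) y (hx1 n) hy1 t (1/(2*K)) ht
      (by positivity) (by rw [div_le_div_iff₀ (by positivity) (by norm_num)]; linarith) hRcond hne
    refine ⟨u, n, hnk, hu1, ?_, ?_⟩
    · -- value estimate
      rw [hu2, ← hpdef]
      have hval : a + (t:ℂ) * (p / ((Complex.abs p : ℝ) : ℂ)) - (w + (t:ℂ)*v)
          = (a - w) + (t:ℂ) * (p / ((Complex.abs p : ℝ) : ℂ) - v) := by ring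
      rw [hval]
      have hdir : ‖p / ((Complex.abs p : ℝ) : ℂ) - v‖ ≤ 2/K := by
        have hdc := dir_close p q hqne (by
          rw [← Complex.norm_eq_abs, ← Complex.norm_eq_abs]; linarith)
        have habs_q : Complex.abs q = ‖q‖ := (Complex.norm_eq_abs q).symm
        have h4M : 4 * Complex.abs (p - q) / Complex.abs q ≤ 1/K := by
          rw [habs_q, ← Complex.norm_eq_abs]
          rw [div_le_div_iff₀ (by nlinarith) hKpos]
          nlinarith
        have htr : ‖p / ((Complex.abs p : ℝ) : ℂ) - v‖
            ≤ ‖p / ((Complex.abs p : ℝ) : ℂ) - q / ((Complex.abs q : ℝ) : ℂ)‖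
              + ‖q / ((Complex.abs q : ℝ) : ℂ) - v‖ := by
          have hsplit : p / ((Complex.abs p : ℝ) : ℂ) - v
              = (p / ((Complex.abs p : ℝ) : ℂ) - q / ((Complex.abs q : ℝ) : ℂ))
                + (q / ((Complex.abs q : ℝ) : ℂ) - v) := by ring
          rw [hsplit]; exact norm_add_le _ _
        have hqv : ‖q / ((Complex.abs q : ℝ) : ℂ) - v‖ < 1/K := by
          rw [habs_q]
          rw [hqdef]
          exact hdirv
        have hpq' : ‖p / ((Complex.abs p : ℝ) : ℂ) - q / ((Complex.abs q : ℝ) : ℂ)‖ ≤ 1/K := by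
          rw [Complex.norm_eq_abs]
          exact le_trans hdc h4M
        calc ‖p / ((Complex.abs p : ℝ) : ℂ) - v‖ ≤ 1/K + 1/K := by linarith [htr]
          _ = 2/K := by ring
      calc ‖(a - w) + (t:ℂ) * (p / ((Complex.abs p : ℝ) : ℂ) - v)‖
          ≤ ‖a - w‖ + ‖(t:ℂ)‖ * ‖p / ((Complex.abs p : ℝ) : ℂ) - v‖ := by
            refine (norm_add_le _ _).trans ?_
            rw [norm_mul]
        _ ≤ 1/K + t * (2/K) := by
            have hnt : ‖(t:ℂ)‖ = t := by
              rw [Complex.norm_eq_abs, Complex.abs_ofReal, _root_.abs_of_nonneg ht]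
            rw [hnt]
            have := mul_le_mul_of_nonneg_left hdir ht
            linarith [haw.le]
        _ = (1 + 2*t)/K := by ring
    · -- weak bound
      intro e
      have := hu3 e
      have h2K : 2 * (1/(2*K)) = 1/K := by field_simp
      calc ‖⟪(u:H), e⟫_ℂ‖ ≤ 2 * ‖⟪(x n : H), e⟫_ℂ‖ + 2 * (1/(2*K)) * ‖e‖ := this
        _ = 2 * ‖⟪(x n : H), e⟫_ℂ‖ + (1/K) * ‖e‖ := by rw [h2K]
  -- assemble the sequence
  choose u nn hnn hnorm hval hweak using main
  refine ⟨u, hnorm, ?_, ?_⟩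
  · intro e
    rw [tendsto_zero_iff_norm_tendsto_zero]
    have hnntop : Tendsto nn atTop atTop :=
      tendsto_atTop_mono hnn tendsto_id
    have hterm1 : Tendsto (fun k => 2 * ‖⟪(x (nn k) : H), e⟫_ℂ‖) atTop (𝓝 0) := by
      have h := ((hx2 e).comp hnntop).norm
      simpa using h.const_mul 2
    have hterm2 : Tendsto (fun k : ℕ => (1/((k:ℝ)+1)) * ‖e‖) atTop (𝓝 0) := by
      have h := tendsto_one_div_add_atTop_nhds_zero_nat (𝕜 := ℝ)
      simpa using h.mul_const ‖e‖
    have hsum : Tendsto (fun k => 2 * ‖⟪(x (nn k) : H), e⟫_ℂ‖ + (1/((k:ℝ)+1)) * ‖e‖)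
        atTop (𝓝 0) := by
      simpa using hterm1.add hterm2
    exact squeeze_zero (fun k => norm_nonneg _) (fun k => hweak k e) hsum
  · rw [tendsto_iff_norm_sub_tendsto_zero]
    have hbound : Tendsto (fun k : ℕ => (1 + 2*t) / ((k:ℝ)+1)) atTop (𝓝 0) := by
      have h := tendsto_one_div_add_atTop_nhds_zero_nat (𝕜 := ℝ)
      have := h.const_mul (1 + 2*t)
      simpa [div_eq_mul_inv, mul_comm, mul_assoc] using this
    exact squeeze_zero (fun k => norm_nonneg _) hval hbound
end
end

section
/- Let 𝔱 be a sesquilinear form on a complex Hilbert space H with domain D(𝔱). Suppose w ∈ W_e(𝔱) and (z_n) is a sequence in W(𝔱) with |z_n| → ∞. If there exist v ∈ ℂ and a subsequence (z_{n_j}) such that (z_{n_j} − w)/|z_{n_j} − w| → v, then the ray {w + tv : t ≥ 0} is contained in W_e(𝔱). -/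
open Filter Topology
open scoped InnerProductSpace

noncomputable section

variable {H : Type*} [NormedAddCommGroup H] [InnerProductSpace ℂ H] [CompleteSpace H]

lemma phase_exists (A B Z : ℂ) (hZ : Z ≠ 0) :
    ∃ c : ℂ, ‖c‖ = 1 ∧ ∃ r : ℝ, 0 ≤ r ∧ (starRingEnd ℂ) c * A + c * B = (r : ℂ) * Z := by
  set e : ℝ → ℂ := fun φ => Complex.exp (φ * Complex.I) with he_def
  have he : Continuous e := Complex.continuous_exp.comp (Complex.continuous_ofReal.mul continuous_const)
  have hnorm : ∀ φ, ‖e φ‖ = 1 := fun φ => Complex.norm_exp_ofReal_mul_I φ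
  set F : ℝ → ℝ := fun φ => (((starRingEnd ℂ) (e φ) * A + e φ * B) / Z).im with hF_def
  have hFc : Continuous F := by fun_prop
  have hFpi : F Real.pi = - F 0 := by
    have h1 : e Real.pi = -1 := by simp [he_def, Complex.exp_pi_mul_I]
    have h0 : e 0 = 1 := by simp [he_def]
    simp only [hF_def, h1, h0, map_neg, map_one, neg_mul, one_mul]
    rw [show -A + -B = -(A + B) by ring, neg_div, Complex.neg_im]
  obtain ⟨φ₁, hφ₁⟩ : ∃ φ₁, F φ₁ = 0 := by
    rcases le_total (F 0) 0 with h | h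
    · have h0mem : (0:ℝ) ∈ Set.Icc (F 0) (F Real.pi) := ⟨h, by rw [hFpi]; linarith⟩
      obtain ⟨φ₁, -, hφ₁⟩ := intermediate_value_Icc Real.pi_pos.le hFc.continuousOn h0mem
      exact ⟨φ₁, hφ₁⟩
    · have h0mem : (0:ℝ) ∈ Set.Icc (F Real.pi) (F 0) := ⟨by rw [hFpi]; linarith, h⟩
      obtain ⟨φ₁, -, hφ₁⟩ := intermediate_value_Icc' Real.pi_pos.le hFc.continuousOn h0mem
      exact ⟨φ₁, hφ₁⟩
  set g : ℂ := ((starRingEnd ℂ) (e φ₁) * A + e φ₁ * B) / Z with hg_def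
  have hgim : g.im = 0 := hφ₁
  have hge : (starRingEnd ℂ) (e φ₁) * A + e φ₁ * B = (g.re : ℂ) * Z := by
    have hgr : ((g.re : ℝ) : ℂ) = g := by
      rw [← Complex.re_add_im g, hgim]; simp
    rw [hgr, hg_def, div_mul_cancel₀ _ hZ]
  rcases le_total 0 g.re with hr | hr
  · exact ⟨e φ₁, hnorm φ₁, g.re, hr, hge⟩
  · refine ⟨-(e φ₁), by simp [hnorm φ₁], -g.re, by linarith, ?_⟩
    rw [map_neg, neg_mul, neg_mul]
    push_cast
    linear_combination -hge

lemma ivt_beta (r β₀ : ℝ) (hr : 0 ≤ r) (h0 : 0 ≤ β₀) (h1 : β₀ ≤ 1) :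
    ∃ β, 0 ≤ β ∧ β ≤ β₀ ∧ β^2 + Real.sqrt (1 - β^2) * β * r = β₀^2 := by
  set f : ℝ → ℝ := fun β => β^2 + Real.sqrt (1 - β^2) * β * r with hf_def
  have hfc : Continuous f := by fun_prop
  have hmem : β₀^2 ∈ Set.Icc (f 0) (f β₀) := by
    constructor
    · simp [hf_def]; positivity
    · simp only [hf_def]
      have : 0 ≤ Real.sqrt (1 - β₀^2) * β₀ * r := by positivity
      linarith
  obtain ⟨β, hβmem, hfβ⟩ := intermediate_value_Icc h0 hfc.continuousOn hmem
  exact ⟨β, hβmem.1, hβmem.2, hfβ⟩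

lemma key_exists (A B Z : ℂ) (β₀ : ℝ) (h0 : 0 ≤ β₀) (h1 : β₀ ≤ 1) :
    ∃ β c, 0 ≤ β ∧ β ≤ β₀ ∧ ‖c‖ = 1 ∧
      ((β^2 : ℝ) : ℂ) * Z + ((Real.sqrt (1 - β^2) * β : ℝ) : ℂ) * ((starRingEnd ℂ) c * A + c * B)
        = ((β₀^2 : ℝ) : ℂ) * Z := by
  by_cases hZ : Z = 0
  · refine ⟨0, 1, le_refl 0, h0, by simp, by simp [hZ]⟩
  · obtain ⟨c, hc, r, hr, hcr⟩ := phase_exists A B Z hZ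
    obtain ⟨β, hβ0, hββ, hβeq⟩ := ivt_beta r β₀ hr h0 h1
    refine ⟨β, c, hβ0, hββ, hc, ?_⟩
    rw [hcr]
    have hc2 : ((β^2 + Real.sqrt (1-β^2)*β*r : ℝ) : ℂ) = ((β₀^2 : ℝ):ℂ) :=
      Complex.ofReal_inj.mpr hβeq
    push_cast at hc2 ⊢
    linear_combination hc2 * Z

lemma unit_dir_sub (a b : ℂ) (ha : a ≠ 0) (hb : b ≠ 0) :
    ‖a / (‖a‖ : ℂ) - b / (‖b‖ : ℂ)‖ ≤ 2 * ‖a - b‖ / ‖a‖ := by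
  have ha' : (‖a‖ : ℝ) ≠ 0 := norm_ne_zero_iff.2 ha
  have hb' : (‖b‖ : ℝ) ≠ 0 := norm_ne_zero_iff.2 hb
  have hA : (‖a‖:ℂ) ≠ 0 := Complex.ofReal_ne_zero.2 ha'
  have hB : (‖b‖:ℂ) ≠ 0 := Complex.ofReal_ne_zero.2 hb'
  have key : a / (‖a‖:ℂ) - b / (‖b‖:ℂ)
      = ((‖b‖:ℂ) * (a - b) + ((‖b‖ - ‖a‖ : ℝ):ℂ) * b) / ((‖a‖:ℂ) * (‖b‖:ℂ)) := by
    rw [div_sub_div _ _ hA hB]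
    congr 1
    push_cast
    ring
  rw [key, norm_div]
  have h1 : ‖(‖a‖:ℂ) * (‖b‖:ℂ)‖ = ‖a‖ * ‖b‖ := by
    simp [norm_mul, Complex.norm_real, Real.norm_eq_abs, abs_of_nonneg (norm_nonneg a),
      abs_of_nonneg (norm_nonneg b)]
  rw [h1]
  have h2 : ‖(‖b‖:ℂ) * (a - b) + ((‖b‖ - ‖a‖ : ℝ):ℂ) * b‖ ≤ 2 * (‖b‖ * ‖a - b‖) := by
    calc ‖(‖b‖:ℂ) * (a - b) + ((‖b‖ - ‖a‖ : ℝ):ℂ) * b‖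
        ≤ ‖(‖b‖:ℂ) * (a - b)‖ + ‖((‖b‖ - ‖a‖ : ℝ):ℂ) * b‖ := norm_add_le _ _
      _ = ‖b‖ * ‖a - b‖ + |‖b‖ - ‖a‖| * ‖b‖ := by
          rw [norm_mul, norm_mul, Complex.norm_real, Complex.norm_real,
            Real.norm_eq_abs, Real.norm_eq_abs, abs_of_nonneg (norm_nonneg b)]
      _ ≤ ‖b‖ * ‖a - b‖ + ‖a - b‖ * ‖b‖ := by
          have := abs_norm_sub_norm_le b a
          rw [norm_sub_rev b a] at this
          nlinarith [norm_nonneg b]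
      _ = 2 * (‖b‖ * ‖a - b‖) := by ring
  calc ‖(‖b‖:ℂ) * (a - b) + ((‖b‖ - ‖a‖ : ℝ):ℂ) * b‖ / (‖a‖ * ‖b‖)
      ≤ 2 * (‖b‖ * ‖a - b‖) / (‖a‖ * ‖b‖) := by
        gcongr
    _ = 2 * ‖a - b‖ / ‖a‖ := by
        rw [div_eq_div_iff (mul_ne_zero ha' hb') ha']
        ring

/-- The numerical range of a sesquilinear form `𝔱` (linear in the first argument,
conjugate-linear in the second) defined on a subspace `D(𝔱) = D ⊆ H`. -/
def numRangeForm (D : Submodule ℂ H) (𝔱 : D →ₗ[ℂ] D →ₗ⋆[ℂ] ℂ) : Set ℂ :=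
  {z : ℂ | ∃ x : D, ‖(x : H)‖ = 1 ∧ 𝔱 x x = z}

/-- The essential numerical range of a sesquilinear form `𝔱` defined on a subspace
`D(𝔱) = D ⊆ H`. -/
def essNumRangeForm (D : Submodule ℂ H) (𝔱 : D →ₗ[ℂ] D →ₗ⋆[ℂ] ℂ) : Set ℂ :=
  {l : ℂ | ∃ x : ℕ → D, (∀ n, ‖(x n : H)‖ = 1) ∧
    (∀ y : H, Tendsto (fun n => ⟪(x n : H), y⟫_ℂ) atTop (𝓝 0)) ∧
    Tendsto (fun n => 𝔱 (x n) (x n)) atTop (𝓝 l)}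

set_option maxHeartbeats 1000000 in
/-- if `w ∈ W_e(𝔱)`, `(z n)` is a sequence in `W(𝔱)` with `|z n| → ∞`, and some
subsequence of `(z n - w)/|z n - w|` converges to `v`, then the ray `{w + t v : t ≥ 0}` is
contained in `W_e(𝔱)`. -/
theorem ray_in_essNumRangeForm (D : Submodule ℂ H) (𝔱 : D →ₗ[ℂ] D →ₗ⋆[ℂ] ℂ)
    (w : ℂ) (hw : w ∈ essNumRangeForm D 𝔱)
    (z : ℕ → ℂ) (hz : ∀ n, z n ∈ numRangeForm D 𝔱)
    (hz' : Tendsto (fun n => ‖z n‖) atTop atTop)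
    (v : ℂ) (φ : ℕ → ℕ) (hφ : StrictMono φ)
    (hv : Tendsto (fun j => (z (φ j) - w) / ((‖z (φ j) - w‖ : ℝ) : ℂ)) atTop (𝓝 v)) :
    {c : ℂ | ∃ t : ℝ, 0 ≤ t ∧ c = w + (t : ℂ) * v} ⊆ essNumRangeForm D 𝔱 := by
  rintro cpt ⟨t, ht, rfl⟩
  obtain ⟨x, hx1, hx2, hx3⟩ := hw
  choose y hy1 hy2 using hz
  -- choice of the x-index n j
  have hxn : ∀ j : ℕ, ∃ N, j ≤ N ∧ ‖⟪(x N : H), (y (φ j) : H)⟫_ℂ‖ < 1/(j+1) := by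
    intro j
    have hpos : (0:ℝ) < 1/(j+1) := by positivity
    have h2 : ∀ᶠ N in atTop, ‖⟪(x N : H), (y (φ j) : H)⟫_ℂ‖ < 1/(j+1) := by
      have h3 : Tendsto (fun N => ‖⟪(x N : H), (y (φ j) : H)⟫_ℂ‖) atTop (𝓝 0) := by
        simpa using (hx2 ((y (φ j) : H))).norm
      exact h3.eventually_lt_const hpos
    exact ((eventually_ge_atTop j).and h2).exists
  set n : ℕ → ℕ := fun j => (hxn j).choose with hn_def
  have hn1 : ∀ j, j ≤ n j := fun j => (hxn j).choose_spec.1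
  have hn2 : ∀ j, ‖⟪(x (n j) : H), (y (φ j) : H)⟫_ℂ‖ < 1/(j+1) :=
    fun j => (hxn j).choose_spec.2
  have hntop : Tendsto n atTop atTop := tendsto_atTop_mono hn1 tendsto_id
  -- basic sequences
  set W : ℕ → ℂ := fun j => 𝔱 (x (n j)) (x (n j)) with hW_def
  set Zc : ℕ → ℂ := fun j => z (φ j) - W j with hZc_def
  have hWlim : Tendsto W atTop (𝓝 w) := hx3.comp hntop
  have hzφ : Tendsto (fun j => ‖z (φ j)‖) atTop atTop := hz'.comp hφ.tendsto_atTop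
  have hZtop : Tendsto (fun j => ‖Zc j‖) atTop atTop := by
    apply tendsto_atTop_mono (fun j => ?_) ((hWlim.norm.neg.add_atTop hzφ))
    have := norm_sub_norm_le (z (φ j)) (W j)
    simp only [hZc_def]
    linarith
  have hZwtop : Tendsto (fun j => ‖z (φ j) - w‖) atTop atTop := by
    apply tendsto_atTop_mono (fun j => ?_)
      (((tendsto_const_nhds : Tendsto (fun _ : ℕ => ‖w‖) atTop (𝓝 ‖w‖)).neg.add_atTop hzφ))
    have := norm_sub_norm_le (z (φ j)) w
    linarith
  -- the direction of Zc converges to v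
  have hdir : Tendsto (fun j => Zc j / ((‖Zc j‖ : ℝ) : ℂ)) atTop (𝓝 v) := by
    have hdiff : Tendsto
        (fun j => Zc j / ((‖Zc j‖:ℝ):ℂ) - (z (φ j) - w) / ((‖z (φ j) - w‖:ℝ):ℂ))
        atTop (𝓝 0) := by
      rw [tendsto_zero_iff_norm_tendsto_zero]
      have hbound : ∀ᶠ j in atTop,
          ‖Zc j / ((‖Zc j‖:ℝ):ℂ) - (z (φ j) - w) / ((‖z (φ j) - w‖:ℝ):ℂ)‖
            ≤ 2 * ‖w - W j‖ * (‖Zc j‖)⁻¹ := by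
        filter_upwards [hZtop.eventually_ge_atTop 1, hZwtop.eventually_ge_atTop 1]
          with j h1 h2
        have hZne : Zc j ≠ 0 := by
          intro hcon; rw [hcon] at h1; simp at h1; linarith
        have hZwne : z (φ j) - w ≠ 0 := by
          intro hcon; rw [hcon] at h2; simp at h2; linarith
        have hb := unit_dir_sub (Zc j) (z (φ j) - w) hZne hZwne
        have heq : Zc j - (z (φ j) - w) = w - W j := by simp only [hZc_def]; ring
        rw [heq] at hb
        calc ‖Zc j / ((‖Zc j‖:ℝ):ℂ) - (z (φ j) - w) / ((‖z (φ j) - w‖:ℝ):ℂ)‖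
            ≤ 2 * ‖w - W j‖ / ‖Zc j‖ := hb
          _ = 2 * ‖w - W j‖ * (‖Zc j‖)⁻¹ := by rw [div_eq_mul_inv]
      have hlim : Tendsto (fun j => 2 * ‖w - W j‖ * (‖Zc j‖)⁻¹) atTop (𝓝 0) := by
        have h1 : Tendsto (fun j => 2 * ‖w - W j‖) atTop (𝓝 0) := by
          have h0 : Tendsto (fun j => ‖w - W j‖) atTop (𝓝 0) := by
            simpa using (hWlim.const_sub w).norm
          simpa using h0.const_mul 2
        have h2 : Tendsto (fun j => (‖Zc j‖)⁻¹) atTop (𝓝 0) :=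
          tendsto_inv_atTop_zero.comp hZtop
        simpa using h1.mul h2
      exact squeeze_zero' (Eventually.of_forall fun j => norm_nonneg _) hbound hlim
    have h := hdiff.add hv
    rw [zero_add] at h
    refine h.congr fun j => ?_
    ring
  -- the parameters
  set q : ℕ → ℝ := fun j => min (t / ‖Zc j‖) 1 with hq_def
  have hq0 : ∀ j, 0 ≤ q j := fun j => le_min (by positivity) zero_le_one
  have hq1 : ∀ j, q j ≤ 1 := fun j => min_le_right _ _
  set β₀ : ℕ → ℝ := fun j => Real.sqrt (q j) with hβ₀_def
  have hβ₀0 : ∀ j, 0 ≤ β₀ j := fun j => Real.sqrt_nonneg _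
  have hβ₀1 : ∀ j, β₀ j ≤ 1 := fun j => Real.sqrt_le_one.mpr (hq1 j)
  have hβ₀sq : ∀ j, (β₀ j)^2 = q j := fun j => Real.sq_sqrt (hq0 j)
  have hkey : ∀ j, ∃ β c, 0 ≤ β ∧ β ≤ β₀ j ∧ ‖c‖ = 1 ∧
      ((β^2 : ℝ) : ℂ) * Zc j
        + ((Real.sqrt (1 - β^2) * β : ℝ) : ℂ)
          * ((starRingEnd ℂ) c * (𝔱 (x (n j)) (y (φ j))) + c * (𝔱 (y (φ j)) (x (n j))))
        = (((β₀ j)^2 : ℝ) : ℂ) * Zc j :=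
    fun j => key_exists _ _ _ _ (hβ₀0 j) (hβ₀1 j)
  choose β c hβ0 hββ hc hEq using hkey
  have hβ1 : ∀ j, β j ≤ 1 := fun j => (hββ j).trans (hβ₀1 j)
  set α : ℕ → ℝ := fun j => Real.sqrt (1 - (β j)^2) with hα_def
  have hα0 : ∀ j, 0 ≤ α j := fun j => Real.sqrt_nonneg _
  have hα2 : ∀ j, (α j)^2 = 1 - (β j)^2 := fun j => Real.sq_sqrt (by nlinarith [hβ0 j, hβ1 j])
  have hα1 : ∀ j, α j ≤ 1 := fun j => Real.sqrt_le_one.mpr (by nlinarith [hβ0 j])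
  -- the combined vectors
  set u : ℕ → D := fun j => ((α j : ℝ) : ℂ) • x (n j) + (((β j : ℝ) : ℂ) * c j) • y (φ j)
    with hu_def
  have hcc : ∀ j, c j * (starRingEnd ℂ) (c j) = 1 := by
    intro j
    rw [Complex.mul_conj, Complex.normSq_eq_norm_sq, hc j]
    norm_num
  have hsmul : ∀ (a : ℂ) (p : D), (𝔱 (a • p)) (a • p) = a * (starRingEnd ℂ) a * (𝔱 p) p := by
    intro a p
    rw [𝔱.map_smul, LinearMap.smul_apply, (𝔱 p).map_smulₛₗ, smul_eq_mul, smul_eq_mul]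
    ring
  -- value of the form on u j
  have hTu : ∀ j, 𝔱 (u j) (u j) = W j + (((β₀ j)^2 : ℝ) : ℂ) * Zc j := by
    intro j
    have expand : 𝔱 (u j) (u j)
        = ((α j:ℝ):ℂ) * (starRingEnd ℂ) ((α j:ℝ):ℂ) * 𝔱 (x (n j)) (x (n j))
        + ((α j:ℝ):ℂ) * (starRingEnd ℂ) (((β j:ℝ):ℂ) * c j) * 𝔱 (x (n j)) (y (φ j))
        + (((β j:ℝ):ℂ) * c j) * (starRingEnd ℂ) ((α j:ℝ):ℂ) * 𝔱 (y (φ j)) (x (n j))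
        + (((β j:ℝ):ℂ) * c j) * (starRingEnd ℂ) (((β j:ℝ):ℂ) * c j) * 𝔱 (y (φ j)) (y (φ j)) := by
      simp only [hu_def, map_add, LinearMap.add_apply, map_smul, LinearMap.smul_apply,
        LinearMap.map_smulₛₗ, smul_eq_mul]
      ring
    rw [expand]
    have hzeq : z (φ j) = Zc j + W j := by simp only [hZc_def]; ring
    have hE := hEq j
    have hccj := hcc j
    have hα2c : ((Real.sqrt (1 - (β j)^2) : ℝ):ℂ)^2 = 1 - ((β j:ℝ):ℂ)^2 := by
      exact_mod_cast hα2 j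
    simp only [hα_def, map_mul, Complex.conj_ofReal]
    rw [hy2 (φ j), show (𝔱 (x (n j))) (x (n j)) = W j from rfl, hzeq]
    push_cast at hE hα2c ⊢
    linear_combination hE + hα2c * (W j) + (((β j:ℝ):ℂ)^2 * (Zc j + W j)) * hccj
  -- limits of the parameters
  have hqlim : Tendsto q atTop (𝓝 0) := by
    have hb : Tendsto (fun j => t / ‖Zc j‖) atTop (𝓝 0) := by
      have h2 : Tendsto (fun j => (‖Zc j‖)⁻¹) atTop (𝓝 0) :=
        tendsto_inv_atTop_zero.comp hZtop
      simpa [div_eq_mul_inv] using h2.const_mul t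
    exact squeeze_zero hq0 (fun j => min_le_left _ _) hb
  have hβ₀lim : Tendsto β₀ atTop (𝓝 0) := by
    have := (Real.continuous_sqrt.tendsto' 0 0 Real.sqrt_zero).comp hqlim
    exact this
  have hβlim : Tendsto β atTop (𝓝 0) := squeeze_zero hβ0 hββ hβ₀lim
  -- the norm of u j
  have hu_coe : ∀ j, ((u j : H))
      = ((α j : ℝ) : ℂ) • (x (n j) : H) + (((β j : ℝ) : ℂ) * c j) • (y (φ j) : H) := by
    intro j; simp [hu_def]
  have hnsmx : ∀ j, ‖((α j:ℝ):ℂ) • (x (n j) : H)‖ = α j := by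
    intro j
    rw [norm_smul, Complex.norm_real, Real.norm_eq_abs, abs_of_nonneg (hα0 j), hx1, mul_one]
  have hnsmy : ∀ j, ‖(((β j:ℝ):ℂ) * c j) • (y (φ j) : H)‖ = β j := by
    intro j
    rw [norm_smul, norm_mul, Complex.norm_real, Real.norm_eq_abs, abs_of_nonneg (hβ0 j),
      hc, hy1, mul_one, mul_one]
  have hnormsq : ∀ j : ℕ, |‖(u j : H)‖^2 - 1| ≤ 2 * (1/((j:ℝ)+1)) := by
    intro j
    have hexp := norm_add_sq (𝕜 := ℂ) (((α j:ℝ):ℂ) • (x (n j) : H))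
      ((((β j:ℝ):ℂ) * c j) • (y (φ j) : H))
    rw [hnsmx j, hnsmy j] at hexp
    have hsum : (α j)^2 + (β j)^2 = 1 := by nlinarith [hα2 j]
    have hval : ‖(u j : H)‖^2 - 1 = 2 * RCLike.re
        (⟪((α j:ℝ):ℂ) • (x (n j) : H), (((β j:ℝ):ℂ) * c j) • (y (φ j) : H)⟫_ℂ) := by
      rw [hu_coe j, hexp]; linarith
    rw [hval, abs_mul, abs_two]
    have hre : |RCLike.re (⟪((α j:ℝ):ℂ) • (x (n j) : H),
        (((β j:ℝ):ℂ) * c j) • (y (φ j) : H)⟫_ℂ)| ≤ 1/((j:ℝ)+1) := by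
      have hle : ‖⟪((α j:ℝ):ℂ) • (x (n j) : H), (((β j:ℝ):ℂ) * c j) • (y (φ j) : H)⟫_ℂ‖
          ≤ 1/((j:ℝ)+1) := by
        rw [inner_smul_left, inner_smul_right]
        simp only [norm_mul, RCLike.norm_conj, Complex.norm_real, Real.norm_eq_abs, hc,
          mul_one, abs_of_nonneg (hα0 j), abs_of_nonneg (hβ0 j)]
        have hN : (0:ℝ) ≤ ‖⟪(x (n j) : H), (y (φ j) : H)⟫_ℂ‖ := norm_nonneg _
        have hN2 : ‖⟪(x (n j) : H), (y (φ j) : H)⟫_ℂ‖ ≤ 1/((j:ℝ)+1) := (hn2 j).le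
        have h₁ : β j * ‖⟪(x (n j) : H), (y (φ j) : H)⟫_ℂ‖
            ≤ ‖⟪(x (n j) : H), (y (φ j) : H)⟫_ℂ‖ := by
          nlinarith [mul_nonneg (sub_nonneg.2 (hβ1 j)) hN]
        have h₂ : α j * (β j * ‖⟪(x (n j) : H), (y (φ j) : H)⟫_ℂ‖)
            ≤ β j * ‖⟪(x (n j) : H), (y (φ j) : H)⟫_ℂ‖ := by
          nlinarith [mul_nonneg (sub_nonneg.2 (hα1 j)) (mul_nonneg (hβ0 j) hN)]
        linarith
      exact le_trans (RCLike.abs_re_le_norm _) hle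
    linarith [hre]
  have husq : Tendsto (fun j => ‖(u j : H)‖^2) atTop (𝓝 1) := by
    have hb2 : Tendsto (fun j : ℕ => 2 * (1/((j:ℝ)+1))) atTop (𝓝 0) := by
      have := tendsto_one_div_add_atTop_nhds_zero_nat (𝕜 := ℝ)
      simpa using this.const_mul 2
    have h0 : Tendsto (fun j => ‖(u j : H)‖^2 - 1) atTop (𝓝 0) :=
      squeeze_zero_norm (fun j => by rw [Real.norm_eq_abs]; exact hnormsq j) hb2
    simpa using h0.add_const 1
  have hunorm : Tendsto (fun j => ‖(u j : H)‖) atTop (𝓝 1) := by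
    have h := (Real.continuous_sqrt.tendsto' 1 1 (by norm_num)).comp husq
    refine h.congr fun j => ?_
    exact Real.sqrt_sq (norm_nonneg _)
  have hular : ∀ᶠ j in atTop, (1/2:ℝ) < ‖(u j : H)‖ :=
    hunorm.eventually (lt_mem_nhds (by norm_num : (1/2:ℝ) < 1))
  have hune : ∀ᶠ j in atTop, ‖(u j : H)‖ ≠ 0 := by
    filter_upwards [hular] with j hj
    exact ne_of_gt (by linarith)
  -- the normalized sequence
  set X : ℕ → D := fun j => if h : ‖(u j : H)‖ = 0 then x 0
    else ((‖(u j : H)‖⁻¹ : ℝ) : ℂ) • u j with hX_def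
  have hXeq : ∀ᶠ j in atTop, X j = ((‖(u j : H)‖⁻¹ : ℝ) : ℂ) • u j := by
    filter_upwards [hune] with j hj
    simp only [hX_def]; rw [dif_neg hj]
  refine ⟨X, ?_, ?_, ?_⟩
  · intro j
    by_cases h : ‖(u j : H)‖ = 0
    · simp only [hX_def]; rw [dif_pos h]; exact hx1 0
    · simp only [hX_def]; rw [dif_neg h]
      have hcoe : ((((‖(u j:H)‖⁻¹:ℝ):ℂ) • u j : D) : H)
          = ((‖(u j:H)‖⁻¹:ℝ):ℂ) • (u j : H) := rfl
      rw [hcoe, norm_smul, Complex.norm_real, Real.norm_eq_abs,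
        abs_of_nonneg (inv_nonneg.2 (norm_nonneg _))]
      exact inv_mul_cancel₀ h
  · -- weak convergence to zero
    intro h'
    rw [tendsto_zero_iff_norm_tendsto_zero]
    have hxin : Tendsto (fun j => ‖⟪(x (n j) : H), h'⟫_ℂ‖) atTop (𝓝 0) := by
      simpa using ((hx2 h').comp hntop).norm
    have hblim : Tendsto (fun j => 2 * (‖⟪(x (n j) : H), h'⟫_ℂ‖ + β j * ‖h'‖))
        atTop (𝓝 0) := by
      have := hxin.add (hβlim.mul_const ‖h'‖)
      simpa using this.const_mul 2
    apply squeeze_zero' (Eventually.of_forall fun j => norm_nonneg _) ?_ hblim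
    filter_upwards [hXeq, hular] with j hj hj2
    rw [hj]
    have hcoe : ((((‖(u j:H)‖⁻¹:ℝ):ℂ) • u j : D) : H)
        = ((‖(u j:H)‖⁻¹:ℝ):ℂ) • (u j : H) := rfl
    rw [hcoe, inner_smul_left, norm_mul]
    have h1r : (0:ℝ) < ‖(u j : H)‖ := by linarith
    have hinv : ‖(u j : H)‖⁻¹ ≤ 2 := by
      have hmul : ‖(u j : H)‖ * ‖(u j : H)‖⁻¹ = 1 := mul_inv_cancel₀ (ne_of_gt h1r)
      have hnn : (0:ℝ) ≤ ‖(u j : H)‖⁻¹ := inv_nonneg.2 h1r.le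
      nlinarith [hmul, hj2]
    have h1 : ‖(starRingEnd ℂ) ((‖(u j:H)‖⁻¹:ℝ):ℂ)‖ ≤ 2 := by
      rw [RCLike.norm_conj, Complex.norm_real, Real.norm_eq_abs,
        abs_of_nonneg (inv_nonneg.2 (norm_nonneg _))]
      exact hinv
    have h2 : ‖⟪(u j : H), h'⟫_ℂ‖ ≤ ‖⟪(x (n j) : H), h'⟫_ℂ‖ + β j * ‖h'‖ := by
      rw [hu_coe j, inner_add_left, inner_smul_left, inner_smul_left]
      calc ‖(starRingEnd ℂ) ((α j:ℝ):ℂ) * ⟪(x (n j) : H), h'⟫_ℂ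
            + (starRingEnd ℂ) (((β j:ℝ):ℂ) * c j) * ⟪(y (φ j) : H), h'⟫_ℂ‖
          ≤ ‖(starRingEnd ℂ) ((α j:ℝ):ℂ) * ⟪(x (n j) : H), h'⟫_ℂ‖
            + ‖(starRingEnd ℂ) (((β j:ℝ):ℂ) * c j) * ⟪(y (φ j) : H), h'⟫_ℂ‖ :=
            norm_add_le _ _
        _ ≤ 1 * ‖⟪(x (n j) : H), h'⟫_ℂ‖ + β j * (‖(y (φ j) : H)‖ * ‖h'‖) := by
            have e1 : ‖(starRingEnd ℂ) ((α j:ℝ):ℂ) * ⟪(x (n j) : H), h'⟫_ℂ‖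
                ≤ 1 * ‖⟪(x (n j) : H), h'⟫_ℂ‖ := by
              rw [norm_mul, RCLike.norm_conj, Complex.norm_real, Real.norm_eq_abs,
                abs_of_nonneg (hα0 j)]
              exact mul_le_mul_of_nonneg_right (hα1 j) (norm_nonneg _)
            have e2 : ‖(starRingEnd ℂ) (((β j:ℝ):ℂ) * c j) * ⟪(y (φ j) : H), h'⟫_ℂ‖
                ≤ β j * (‖(y (φ j) : H)‖ * ‖h'‖) := by
              rw [norm_mul, RCLike.norm_conj, norm_mul, Complex.norm_real, Real.norm_eq_abs,
                abs_of_nonneg (hβ0 j), hc, mul_one]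
              exact mul_le_mul_of_nonneg_left (norm_inner_le_norm _ _) (hβ0 j)
            exact add_le_add e1 e2
        _ = ‖⟪(x (n j) : H), h'⟫_ℂ‖ + β j * ‖h'‖ := by rw [one_mul, hy1, one_mul]
    exact mul_le_mul h1 h2 (norm_nonneg _) (by norm_num)
  · -- convergence of the form values
    have hgood : ∀ᶠ j in atTop, (𝔱 (X j)) (X j)
        = (((‖(u j:H)‖^2)⁻¹ : ℝ) : ℂ) * (W j + ((t:ℝ):ℂ) * (Zc j / ((‖Zc j‖:ℝ):ℂ))) := by
      filter_upwards [hXeq, hZtop.eventually_ge_atTop 1, hZtop.eventually_ge_atTop (4*t)]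
        with j hj hjZ1 hjZt
      rw [hj]
      rw [hsmul, hTu j, Complex.conj_ofReal]
      have hZpos : (0:ℝ) < ‖Zc j‖ := by linarith
      have hq' : q j = t / ‖Zc j‖ := by
        apply min_eq_left
        rw [div_le_one hZpos]
        linarith
      rw [hβ₀sq j, hq']
      push_cast
      ring
    have hlim2 : Tendsto (fun j => (((‖(u j:H)‖^2)⁻¹ : ℝ) : ℂ)
        * (W j + ((t:ℝ):ℂ) * (Zc j / ((‖Zc j‖:ℝ):ℂ)))) atTop
        (𝓝 ((1:ℂ) * (w + ((t:ℝ):ℂ) * v))) := by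
      apply Tendsto.mul
      · have h0 := husq.inv₀ one_ne_zero
        rw [inv_one] at h0
        have h1 := (Complex.continuous_ofReal.tendsto 1).comp h0
        rw [Complex.ofReal_one] at h1
        exact h1
      · exact hWlim.add ((tendsto_const_nhds :
          Tendsto (fun _ : ℕ => ((t:ℝ):ℂ)) atTop (𝓝 ((t:ℝ):ℂ))).mul hdir)
    rw [one_mul] at hlim2
    exact Tendsto.congr' (hgood.mono fun j hj => hj.symm) hlim2
end
end

section
/- Let T be a linear operator on a complex Hilbert space H defined on a subspace D(T) ⊆ H. If W_e(T) is nonempty and W(T) is an unbounded subset of ℂ, then W_e(T) is unbounded. -/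
open Filter Topology
open scoped InnerProductSpace

noncomputable section

variable {H : Type*} [NormedAddCommGroup H] [InnerProductSpace ℂ H] [CompleteSpace H]

lemma aux_norm_sq (x y : H) (r : ℝ) :
    ‖x + (r:ℂ) • y‖^2 = ‖x‖^2 + 2*r*(⟪x, y⟫_ℂ).re + r^2*‖y‖^2 := by
  rw [@norm_add_sq ℂ, inner_smul_right, norm_smul]
  simp [Complex.mul_re, Complex.norm_real]
  rw [mul_pow, sq_abs]
  ring

lemma aux_expand (D : Submodule ℂ H) (T : D →ₗ[ℂ] H) (a y : D) (β : ℂ) :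
    ⟪((a + β • y : D) : H), T (a + β • y)⟫_ℂ =
      ⟪(a:H), T a⟫_ℂ + β * ⟪(a:H), T y⟫_ℂ + (starRingEnd ℂ) β * ⟪(y:H), T a⟫_ℂ
        + (starRingEnd ℂ) β * β * ⟪(y:H), T y⟫_ℂ := by
  simp [map_add, map_smul, inner_add_left, inner_add_right, inner_smul_left, inner_smul_right]
  ring

set_option maxHeartbeats 1000000 in
/-- if `W_e(T)` is nonempty and `W(T)` is unbounded, then `W_e(T)` is unbounded. -/
theorem essNumRange_unbounded_of_numRange_unbounded (D : Submodule ℂ H) (T : D →ₗ[ℂ] H)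
    (hne : (essNumRange D T).Nonempty)
    (hunb : ¬ Bornology.IsBounded (numRange D T)) :
    ¬ Bornology.IsBounded (essNumRange D T) := by
  rw [isBounded_iff_forall_norm_le]
  push_neg
  intro C
  obtain ⟨l, x, hx1, hx2, hx3⟩ := hne
  rw [isBounded_iff_forall_norm_le] at hunb
  push_neg at hunb
  set R : ℝ := max C 0 + ‖l‖ + 2 with hRdef
  have hCR : C + 1 ≤ R - 1 - ‖l‖ := by
    have := le_max_left C 0; linarith
  have hR2 : 2 ≤ R := by
    have h1 := le_max_right C 0
    have h2 := norm_nonneg l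
    linarith
  have hRpos : (0:ℝ) < R := by linarith
  -- choose unit vectors with large numerical values
  have hY : ∀ m : ℕ, ∃ y : D, ‖(y:H)‖ = 1 ∧ (m:ℝ) + R < ‖⟪(y:H), T y⟫_ℂ‖ := by
    intro m
    obtain ⟨z, hz, hz2⟩ := hunb ((m:ℝ) + R)
    obtain ⟨y, hy1, hy2⟩ := hz
    exact ⟨y, hy1, by rw [hy2]; exact hz2⟩
  choose Y hY1 hY2 using hY
  set μ : ℕ → ℂ := fun m => ⟪(Y m : H), T (Y m)⟫_ℂ with hμdef
  have hμbig : ∀ m : ℕ, (m:ℝ) + R < ‖μ m‖ := fun m => hY2 m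
  have hμpos : ∀ m, 0 < ‖μ m‖ := fun m => lt_of_le_of_lt (by positivity) (hμbig m)
  have hμR : ∀ m, R ≤ ‖μ m‖ := fun m => by
    have h := hμbig m
    have : (0:ℝ) ≤ (m:ℝ) := Nat.cast_nonneg m
    linarith
  -- choose indices n m
  have hn : ∀ m : ℕ, ∃ k, m ≤ k ∧ ‖⟪(x k : H), T (x k)⟫_ℂ - l‖ ≤ 1/((m:ℝ)+1) ∧
      ‖⟪(x k : H), (Y m : H)⟫_ℂ‖ ≤ 1/((m:ℝ)+1) ∧ ‖⟪(x k : H), T (Y m)⟫_ℂ‖ ≤ 1/((m:ℝ)+1) := by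
    intro m
    have hpos : (0:ℝ) < 1/((m:ℝ)+1) := by positivity
    have e1 : ∀ᶠ k in atTop, ⟪(x k : H), T (x k)⟫_ℂ ∈ Metric.ball l (1/((m:ℝ)+1)) :=
      hx3 (Metric.ball_mem_nhds l hpos)
    have e2 : ∀ᶠ k in atTop, ⟪(x k : H), (Y m : H)⟫_ℂ ∈ Metric.ball 0 (1/((m:ℝ)+1)) :=
      hx2 (Y m) (Metric.ball_mem_nhds 0 hpos)
    have e3 : ∀ᶠ k in atTop, ⟪(x k : H), T (Y m)⟫_ℂ ∈ Metric.ball 0 (1/((m:ℝ)+1)) :=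
      hx2 (T (Y m)) (Metric.ball_mem_nhds 0 hpos)
    obtain ⟨k, h1, h2, h3, h4⟩ := ((eventually_ge_atTop m).and (e1.and (e2.and e3))).exists
    refine ⟨k, h1, ?_, ?_, ?_⟩
    · have := Metric.mem_ball.mp h2
      rw [Complex.dist_eq] at this
      simpa using this.le
    · have := Metric.mem_ball.mp h3
      rw [Complex.dist_eq] at this
      simpa using this.le
    · have := Metric.mem_ball.mp h4
      rw [Complex.dist_eq] at this
      simpa using this.le
  choose n hn1 hn2 hn3 hn4 using hn
  set c : ℕ → ℂ := fun m => ⟪(Y m : H), T (x (n m))⟫_ℂ with hcdef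
  set b : ℕ → ℝ := fun m => min (Real.sqrt (R / ‖μ m‖)) (R / (‖c m‖ + 1)) with hbdef
  have hb_pos : ∀ m, 0 < b m := by
    intro m
    apply lt_min
    · exact Real.sqrt_pos.mpr (div_pos hRpos (hμpos m))
    · positivity
  have hb_lt1 : ∀ m, b m < 1 := by
    intro m
    refine lt_of_le_of_lt (min_le_left _ _) ?_
    rw [show (1:ℝ) = Real.sqrt 1 by simp]
    apply Real.sqrt_lt_sqrt (by positivity)
    rw [div_lt_one (hμpos m)]
    have := hμbig m
    have : (0:ℝ) ≤ (m:ℝ) := Nat.cast_nonneg m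
    linarith [hμbig m]
  have hbsq : ∀ m, (b m)^2 ≤ R / ‖μ m‖ := by
    intro m
    have h1 : b m ≤ Real.sqrt (R / ‖μ m‖) := min_le_left _ _
    rw [← Real.sq_sqrt (le_of_lt (div_pos hRpos (hμpos m)))]
    exact pow_le_pow_left₀ (le_of_lt (hb_pos m)) h1 2
  have hA_le : ∀ m, b m * ‖c m‖ ≤ R := by
    intro m
    have h1 : b m ≤ R / (‖c m‖ + 1) := min_le_right _ _
    have h2 : (0:ℝ) ≤ ‖c m‖ := norm_nonneg _
    have h3 : (0:ℝ) < ‖c m‖ + 1 := by linarith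
    have h4 : b m * ‖c m‖ ≤ (R / (‖c m‖ + 1)) * ‖c m‖ := by nlinarith
    refine le_trans h4 ?_
    rw [div_mul_eq_mul_div, div_le_iff₀ h3]
    nlinarith
  have hP_le : ∀ m, (b m)^2 * ‖μ m‖ ≤ R := by
    intro m
    have h2 := hbsq m
    have h3 := hμpos m
    calc (b m)^2 * ‖μ m‖ ≤ (R / ‖μ m‖) * ‖μ m‖ := by nlinarith
      _ = R := div_mul_cancel₀ R (ne_of_gt h3)
  have hlow : ∀ m, R - 1 ≤ max (b m * ‖c m‖) ((b m)^2 * ‖μ m‖) := by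
    intro m
    rcases le_total (Real.sqrt (R / ‖μ m‖)) (R / (‖c m‖ + 1)) with h | h
    · have hb : b m = Real.sqrt (R / ‖μ m‖) := min_eq_left h
      have heq : (b m)^2 * ‖μ m‖ = R := by
        rw [hb, Real.sq_sqrt (le_of_lt (div_pos hRpos (hμpos m))),
          div_mul_cancel₀ R (ne_of_gt (hμpos m))]
      refine le_trans ?_ (le_max_right _ _)
      rw [heq]; linarith
    · have hb : b m = R / (‖c m‖ + 1) := min_eq_right h
      have h3 : (0:ℝ) < ‖c m‖ + 1 := by positivity
      have heq : b m * ‖c m‖ = R - b m := by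
        rw [hb]
        field_simp
        ring
      refine le_trans ?_ (le_max_left _ _)
      rw [heq]
      linarith [hb_lt1 m]
  have hb0 : Tendsto b atTop (𝓝 0) := by
    have hub : ∀ m : ℕ, b m ≤ Real.sqrt (R / ((m:ℝ) + R)) := by
      intro m
      refine le_trans (min_le_left _ _) (Real.sqrt_le_sqrt ?_)
      have h1 : (0:ℝ) < (m:ℝ) + R := by positivity
      rw [div_le_div_iff₀ (hμpos m) h1]
      nlinarith [hμbig m]
    have h1 : Tendsto (fun m : ℕ => R / ((m:ℝ) + R)) atTop (𝓝 0) := by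
      apply Tendsto.div_atTop tendsto_const_nhds
      exact tendsto_atTop_add_const_right _ R tendsto_natCast_atTop_atTop
    have h2 : Tendsto (fun m : ℕ => Real.sqrt (R / ((m:ℝ) + R))) atTop (𝓝 0) := by
      have h3 := (Real.continuous_sqrt.tendsto 0).comp h1
      simpa [Function.comp_def] using h3
    exact tendsto_of_tendsto_of_tendsto_of_le_of_le tendsto_const_nhds h2
      (fun m => (hb_pos m).le) hub
  set A : ℕ → ℂ := fun m => (b m : ℂ) * c m with hAdef
  set P : ℕ → ℂ := fun m => (((b m)^2 : ℝ) : ℂ) * μ m with hPdef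
  have hAeq : ∀ m, ‖A m‖ = b m * ‖c m‖ := by
    intro m
    rw [hAdef]
    simp only [norm_mul, Complex.norm_real]
    rw [Real.norm_eq_abs, abs_of_pos (hb_pos m)]
  have hPeq : ∀ m, ‖P m‖ = (b m)^2 * ‖μ m‖ := by
    intro m
    rw [hPdef]
    simp only [norm_mul, Complex.norm_real]
    rw [Real.norm_eq_abs, abs_of_nonneg (sq_nonneg (b m))]
  have hmem : ∀ m, (A m, P m) ∈ (Metric.closedBall (0:ℂ) R ×ˢ Metric.closedBall (0:ℂ) R) := by
    intro m
    constructor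
    · rw [Metric.mem_closedBall, dist_zero_right, hAeq]
      exact hA_le m
    · rw [Metric.mem_closedBall, dist_zero_right, hPeq]
      exact hP_le m
  obtain ⟨⟨A0, P0⟩, -, φ, hφ, hconv⟩ :=
    ((isCompact_closedBall (0:ℂ) R).prod (isCompact_closedBall (0:ℂ) R)).tendsto_subseq hmem
  have hA0 : Tendsto (fun k => A (φ k)) atTop (𝓝 A0) :=
    (continuous_fst.tendsto _).comp hconv
  have hP0 : Tendsto (fun k => P (φ k)) atTop (𝓝 P0) :=
    (continuous_snd.tendsto _).comp hconv
  have hmax : R - 1 ≤ max ‖A0‖ ‖P0‖ := by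
    apply ge_of_tendsto' (hA0.norm.max hP0.norm)
    intro k
    have h := hlow (φ k)
    rw [hAeq, hPeq]
    exact h
  -- choose the sign ε
  have hkey : R - 1 - ‖l‖ ≤ max ‖l + P0 + A0‖ ‖l + P0 - A0‖ := by
    have hsum : ‖l + P0 + A0‖ + ‖l + P0 - A0‖ ≤ 2 * max ‖l + P0 + A0‖ ‖l + P0 - A0‖ := by
      have := le_max_left ‖l + P0 + A0‖ ‖l + P0 - A0‖
      have := le_max_right ‖l + P0 + A0‖ ‖l + P0 - A0‖
      linarith
    rcases le_max_iff.mp hmax with h | h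
    · have h1 : 2 * ‖A0‖ ≤ ‖l + P0 + A0‖ + ‖l + P0 - A0‖ := by
        have e : (l + P0 + A0) - (l + P0 - A0) = 2 * A0 := by ring
        have h2 := norm_sub_le (l + P0 + A0) (l + P0 - A0)
        rw [e, norm_mul] at h2
        simpa using h2
      have h3 := norm_nonneg l
      linarith
    · have h1 : 2 * ‖l + P0‖ ≤ ‖l + P0 + A0‖ + ‖l + P0 - A0‖ := by
        have e : (l + P0 + A0) + (l + P0 - A0) = 2 * (l + P0) := by ring
        have h2 := norm_add_le (l + P0 + A0) (l + P0 - A0)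
        rw [e, norm_mul] at h2
        simpa using h2
      have h3 : ‖P0‖ ≤ ‖l + P0‖ + ‖l‖ := by
        calc ‖P0‖ = ‖(l + P0) - l‖ := by rw [add_sub_cancel_left]
          _ ≤ ‖l + P0‖ + ‖l‖ := norm_sub_le _ _
      linarith
  obtain ⟨ε, hεabs, hεsq, hwlb⟩ :
      ∃ ε : ℝ, |ε| = 1 ∧ ε^2 = 1 ∧ R - 1 - ‖l‖ ≤ ‖l + P0 + (ε:ℂ) * A0‖ := by
    rcases le_max_iff.mp hkey with h | h
    · exact ⟨1, by norm_num, by norm_num, by simpa using h⟩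
    · refine ⟨-1, by norm_num, by norm_num, ?_⟩
      have e : l + P0 + ((-1:ℝ):ℂ) * A0 = l + P0 - A0 := by push_cast; ring
      rw [e]; exact h
  -- the trial sequence
  set β : ℕ → ℝ := fun k => ε * b (φ k) with hβdef
  set v : ℕ → D := fun k => x (n (φ k)) + ((β k : ℝ) : ℂ) • Y (φ k) with hvdef
  set N : ℕ → ℝ := fun k => ‖(v k : H)‖ with hNdef
  have hφatTop : Tendsto φ atTop atTop := hφ.tendsto_atTop
  have hnφ : Tendsto (fun k => n (φ k)) atTop atTop :=
    tendsto_atTop_mono (fun k => le_trans (hφ.id_le k) (hn1 (φ k))) tendsto_id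
  have hβ0 : Tendsto β atTop (𝓝 0) := by
    have h := (hb0.comp hφatTop).const_mul ε
    simpa [hβdef, Function.comp] using h
  have hβabs : ∀ k, |β k| = b (φ k) := by
    intro k
    simp only [hβdef]
    rw [abs_mul, hεabs, one_mul, abs_of_pos (hb_pos _)]
  have hvcoe : ∀ k, ((v k : D) : H) = (x (n (φ k)) : H) + ((β k : ℝ) : ℂ) • (Y (φ k) : H) := by
    intro k
    simp [hvdef]
  have honek : ∀ k : ℕ, 1/((k:ℝ)+1) ≤ 1 := by
    intro k
    rw [div_le_one (by positivity)]
    have : (0:ℝ) ≤ (k:ℝ) := Nat.cast_nonneg k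
    linarith
  have hphik : ∀ k : ℕ, 1/((φ k : ℝ)+1) ≤ 1/((k:ℝ)+1) := by
    intro k
    apply one_div_le_one_div_of_le (by positivity)
    have : (k:ℝ) ≤ (φ k : ℝ) := Nat.cast_le.mpr (hφ.id_le k)
    linarith
  have hone0 : Tendsto (fun k : ℕ => 1/((k:ℝ)+1)) atTop (𝓝 0) :=
    tendsto_one_div_add_atTop_nhds_zero_nat
  have hsb : ∀ k, |(⟪(x (n (φ k)) : H), ((Y (φ k)) : H)⟫_ℂ).re| ≤ 1/((k:ℝ)+1) := by
    intro k
    refine le_trans (Complex.abs_re_le_norm _) (le_trans ?_ (hphik k))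
    exact hn3 (φ k)
  have hNsq : ∀ k, N k ^ 2 =
      1 + 2*(β k)*(⟪(x (n (φ k)) : H), ((Y (φ k)) : H)⟫_ℂ).re + (β k)^2 := by
    intro k
    simp only [hNdef]
    rw [hvcoe k, aux_norm_sq, hx1, hY1]
    ring
  have hNnonneg : ∀ k, 0 ≤ N k := by
    intro k
    simp only [hNdef]
    exact norm_nonneg _
  have hNpos : ∀ k, 0 < N k := by
    intro k
    have h1 := hNsq k
    have h2 := hsb k
    have h2' := honek k
    have h3 : |β k| < 1 := by rw [hβabs k]; exact hb_lt1 _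
    have h4 : |β k * (⟪(x (n (φ k)) : H), ((Y (φ k)) : H)⟫_ℂ).re| ≤ |β k| := by
      rw [abs_mul]
      nlinarith [abs_nonneg (β k), abs_nonneg ((⟪(x (n (φ k)) : H), ((Y (φ k)) : H)⟫_ℂ).re)]
    have h5 : 0 < N k ^ 2 := by
      nlinarith [neg_abs_le (β k * (⟪(x (n (φ k)) : H), ((Y (φ k)) : H)⟫_ℂ).re),
        sq_abs (β k), sq_nonneg (1 - |β k|), abs_nonneg (β k)]
    have h6 : N k ≠ 0 := by
      intro h0
      rw [h0] at h5
      norm_num at h5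
    exact (hNnonneg k).lt_of_ne (Ne.symm h6)
  have hNsq1 : Tendsto (fun k => N k ^ 2) atTop (𝓝 1) := by
    have t1 : Tendsto (fun k => 2*(β k)*(⟪(x (n (φ k)) : H), ((Y (φ k)) : H)⟫_ℂ).re)
        atTop (𝓝 0) := by
      have hg : Tendsto (fun k => 2*|β k|) atTop (𝓝 0) := by
        have h := hβ0.abs.const_mul (2:ℝ)
        simpa using h
      apply squeeze_zero_norm _ hg
      intro k
      rw [Real.norm_eq_abs, abs_mul, abs_mul, abs_two]
      nlinarith [abs_nonneg (β k), hsb k, honek k,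
        abs_nonneg ((⟪(x (n (φ k)) : H), ((Y (φ k)) : H)⟫_ℂ).re)]
    have t2 : Tendsto (fun k => (β k)^2) atTop (𝓝 0) := by
      have h := hβ0.mul hβ0
      simpa [sq] using h
    have t3 := (tendsto_const_nhds (x := (1:ℝ)) (f := atTop)).add t1 |>.add t2
    rw [add_zero, add_zero] at t3
    exact t3.congr fun k => (hNsq k).symm
  have hN1 : Tendsto N atTop (𝓝 1) := by
    have h := (Real.continuous_sqrt.tendsto 1).comp hNsq1
    simp only [Function.comp, Real.sqrt_one] at h
    exact h.congr fun k => Real.sqrt_sq (hNnonneg k)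
  have hNinv : Tendsto (fun k => (N k)⁻¹) atTop (𝓝 1) := by
    have h := hN1.inv₀ one_ne_zero
    simpa using h
  have hsC : Tendsto (fun k => (((N k)⁻¹ : ℝ) : ℂ)) atTop (𝓝 1) := by
    have h := (Complex.continuous_ofReal.tendsto 1).comp hNinv
    exact h.congr fun k => rfl
  have hNv : ∀ k, ‖((v k : D) : H)‖ = N k := fun k => by rw [hNdef]
  clear_value μ c b A P β v N
  set z : ℕ → D := fun k => (((N k)⁻¹ : ℝ) : ℂ) • v k with hzdef
  have hzcoe : ∀ k, ((z k : D) : H) = (((N k)⁻¹ : ℝ) : ℂ) • ((v k : D) : H) := by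
    intro k
    simp only [hzdef, Submodule.coe_smul]
  have hz1 : ∀ k, ‖(z k : H)‖ = 1 := by
    intro k
    rw [hzcoe k, norm_smul, Complex.norm_real, Real.norm_eq_abs,
      abs_of_pos (inv_pos.mpr (hNpos k)), hNv k]
    exact inv_mul_cancel₀ (hNpos k).ne'
  have hz2 : ∀ yH : H, Tendsto (fun k => ⟪(z k : H), yH⟫_ℂ) atTop (𝓝 0) := by
    intro yH
    have hinner : ∀ k, ⟪(z k : H), yH⟫_ℂ = (((N k)⁻¹ : ℝ) : ℂ) *
        (⟪(x (n (φ k)) : H), yH⟫_ℂ + ((β k : ℝ) : ℂ) * ⟪((Y (φ k)) : H), yH⟫_ℂ) := by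
      intro k
      rw [hzcoe k, inner_smul_left, Complex.conj_ofReal, hvcoe k, inner_add_left,
        inner_smul_left, Complex.conj_ofReal]
    have t1 : Tendsto (fun k => ⟪(x (n (φ k)) : H), yH⟫_ℂ) atTop (𝓝 0) :=
      (hx2 yH).comp hnφ
    have t2 : Tendsto (fun k => ((β k : ℝ) : ℂ) * ⟪((Y (φ k)) : H), yH⟫_ℂ) atTop (𝓝 0) := by
      have hg : Tendsto (fun k => |β k| * ‖yH‖) atTop (𝓝 0) := by
        have h := hβ0.abs.mul_const ‖yH‖
        simpa using h
      apply squeeze_zero_norm _ hg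
      intro k
      rw [norm_mul, Complex.norm_real, Real.norm_eq_abs]
      apply mul_le_mul_of_nonneg_left _ (abs_nonneg (β k))
      calc ‖⟪((Y (φ k)) : H), yH⟫_ℂ‖ ≤ ‖((Y (φ k)) : H)‖ * ‖yH‖ := norm_inner_le_norm _ _
        _ = ‖yH‖ := by rw [hY1, one_mul]
    have t3 := hsC.mul (t1.add t2)
    rw [show (1:ℂ) * (0 + 0) = 0 by ring] at t3
    exact t3.congr fun k => (hinner k).symm
  -- the quadratic form along z
  have hq : ∀ k, ⟪(z k : H), T (z k)⟫_ℂ = (((N k)⁻¹ : ℝ) : ℂ) * ((((N k)⁻¹ : ℝ) : ℂ) *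
      (⟪(x (n (φ k)) : H), T (x (n (φ k)))⟫_ℂ
        + ((β k : ℝ) : ℂ) * ⟪(x (n (φ k)) : H), T (Y (φ k))⟫_ℂ
        + ((β k : ℝ) : ℂ) * ⟪((Y (φ k)) : H), T (x (n (φ k)))⟫_ℂ
        + ((β k : ℝ) : ℂ) * ((β k : ℝ) : ℂ) * ⟪((Y (φ k)) : H), T (Y (φ k))⟫_ℂ)) := by
    intro k
    have hTz : T (z k) = (((N k)⁻¹ : ℝ) : ℂ) • T (v k) := by
      simp only [hzdef]
      exact map_smul T _ _
    have e1 : ⟪((v k : D) : H), T (v k)⟫_ℂ =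
        ⟪(x (n (φ k)) : H), T (x (n (φ k)))⟫_ℂ
        + ((β k : ℝ) : ℂ) * ⟪(x (n (φ k)) : H), T (Y (φ k))⟫_ℂ
        + ((β k : ℝ) : ℂ) * ⟪((Y (φ k)) : H), T (x (n (φ k)))⟫_ℂ
        + ((β k : ℝ) : ℂ) * ((β k : ℝ) : ℂ) * ⟪((Y (φ k)) : H), T (Y (φ k))⟫_ℂ := by
      simp only [hvdef]
      rw [aux_expand D T (x (n (φ k))) (Y (φ k)) ((β k : ℝ) : ℂ), Complex.conj_ofReal]
    rw [hzcoe k, hTz, inner_smul_left, inner_smul_right, Complex.conj_ofReal, e1]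
  have hεC : ((ε:ℝ):ℂ)^2 = 1 := by
    rw [← Complex.ofReal_pow, hεsq, Complex.ofReal_one]
  have hq1 : Tendsto (fun k => ⟪(x (n (φ k)) : H), T (x (n (φ k)))⟫_ℂ) atTop (𝓝 l) := by
    rw [tendsto_iff_norm_sub_tendsto_zero]
    have hb' : ∀ k : ℕ, ‖⟪(x (n (φ k)) : H), T (x (n (φ k)))⟫_ℂ - l‖ ≤ 1/((k:ℝ)+1) :=
      fun k => le_trans (hn2 (φ k)) (hphik k)
    exact squeeze_zero (fun k => norm_nonneg _) hb' hone0
  have hq2 : Tendsto (fun k => ((β k : ℝ) : ℂ) * ⟪(x (n (φ k)) : H), T (Y (φ k))⟫_ℂ)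
      atTop (𝓝 0) := by
    apply squeeze_zero_norm _ hone0
    intro k
    rw [norm_mul, Complex.norm_real, Real.norm_eq_abs]
    have h1 := hn4 (φ k)
    have h2 : |β k| ≤ 1 := by rw [hβabs k]; exact (hb_lt1 _).le
    have h3 := norm_nonneg (⟪(x (n (φ k)) : H), T (Y (φ k))⟫_ℂ)
    calc |β k| * ‖⟪(x (n (φ k)) : H), T (Y (φ k))⟫_ℂ‖ ≤ 1 * (1/((φ k : ℝ)+1)) := by
          apply mul_le_mul h2 h1 h3 zero_le_one
      _ ≤ 1/((k:ℝ)+1) := by rw [one_mul]; exact hphik k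
  have hq3 : Tendsto (fun k => ((β k : ℝ) : ℂ) * ⟪((Y (φ k)) : H), T (x (n (φ k)))⟫_ℂ)
      atTop (𝓝 ((ε:ℂ) * A0)) := by
    have h := hA0.const_mul ((ε:ℝ):ℂ)
    refine h.congr fun k => ?_
    simp only [hAdef, hcdef, hβdef]
    push_cast
    ring
  have hq4 : Tendsto (fun k => ((β k : ℝ) : ℂ) * ((β k : ℝ) : ℂ) *
      ⟪((Y (φ k)) : H), T (Y (φ k))⟫_ℂ) atTop (𝓝 P0) := by
    refine hP0.congr fun k => ?_
    simp only [hPdef, hμdef, hβdef]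
    push_cast
    linear_combination (-(((b (φ k) : ℝ) : ℂ)^2 * ⟪((Y (φ k)) : H), T (Y (φ k))⟫_ℂ)) * hεC
  have hz3 : Tendsto (fun k => ⟪(z k : H), T (z k)⟫_ℂ) atTop
      (𝓝 (l + P0 + (ε:ℂ) * A0)) := by
    have main := ((hq1.add hq2).add hq3).add hq4
    have final := hsC.mul (hsC.mul main)
    rw [show (1:ℂ) * (1 * (l + 0 + (ε:ℂ) * A0 + P0)) = l + P0 + (ε:ℂ) * A0 by ring] at final
    exact final.congr fun k => (hq k).symm
  refine ⟨l + P0 + (ε:ℂ) * A0, ⟨z, hz1, hz2, hz3⟩, ?_⟩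
  linarith [hwlb]
end
end

section
/- Let T be a densely defined linear operator on a complex Hilbert space H (so D(T) is dense in H) that is unbounded, i.e., there is no constant C ≥ 0 with ‖Tx‖ ≤ C‖x‖ for all x ∈ D(T). Then the essential numerical range W_e(T) is either empty or an unbounded subset of ℂ. -/
open Filter Topology
open scoped InnerProductSpace

noncomputable section

variable {H : Type*} [NormedAddCommGroup H] [InnerProductSpace ℂ H] [CompleteSpace H]

set_option maxHeartbeats 1000000
open Set

-- polarization identity for the quadratic form of T
lemma polar_aux (D : Submodule ℂ H) (T : D →ₗ[ℂ] H) (x y : D) :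
    (4:ℂ) * ⟪(y:H), T x⟫_ℂ =
      ⟪((x+y:D):H), T (x+y)⟫_ℂ - ⟪((x-y:D):H), T (x-y)⟫_ℂ
      + Complex.I * ⟪((x + Complex.I • y : D):H), T (x + Complex.I • y)⟫_ℂ
      - Complex.I * ⟪((x - Complex.I • y : D):H), T (x - Complex.I • y)⟫_ℂ := by
  simp only [map_add, map_sub, map_smul, Submodule.coe_add, Submodule.coe_sub,
    Submodule.coe_smul, inner_add_left, inner_add_right, inner_sub_left, inner_sub_right,
    inner_smul_left, inner_smul_right, Complex.conj_I]
  linear_combination (⟪(y:H), T x⟫_ℂ * 2 - ⟪(x:H), T y⟫_ℂ * 2) * Complex.I_sq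

set_option linter.unusedSectionVars false

lemma numRadius_unbounded (D : Submodule ℂ H) (T : D →ₗ[ℂ] H)
    (hdense : Dense (D : Set H))
    (hunb : ¬ ∃ C : ℝ, 0 ≤ C ∧ ∀ x : D, ‖T x‖ ≤ C * ‖(x : H)‖) (M : ℝ) :
    ∃ u : D, ‖(u:H)‖ = 1 ∧ M < ‖⟪(u:H), T u⟫_ℂ‖ := by
  by_contra hcon
  push_neg at hcon
  set M' : ℝ := max M 0 with hM'
  have hM'0 : (0:ℝ) ≤ M' := le_max_right _ _
  -- quadratic bound
  have hquad : ∀ z : D, ‖⟪(z:H), T z⟫_ℂ‖ ≤ M' * ‖(z:H)‖^2 := by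
    intro z
    rcases eq_or_ne (z:H) 0 with hz | hz
    · have hz' : z = 0 := by exact_mod_cast hz
      simp [hz', hz]
    · have hnz : (0:ℝ) < ‖(z:H)‖ := norm_pos_iff.mpr hz
      set c : ℂ := ((‖(z:H)‖⁻¹ : ℝ) : ℂ) with hc
      have hcu : ‖((c • z : D) : H)‖ = 1 := by
        simp [c, norm_smul, hnz.ne']
      have h1 := (hcon (c • z) hcu).trans (le_max_left M 0)
      have h2 : ⟪((c • z : D):H), T (c • z)⟫_ℂ = ((‖(z:H)‖^2 : ℝ) : ℂ)⁻¹ * ⟪(z:H), T z⟫_ℂ := by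
        simp [c, map_smul, inner_smul_left, inner_smul_right, Submodule.coe_smul]
        push_cast
        ring
      rw [h2, norm_mul] at h1
      have h3 : ‖(((‖(z:H)‖^2 : ℝ) : ℂ))⁻¹‖ = (‖(z:H)‖^2)⁻¹ := by
        rw [norm_inv, Complex.norm_real, Real.norm_of_nonneg (sq_nonneg _)]
      rw [h3] at h1
      rw [inv_mul_le_iff₀ (pow_pos hnz 2)] at h1
      linarith [h1]
  -- sesquilinear bound
  have hses : ∀ x y : D, ‖⟪(y:H), T x⟫_ℂ‖ ≤ M' * (‖(x:H)‖^2 + ‖(y:H)‖^2) := by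
    intro x y
    have hp := polar_aux D T x y
    have h4 : ‖(4:ℂ) * ⟪(y:H), T x⟫_ℂ‖ = 4 * ‖⟪(y:H), T x⟫_ℂ‖ := by
      rw [norm_mul]; norm_num
    have tri : ‖(4:ℂ) * ⟪(y:H), T x⟫_ℂ‖ ≤
        ‖⟪((x+y:D):H), T (x+y)⟫_ℂ‖ + ‖⟪((x-y:D):H), T (x-y)⟫_ℂ‖
        + ‖⟪((x + Complex.I • y : D):H), T (x + Complex.I • y)⟫_ℂ‖
        + ‖⟪((x - Complex.I • y : D):H), T (x - Complex.I • y)⟫_ℂ‖ := by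
      rw [hp]
      set a := ⟪((x+y:D):H), T (x+y)⟫_ℂ
      set b := ⟪((x-y:D):H), T (x-y)⟫_ℂ
      set cc := ⟪((x + Complex.I • y : D):H), T (x + Complex.I • y)⟫_ℂ
      set d := ⟪((x - Complex.I • y : D):H), T (x - Complex.I • y)⟫_ℂ
      calc ‖a - b + Complex.I * cc - Complex.I * d‖
          ≤ ‖a - b + Complex.I * cc‖ + ‖Complex.I * d‖ := norm_sub_le _ _
        _ ≤ ‖a - b‖ + ‖Complex.I * cc‖ + ‖Complex.I * d‖ := by
            have := norm_add_le (a - b) (Complex.I * cc); linarith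
        _ ≤ ‖a‖ + ‖b‖ + ‖Complex.I * cc‖ + ‖Complex.I * d‖ := by
            have := norm_sub_le a b; linarith
        _ = ‖a‖ + ‖b‖ + ‖cc‖ + ‖d‖ := by
            rw [norm_mul, norm_mul, Complex.norm_I]; ring
    have par1 : ‖((x+y:D):H)‖^2 + ‖((x-y:D):H)‖^2 = 2*(‖(x:H)‖^2+‖(y:H)‖^2) := by
      simp only [Submodule.coe_add, Submodule.coe_sub, pow_two]
      simpa only [pow_two] using parallelogram_law_with_norm ℂ (x:H) (y:H)
    have par2 : ‖((x + Complex.I • y:D):H)‖^2 + ‖((x - Complex.I • y:D):H)‖^2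
        = 2*(‖(x:H)‖^2+‖(y:H)‖^2) := by
      have := parallelogram_law_with_norm ℂ (x:H) (Complex.I • (y:H))
      have hIy : ‖Complex.I • (y:H)‖ = ‖(y:H)‖ := by
        rw [norm_smul, Complex.norm_I, one_mul]
      simp only [Submodule.coe_add, Submodule.coe_sub, Submodule.coe_smul, pow_two]
      rw [← hIy]
      simpa only [pow_two] using this
    have e1 := hquad (x+y)
    have e2 := hquad (x-y)
    have e3 := hquad (x + Complex.I • y)
    have e4 := hquad (x - Complex.I • y)
    rw [h4] at tri
    nlinarith [tri, e1, e2, e3, e4, par1, par2]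
  -- scaled sesquilinear bound
  have hses2 : ∀ x y : D, ‖⟪(y:H), T x⟫_ℂ‖ ≤ 2 * M' * ‖(x:H)‖ * ‖(y:H)‖ := by
    intro x y
    rcases eq_or_ne (x:H) 0 with hx | hx
    · have hx' : x = 0 := by exact_mod_cast hx
      simp [hx', hx]
    rcases eq_or_ne (y:H) 0 with hy | hy
    · rw [show (y:H) = 0 from hy, inner_zero_left, norm_zero]; positivity
    have hxp : (0:ℝ) < ‖(x:H)‖ := norm_pos_iff.mpr hx
    have hyp : (0:ℝ) < ‖(y:H)‖ := norm_pos_iff.mpr hy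
    set c : ℝ := ‖(x:H)‖ / ‖(y:H)‖ with hcdef
    have hcp : 0 < c := div_pos hxp hyp
    have key := hses x ((c:ℂ) • y)
    have lhs : ‖⟪(((c:ℂ) • y : D):H), T x⟫_ℂ‖ = c * ‖⟪(y:H), T x⟫_ℂ‖ := by
      push_cast
      rw [inner_smul_left, norm_mul, RCLike.norm_conj, Complex.norm_real,
        Real.norm_of_nonneg hcp.le]
    have rhs : ‖(((c:ℂ) • y : D):H)‖^2 = ‖(x:H)‖^2 := by
      push_cast
      rw [norm_smul, Complex.norm_real, Real.norm_of_nonneg hcp.le, mul_pow, hcdef]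
      field_simp
    rw [lhs, rhs] at key
    have hc : c * ‖(y:H)‖ = ‖(x:H)‖ := div_mul_cancel₀ _ hyp.ne'
    have h6 : c * ‖⟪(y:H), T x⟫_ℂ‖ * ‖(y:H)‖ = ‖(x:H)‖ * ‖⟪(y:H), T x⟫_ℂ‖ := by
      rw [← hc]; ring
    have h5 : ‖(x:H)‖ * ‖⟪(y:H), T x⟫_ℂ‖ ≤ 2 * M' * ‖(x:H)‖^2 * ‖(y:H)‖ := by
      have h7 := mul_le_mul_of_nonneg_right key hyp.le
      rw [h6] at h7
      linarith [h7]
    nlinarith [h5, hxp]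
  -- operator norm bound
  have hop : ∀ x : D, ‖T x‖ ≤ 2 * M' * ‖(x:H)‖ := by
    intro x
    rcases eq_or_ne (T x) 0 with h0 | h0
    · rw [h0, norm_zero]; positivity
    have hvpos : 0 < ‖T x‖ := norm_pos_iff.mpr h0
    obtain ⟨ys, hysmem, hyslim⟩ := mem_closure_iff_seq_limit.mp (hdense (T x))
    have l1 : Tendsto (fun n => ‖⟪ys n, T x⟫_ℂ‖) atTop (𝓝 ‖⟪T x, T x⟫_ℂ‖) :=
      (hyslim.inner tendsto_const_nhds).norm
    have l2 : Tendsto (fun n => 2 * M' * ‖(x:H)‖ * ‖ys n‖) atTop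
        (𝓝 (2 * M' * ‖(x:H)‖ * ‖T x‖)) := tendsto_const_nhds.mul hyslim.norm
    have l3 : ‖⟪T x, T x⟫_ℂ‖ ≤ 2 * M' * ‖(x:H)‖ * ‖T x‖ :=
      le_of_tendsto_of_tendsto' l1 l2 (fun n => hses2 x ⟨ys n, hysmem n⟩)
    have hnn : ‖⟪T x, T x⟫_ℂ‖ = ‖T x‖^2 := by
      rw [inner_self_eq_norm_sq_to_K, norm_pow, RCLike.norm_ofReal, abs_norm]
    rw [hnn] at l3
    nlinarith [l3, hvpos]
  exact hunb ⟨2 * M', by positivity, hop⟩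


lemma key_step (D : Submodule ℂ H) (T : D →ₗ[ℂ] H)
    (hdense : Dense (D : Set H))
    (hunb : ¬ ∃ C : ℝ, 0 ≤ C ∧ ∀ x : D, ‖T x‖ ≤ C * ‖(x : H)‖)
    (l : ℂ) (x : ℕ → D)
    (hxw : ∀ y : H, Tendsto (fun k => ⟪(x k : H), y⟫_ℂ) atTop (𝓝 0))
    (hxq : Tendsto (fun k => ⟪(x k : H), T (x k)⟫_ℂ) atTop (𝓝 l))
    (hx1 : ∀ k, ‖(x k : H)‖ = 1)
    (R : ℝ) (hlR : ‖l‖ ≤ R) (n : ℕ) :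
    ∃ (w : D) (m : ℕ), n ≤ m ∧ ‖(w:H)‖ = 1 ∧ ‖⟪(w:H), T w⟫_ℂ‖ = R + 1 ∧
      ∀ y : H, ‖⟪(w:H), y⟫_ℂ‖ ≤ 2 * ‖⟪(x m : H), y⟫_ℂ‖ + (2/(n+1)) * ‖y‖ := by
  have hR0 : (0:ℝ) ≤ R := (norm_nonneg l).trans hlR
  set t : ℝ := R + ‖l‖ + 2 with ht
  have ht0 : 0 < t := by positivity
  set c₀ : ℝ := 6*(R+1) + 2 with hc₀
  have hc₀8 : (8:ℝ) ≤ c₀ := by simp only [hc₀]; linarith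
  have hnc₀ : (0:ℝ) < n + c₀ := by positivity
  -- choose u with large numerical value
  obtain ⟨u, hu1, hus⟩ := numRadius_unbounded D T hdense hunb (t * (n + c₀)^2)
  set s : ℝ := ‖⟪(u:H), T u⟫_ℂ‖ with hsdef
  have hspos : 0 < s := lt_of_le_of_lt (by positivity) hus
  set ω : ℂ := ⟪(u:H), T u⟫_ℂ / (s:ℂ) with hω
  have hsne : ((s:ℝ):ℂ) ≠ 0 := by exact_mod_cast hspos.ne'
  have hω1 : ‖ω‖ = 1 := by
    rw [hω, norm_div, Complex.norm_real, Real.norm_of_nonneg hspos.le, ← hsdef,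
      div_self hspos.ne']
  have hωs : ((s:ℝ):ℂ) * ω = ⟪(u:H), T u⟫_ℂ := by
    rw [hω, mul_div_cancel₀ _ hsne]
  -- choose m
  obtain ⟨N1, hN1⟩ := Metric.tendsto_atTop.mp hxq (1/4) (by norm_num)
  obtain ⟨N2, hN2⟩ := Metric.tendsto_atTop.mp (hxw (T u)) (1/4) (by norm_num)
  set m := max n (max N1 N2) with hm
  have hmn : n ≤ m := le_max_left _ _
  have hq_close : ‖⟪(x m : H), T (x m)⟫_ℂ - l‖ ≤ 1/4 := by
    have := hN1 m ((le_max_left _ _).trans (le_max_right _ _))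
    rw [dist_eq_norm] at this; linarith
  have hc₁ : ‖⟪(x m : H), T u⟫_ℂ‖ ≤ 1/4 := by
    have := hN2 m ((le_max_right _ _).trans (le_max_right _ _))
    rw [dist_zero_right] at this; linarith
  have hqm : ‖⟪(x m : H), T (x m)⟫_ℂ‖ ≤ ‖l‖ + 1/4 := by
    calc ‖⟪(x m : H), T (x m)⟫_ℂ‖ = ‖(⟪(x m : H), T (x m)⟫_ℂ - l) + l‖ := by ring_nf
      _ ≤ ‖⟪(x m : H), T (x m)⟫_ℂ - l‖ + ‖l‖ := norm_add_le _ _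
      _ ≤ ‖l‖ + 1/4 := by linarith
  -- b_max
  set β : ℝ := 1/(n + c₀) with hβ
  have hβpos : 0 < β := by positivity
  have hβ8 : β ≤ 1/8 := by
    rw [hβ, div_le_div_iff₀ hnc₀ (by norm_num)]; nlinarith [Nat.cast_nonneg (α := ℝ) n]
  have hβR : β ≤ 1/(6*(R+1)) := by
    rw [hβ, div_le_div_iff₀ hnc₀ (by positivity)]; nlinarith [Nat.cast_nonneg (α := ℝ) n]
  have hβn : β ≤ 1/(n+1) := by
    rw [hβ, div_le_div_iff₀ hnc₀ (by positivity)]; nlinarith [Nat.cast_nonneg (α := ℝ) n]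
  set bm : ℝ := Real.sqrt (t/s) with hbm
  have hbm0 : 0 ≤ bm := Real.sqrt_nonneg _
  have hbm2 : bm^2 = t/s := Real.sq_sqrt (by positivity)
  have hbmβ : bm ≤ β := by
    have h1 : t / s ≤ β^2 := by
      rw [hβ, div_pow, one_pow, div_le_div_iff₀ hspos (by positivity)]
      nlinarith [hus]
    rw [hbm]
    exact (Real.sqrt_le_sqrt h1).trans_eq (Real.sqrt_sq hβpos.le)
  -- phase σ
  set γ : ℂ := ⟪(u:H), T (x m)⟫_ℂ with hγ
  set σ : ℂ := if γ = 0 then ω else (‖γ‖ : ℂ) * ω / γ with hσ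
  have hσ1 : ‖σ‖ = 1 := by
    rw [hσ]
    split_ifs with h
    · exact hω1
    · rw [norm_div, norm_mul, Complex.norm_real, Real.norm_of_nonneg (norm_nonneg _), hω1,
        mul_one, div_self (norm_ne_zero_iff.mpr h)]
  have hσγ : σ * γ = (‖γ‖:ℂ) * ω := by
    rw [hσ]
    split_ifs with h
    · rw [h]; simp
    · field_simp
  have hσσ : (starRingEnd ℂ) σ * σ = 1 := by
    have := Complex.mul_conj σ
    rw [Complex.normSq_eq_norm_sq, hσ1] at this
    rw [mul_comm]
    simpa using this
  -- the path
  set z : ℝ → D := fun b => σ • x m + ((b:ℝ):ℂ) • u with hz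
  have hzcoe : ∀ b : ℝ, ((z b : D):H) = σ • (x m : H) + ((b:ℝ):ℂ) • (u:H) := by
    intro b; simp [hz]
  have hzq : ∀ b : ℝ, ⟪((z b : D):H), T (z b)⟫_ℂ
      = ⟪(x m:H), T (x m)⟫_ℂ + ((b:ℂ))^2 * ⟪(u:H), T u⟫_ℂ
        + (b:ℂ) * ((starRingEnd ℂ) σ * ⟪(x m:H), T u⟫_ℂ) + (b:ℂ) * ((‖γ‖:ℂ) * ω) := by
    intro b
    simp only [hz, map_add, map_smul, Submodule.coe_add, Submodule.coe_smul,
      inner_add_left, inner_add_right, inner_smul_left, inner_smul_right, Complex.conj_ofReal]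
    linear_combination ⟪(x m:H), T (x m)⟫_ℂ * hσσ + (b:ℂ) * hσγ
  have hznorm_up : ∀ b : ℝ, 0 ≤ b → ‖((z b : D):H)‖ ≤ 1 + b := by
    intro b hb
    rw [hzcoe b]
    calc ‖σ • (x m : H) + ((b:ℝ):ℂ) • (u:H)‖ ≤ ‖σ • (x m : H)‖ + ‖((b:ℝ):ℂ) • (u:H)‖ :=
          norm_add_le _ _
      _ = 1 + b := by
          rw [norm_smul, norm_smul, hσ1, hx1 m, hu1, Complex.norm_real,
            Real.norm_of_nonneg hb]; ring
  have hznorm_lo : ∀ b : ℝ, 0 ≤ b → 1 - b ≤ ‖((z b : D):H)‖ := by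
    intro b hb
    rw [hzcoe b]
    have h1 : ‖σ • (x m : H)‖ ≤ ‖σ • (x m : H) + ((b:ℝ):ℂ) • (u:H)‖ + ‖((b:ℝ):ℂ) • (u:H)‖ := by
      have := norm_add_le (σ • (x m : H) + ((b:ℝ):ℂ) • (u:H)) (-(((b:ℝ):ℂ) • (u:H)))
      simpa using this
    rw [norm_smul, norm_smul, hσ1, hx1 m, hu1, Complex.norm_real,
      Real.norm_of_nonneg hb] at h1
    linarith
  have hzpos : ∀ b ∈ Icc (0:ℝ) bm, (0:ℝ) < ‖((z b : D):H)‖ := by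
    intro b hb
    have := hznorm_lo b hb.1
    have hble : b ≤ 1/8 := le_trans hb.2 (le_trans hbmβ hβ8)
    linarith
  -- the interpolation function
  set f : ℝ → ℝ := fun b => ‖⟪((z b : D):H), T (z b)⟫_ℂ‖ / ‖((z b : D):H)‖^2 with hf
  have hcont : ContinuousOn f (Icc 0 bm) := by
    have hzc : Continuous fun b : ℝ => ((z b : D) : H) := by
      simp only [hzcoe]
      exact continuous_const.add (Complex.continuous_ofReal.smul continuous_const)
    have hq' : Continuous fun b : ℝ => ⟪((z b : D):H), T (z b)⟫_ℂ := by
      rw [show (fun b : ℝ => ⟪((z b : D):H), T (z b)⟫_ℂ)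
          = fun b : ℝ => ⟪(x m:H), T (x m)⟫_ℂ + ((b:ℂ))^2 * ⟪(u:H), T u⟫_ℂ
            + (b:ℂ) * ((starRingEnd ℂ) σ * ⟪(x m:H), T u⟫_ℂ) + (b:ℂ) * ((‖γ‖:ℂ) * ω)
          from funext hzq]
      fun_prop
    have hnum : Continuous fun b : ℝ => ‖⟪((z b : D):H), T (z b)⟫_ℂ‖ := hq'.norm
    have hden : Continuous fun b : ℝ => ‖((z b : D):H)‖^2 := (hzc.norm).pow 2
    exact hnum.continuousOn.div hden.continuousOn
      (fun b hb => pow_ne_zero 2 (hzpos b hb).ne')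
  -- endpoint values
  have hf0 : f 0 ≤ R + 1 := by
    have hz0 : ((z 0 : D):H) = σ • (x m : H) := by rw [hzcoe]; simp
    have hn0 : ‖((z 0 : D):H)‖ = 1 := by rw [hz0, norm_smul, hσ1, hx1 m, one_mul]
    have hv0 : ⟪((z 0:D):H), T (z 0)⟫_ℂ = ⟪(x m:H), T (x m)⟫_ℂ := by
      have := hzq 0; simpa using this
    simp only [hf, hv0, hn0, one_pow, div_one]
    linarith [hqm, hlR]
  have hfbm : R + 1 ≤ f bm := by
    have hbmC : ((bm:ℝ):ℂ)^2 * ⟪(u:H), T u⟫_ℂ = (t:ℂ) * ω := by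
      rw [← hωs, show ((bm:ℝ):ℂ)^2 = ((bm^2:ℝ):ℂ) by push_cast; ring, hbm2]
      push_cast
      field_simp
    have hkey : ⟪((z bm:D):H), T (z bm)⟫_ℂ
        = ((t + bm * ‖γ‖ : ℝ):ℂ) * ω + ⟪(x m:H), T (x m)⟫_ℂ
          + (bm:ℂ) * ((starRingEnd ℂ) σ * ⟪(x m:H), T u⟫_ℂ) := by
      rw [hzq bm, hbmC]
      push_cast
      ring
    have hnum_lo : R + 3/2 ≤ ‖⟪((z bm:D):H), T (z bm)⟫_ℂ‖ := by
      rw [hkey]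
      have e1 : ‖((t + bm * ‖γ‖ : ℝ):ℂ) * ω‖ = t + bm * ‖γ‖ := by
        rw [norm_mul, hω1, mul_one, Complex.norm_real, Real.norm_of_nonneg (by positivity)]
      have e2 : ‖(bm:ℂ) * ((starRingEnd ℂ) σ * ⟪(x m:H), T u⟫_ℂ)‖ ≤ bm * (1/4) := by
        rw [norm_mul, norm_mul, RCLike.norm_conj, hσ1, one_mul, Complex.norm_real,
          Real.norm_of_nonneg hbm0]
        exact mul_le_mul_of_nonneg_left hc₁ hbm0
      have e3 := norm_add_le (((t + bm * ‖γ‖ : ℝ):ℂ) * ω + ⟪(x m:H), T (x m)⟫_ℂ)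
        ((bm:ℂ) * ((starRingEnd ℂ) σ * ⟪(x m:H), T u⟫_ℂ))
      have e4 : ‖((t + bm * ‖γ‖ : ℝ):ℂ) * ω‖
          ≤ ‖((t + bm * ‖γ‖ : ℝ):ℂ) * ω + ⟪(x m:H), T (x m)⟫_ℂ‖ + ‖⟪(x m:H), T (x m)⟫_ℂ‖ := by
        have := norm_add_le (((t + bm * ‖γ‖ : ℝ):ℂ) * ω + ⟪(x m:H), T (x m)⟫_ℂ)
          (-⟪(x m:H), T (x m)⟫_ℂ)
        simpa using this
      have e5 : ‖((t + bm * ‖γ‖ : ℝ):ℂ) * ω + ⟪(x m:H), T (x m)⟫_ℂ‖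
          ≤ ‖((t + bm * ‖γ‖ : ℝ):ℂ) * ω + ⟪(x m:H), T (x m)⟫_ℂ
              + (bm:ℂ) * ((starRingEnd ℂ) σ * ⟪(x m:H), T u⟫_ℂ)‖
            + ‖(bm:ℂ) * ((starRingEnd ℂ) σ * ⟪(x m:H), T u⟫_ℂ)‖ := by
        have := norm_add_le (((t + bm * ‖γ‖ : ℝ):ℂ) * ω + ⟪(x m:H), T (x m)⟫_ℂ
              + (bm:ℂ) * ((starRingEnd ℂ) σ * ⟪(x m:H), T u⟫_ℂ))
          (-((bm:ℂ) * ((starRingEnd ℂ) σ * ⟪(x m:H), T u⟫_ℂ)))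
        simpa [add_assoc] using this
      have hbm8 : bm ≤ 1/8 := hbmβ.trans hβ8
      have hγ0 : 0 ≤ bm * ‖γ‖ := by positivity
      rw [ht] at e1
      nlinarith [e1, e2, e4, e5, hqm, hlR]
    have hden_hi : ‖((z bm:D):H)‖^2 ≤ 1 + 1/(2*(R+1)) := by
      have h1 : ‖((z bm:D):H)‖ ≤ 1 + bm := hznorm_up bm hbm0
      have h2 : bm ≤ 1/(6*(R+1)) := hbmβ.trans hβR
      have h3 : (0:ℝ) < R + 1 := by linarith
      have h4 : ‖((z bm:D):H)‖^2 ≤ (1+bm)^2 := by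
        apply pow_le_pow_left₀ (norm_nonneg _) h1
      have h5 : (1+bm)^2 ≤ 1 + 3*bm := by nlinarith [hbmβ.trans hβ8, hbm0]
      have h6 : 3*bm ≤ 1/(2*(R+1)) := by
        have hR1 : R + 1 ≠ 0 := by positivity
        have e : (3:ℝ)*(1/(6*(R+1))) = 1/(2*(R+1)) := by
          field_simp
          ring
        linarith [h2]
      linarith
    have hdpos : (0:ℝ) < ‖((z bm:D):H)‖^2 := by
      have := hzpos bm ⟨hbm0, le_refl bm⟩; positivity
    rw [hf]
    rw [le_div_iff₀ hdpos]
    have hfe : (R+1) * (1 + 1/(2*(R+1))) = R + 3/2 := by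
      field_simp
      ring
    nlinarith [hden_hi, hnum_lo, hR0]
  -- intermediate value theorem
  obtain ⟨b, hbIcc, hbS⟩ := intermediate_value_Icc hbm0 hcont ⟨hf0, hfbm⟩
  have hzb : (0:ℝ) < ‖((z b:D):H)‖ := hzpos b hbIcc
  have hb0 : 0 ≤ b := hbIcc.1
  have hbβ : b ≤ β := hbIcc.2.trans hbmβ
  have hzb_half : (1:ℝ)/2 ≤ ‖((z b:D):H)‖ := by
    have := hznorm_lo b hb0
    have h8 : b ≤ 1/8 := hbβ.trans hβ8
    linarith
  have hinv2 : ‖((z b:D):H)‖⁻¹ ≤ 2 := by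
    rw [inv_le_comm₀ hzb (by norm_num)]
    linarith
  -- the witness vector
  refine ⟨((‖((z b:D):H)‖⁻¹ : ℝ):ℂ) • z b, m, hmn, ?_, ?_, ?_⟩
  · rw [Submodule.coe_smul, norm_smul, Complex.norm_real,
      Real.norm_of_nonneg (inv_nonneg.mpr (norm_nonneg _)), inv_mul_cancel₀ hzb.ne']
  · have hq : ⟪((((‖((z b:D):H)‖⁻¹ : ℝ):ℂ) • z b : D):H), T (((‖((z b:D):H)‖⁻¹ : ℝ):ℂ) • z b)⟫_ℂ
        = ((‖((z b:D):H)‖⁻¹ : ℝ):ℂ)^2 * ⟪((z b:D):H), T (z b)⟫_ℂ := by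
      simp only [map_smul, Submodule.coe_smul, inner_smul_left, inner_smul_right,
        Complex.conj_ofReal]
      ring
    rw [hq, norm_mul, norm_pow, Complex.norm_real,
      Real.norm_of_nonneg (inv_nonneg.mpr (norm_nonneg _))]
    rw [← hbS, hf]
    field_simp
  · intro y
    have hwy : ⟪((((‖((z b:D):H)‖⁻¹ : ℝ):ℂ) • z b : D):H), y⟫_ℂ
        = ((‖((z b:D):H)‖⁻¹ : ℝ):ℂ) * ((starRingEnd ℂ) σ * ⟪(x m:H), y⟫_ℂ
            + ((b:ℝ):ℂ) * ⟪(u:H), y⟫_ℂ) := by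
      simp only [Submodule.coe_smul, inner_smul_left, hzcoe, inner_add_left,
        Complex.conj_ofReal]
      try ring
    rw [hwy, norm_mul, Complex.norm_real,
      Real.norm_of_nonneg (inv_nonneg.mpr (norm_nonneg _))]
    have h1 : ‖(starRingEnd ℂ) σ * ⟪(x m:H), y⟫_ℂ + ((b:ℝ):ℂ) * ⟪(u:H), y⟫_ℂ‖
        ≤ ‖⟪(x m:H), y⟫_ℂ‖ + b * ‖y‖ := by
      calc ‖(starRingEnd ℂ) σ * ⟪(x m:H), y⟫_ℂ + ((b:ℝ):ℂ) * ⟪(u:H), y⟫_ℂ‖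
          ≤ ‖(starRingEnd ℂ) σ * ⟪(x m:H), y⟫_ℂ‖ + ‖((b:ℝ):ℂ) * ⟪(u:H), y⟫_ℂ‖ :=
            norm_add_le _ _
        _ ≤ ‖⟪(x m:H), y⟫_ℂ‖ + b * ‖y‖ := by
            rw [norm_mul, norm_mul, RCLike.norm_conj, hσ1, one_mul, Complex.norm_real,
              Real.norm_of_nonneg hb0]
            have := norm_inner_le_norm (𝕜 := ℂ) (u:H) y
            rw [hu1, one_mul] at this
            have hb' : b * ‖⟪(u:H), y⟫_ℂ‖ ≤ b * ‖y‖ := mul_le_mul_of_nonneg_left this hb0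
            linarith
    have hbn1 : b ≤ 1/(n+1) := hbβ.trans hβn
    have h2 : ‖⟪(x m:H), y⟫_ℂ‖ + b * ‖y‖ ≤ ‖⟪(x m:H), y⟫_ℂ‖ + (1/(n+1)) * ‖y‖ := by
      have := mul_le_mul_of_nonneg_right hbn1 (norm_nonneg y)
      linarith
    calc ‖((z b:D):H)‖⁻¹ * ‖(starRingEnd ℂ) σ * ⟪(x m:H), y⟫_ℂ + ((b:ℝ):ℂ) * ⟪(u:H), y⟫_ℂ‖
        ≤ 2 * (‖⟪(x m:H), y⟫_ℂ‖ + (1/(n+1)) * ‖y‖) := by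
          apply mul_le_mul hinv2 (h1.trans h2) (norm_nonneg _) (by norm_num)
      _ = 2 * ‖⟪(x m:H), y⟫_ℂ‖ + (2/(n+1)) * ‖y‖ := by ring

/-- if `T` is densely defined and unbounded (there is no `C ≥ 0` with
`‖T x‖ ≤ C ‖x‖` for all `x ∈ D(T)`), then `W_e(T)` is empty or unbounded. -/
theorem essNumRange_empty_or_unbounded (D : Submodule ℂ H) (T : D →ₗ[ℂ] H)
    (hdense : Dense (D : Set H))
    (hunb : ¬ ∃ C : ℝ, 0 ≤ C ∧ ∀ x : D, ‖T x‖ ≤ C * ‖(x : H)‖) :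
    essNumRange D T = ∅ ∨ ¬ Bornology.IsBounded (essNumRange D T) := by
  rcases Set.eq_empty_or_nonempty (essNumRange D T) with he | ⟨l, hl⟩
  · exact Or.inl he
  right
  intro hbd
  obtain ⟨R, hR⟩ := isBounded_iff_forall_norm_le.mp hbd
  have hlR : ‖l‖ ≤ R := hR l hl
  obtain ⟨x, hx1, hxw, hxq⟩ := hl
  choose w m hmn hw1 hwS hww using fun n => key_step D T hdense hunb l x hxw hxq hx1 R hlR n
  have hvmem : ∀ n, ⟪(w n : H), T (w n)⟫_ℂ ∈ Metric.sphere (0:ℂ) (R+1) := by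
    intro n; rw [Metric.mem_sphere, dist_zero_right]; exact hwS n
  obtain ⟨μ, hμmem, φ, hφ, hφlim⟩ := (isCompact_sphere (0:ℂ) (R+1)).tendsto_subseq hvmem
  have hμnorm : ‖μ‖ = R + 1 := by
    rw [Metric.mem_sphere, dist_zero_right] at hμmem; exact hμmem
  have hμ : μ ∈ essNumRange D T := by
    refine ⟨fun j => w (φ j), fun j => hw1 (φ j), ?_, hφlim⟩
    intro y
    have hm_top : Tendsto m atTop atTop := tendsto_atTop_mono hmn tendsto_id
    have hx_y : Tendsto (fun n => ‖⟪(x (m n) : H), y⟫_ℂ‖) atTop (𝓝 0) := by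
      have := ((hxw y).norm).comp hm_top
      rw [norm_zero] at this
      exact this
    have hb_y : Tendsto (fun n : ℕ => (2/((n:ℝ)+1)) * ‖y‖) atTop (𝓝 0) := by
      have h := tendsto_one_div_add_atTop_nhds_zero_nat (𝕜 := ℝ)
      have h2 := (h.const_mul (2:ℝ)).mul_const ‖y‖
      rw [mul_zero, zero_mul] at h2
      convert h2 using 2 with n
      ring
    have hnorm0 : Tendsto (fun n => ‖⟪(w n : H), y⟫_ℂ‖) atTop (𝓝 0) := by
      apply squeeze_zero (fun n => norm_nonneg _) (fun n => hww n y)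
      have := (hx_y.const_mul (2:ℝ)).add hb_y
      simpa using this
    have hfull := tendsto_zero_iff_norm_tendsto_zero.mpr hnorm0
    exact hfull.comp hφ.tendsto_atTop
  have hle := hR μ hμ
  rw [hμnorm] at hle
  linarith
end
end

section
/- Let 𝔱 be a sectorial sesquilinear form on a complex Hilbert space H, i.e., there exist v ∈ ℂ and 0 ≤ θ < π/2 such that |arg(z − v)| ≤ θ for all z ∈ W(𝔱). Then Re W_e(𝔱) = W_e(Re 𝔱); equivalently, {Re z : z ∈ W_e(𝔱)} equals the set of real numbers a for which there exists a sequence (x_n) in D(𝔱) with ‖x_n‖ = 1, x_n → 0 weakly, and Re(𝔱[x_n]) → a. -/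
open Filter Topology
open scoped InnerProductSpace

noncomputable section

variable {H : Type*} [NormedAddCommGroup H] [InnerProductSpace ℂ H] [CompleteSpace H]

/-- if `𝔱` is sectorial, i.e. there are `v ∈ ℂ` and `0 ≤ θ < π/2` with
`|arg(z - v)| ≤ θ` for all `z ∈ W(𝔱)`, then `Re W_e(𝔱) = W_e(Re 𝔱)`: the image of `W_e(𝔱)`
under `Re` equals the set of real `a` attained as limits `Re 𝔱[xₙ] → a` along normalized
weak null sequences in `D(𝔱)`. -/
theorem re_essNumRangeForm_of_sectorial (D : Submodule ℂ H) (𝔱 : D →ₗ[ℂ] D →ₗ⋆[ℂ] ℂ)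
    (hsect : ∃ (v : ℂ) (θ : ℝ), 0 ≤ θ ∧ θ < Real.pi / 2 ∧
      ∀ z ∈ numRangeForm D 𝔱, |Complex.arg (z - v)| ≤ θ) :
    Complex.re '' essNumRangeForm D 𝔱 =
      {a : ℝ | ∃ x : ℕ → D, (∀ n, ‖(x n : H)‖ = 1) ∧
        (∀ y : H, Tendsto (fun n => ⟪(x n : H), y⟫_ℂ) atTop (𝓝 0)) ∧
        Tendsto (fun n => (𝔱 (x n) (x n)).re) atTop (𝓝 a)} := by
  obtain ⟨v, θ, hθ0, hθπ, hsec⟩ := hsect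
  have hpi := Real.pi_pos
  have hcos : 0 < Real.cos θ := Real.cos_pos_of_mem_Ioo ⟨by linarith, hθπ⟩
  ext a
  simp only [Set.mem_image, Set.mem_setOf_eq]
  constructor
  · rintro ⟨z, ⟨x, hx1, hxw, hxt⟩, rfl⟩
    exact ⟨x, hx1, hxw, (Complex.continuous_re.tendsto z).comp hxt⟩
  · rintro ⟨x, hx1, hxw, hre⟩
    -- sector bound: |𝔱[xₙ] - v| cos θ ≤ Re (𝔱[xₙ] - v)
    have key : ∀ n, ‖𝔱 (x n) (x n) - v‖ * Real.cos θ ≤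
        (𝔱 (x n) (x n) - v).re := by
      intro n
      set w := 𝔱 (x n) (x n) - v with hw
      rcases eq_or_ne w 0 with h0 | h0
      · simp [h0]
      · have harg : |Complex.arg w| ≤ θ := hsec _ ⟨x n, hx1 n, rfl⟩
        have h1 : Real.cos θ ≤ Real.cos |Complex.arg w| :=
          Real.cos_le_cos_of_nonneg_of_le_pi (abs_nonneg _) (by linarith) harg
        rw [Real.cos_abs] at h1
        have h2 : Real.cos (Complex.arg w) = w.re / ‖w‖ := Complex.cos_arg h0
        have h3 : (0 : ℝ) < ‖w‖ := by
          simpa using (norm_pos_iff.mpr h0)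
        calc ‖w‖ * Real.cos θ ≤ ‖w‖ * Real.cos (Complex.arg w) :=
              mul_le_mul_of_nonneg_left h1 h3.le
          _ = w.re := by rw [h2]; field_simp
    obtain ⟨M, hM⟩ := hre.bddAbove_range
    have hbound : ∀ n, ‖𝔱 (x n) (x n)‖ ≤ (M - v.re) / Real.cos θ + ‖v‖ := by
      intro n
      have h1 : (𝔱 (x n) (x n)).re ≤ M := hM ⟨n, rfl⟩
      have h2 : ‖𝔱 (x n) (x n) - v‖ ≤ (M - v.re) / Real.cos θ := by
        rw [le_div_iff₀ hcos]
        calc ‖𝔱 (x n) (x n) - v‖ * Real.cos θ ≤ (𝔱 (x n) (x n) - v).re := key n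
          _ ≤ M - v.re := by simp only [Complex.sub_re]; linarith
      calc ‖𝔱 (x n) (x n)‖
          = ‖(𝔱 (x n) (x n) - v) + v‖ := by ring_nf
        _ ≤ ‖𝔱 (x n) (x n) - v‖ + ‖v‖ := norm_add_le _ _
        _ ≤ (M - v.re) / Real.cos θ + ‖v‖ := by linarith
    set C := (M - v.re) / Real.cos θ + ‖v‖ with hC
    have hsub : Set.range (fun n => 𝔱 (x n) (x n)) ⊆ Metric.closedBall 0 C := by
      rintro z ⟨n, rfl⟩
      simpa [Complex.dist_eq] using hbound n
    obtain ⟨z, _, φ, hφ, hz⟩ := tendsto_subseq_of_bounded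
      (Metric.isBounded_closedBall.subset hsub) (fun n => Set.mem_range_self n)
    refine ⟨z, ⟨fun n => x (φ n), fun n => hx1 _, fun y => (hxw y).comp hφ.tendsto_atTop,
      hz⟩, ?_⟩
    have h1 : Tendsto (fun n => (𝔱 (x (φ n)) (x (φ n))).re) atTop (𝓝 z.re) :=
      (Complex.continuous_re.tendsto z).comp hz
    have h2 : Tendsto (fun n => (𝔱 (x (φ n)) (x (φ n))).re) atTop (𝓝 a) :=
      hre.comp hφ.tendsto_atTop
    exact tendsto_nhds_unique h1 h2
end
end

section
/- Let A₀ and A₁ be bounded self-adjoint operators on an infinite-dimensional complex Hilbert space H such that min W_e(A₀) = 0. Then the set {s ∈ ℝ : is ∈ W_e(A₀ + iA₁)} is nonempty and has a minimum ω, and (min W_e(A₀ + tA₁))/t → ω as t → 0⁺. -/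
open Filter Topology
open scoped InnerProductSpace

noncomputable section

set_option linter.unusedSectionVars false
set_option linter.unusedVariables false

variable {H : Type*} [NormedAddCommGroup H] [InnerProductSpace ℂ H] [CompleteSpace H]

/-- The essential numerical range of a bounded operator `S` on `H`. -/
def essNumRangeB (S : H →L[ℂ] H) : Set ℂ :=
  {l : ℂ | ∃ x : ℕ → H, (∀ n, ‖x n‖ = 1) ∧
    (∀ y : H, Tendsto (fun n => ⟪x n, y⟫_ℂ) atTop (𝓝 0)) ∧
    Tendsto (fun n => ⟪x n, S (x n)⟫_ℂ) atTop (𝓝 l)}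

namespace ENRaux

def q (A₀ A₁ : H →L[ℂ] H) (x : H) : ℝ × ℝ := ((⟪x, A₀ x⟫_ℂ).re, (⟪x, A₁ x⟫_ℂ).re)

def SF (F : Finset H) : Set H := {x : H | ‖x‖ = 1 ∧ ∀ y ∈ F, ⟪x, y⟫_ℂ = 0}

def E (A₀ A₁ : H →L[ℂ] H) (F : Finset H) : Set (ℝ × ℝ) := closure (q A₀ A₁ '' SF F)

def K (A₀ A₁ : H →L[ℂ] H) : Set (ℝ × ℝ) := ⋂ F : Finset H, E A₀ A₁ F

lemma abs_re_inner_le (A : H →L[ℂ] H) {x : H} (hx : ‖x‖ = 1) : |(⟪x, A x⟫_ℂ).re| ≤ ‖A‖ := by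
  calc |(⟪x, A x⟫_ℂ).re| ≤ ‖⟪x, A x⟫_ℂ‖ := Complex.abs_re_le_norm _
  _ ≤ ‖x‖ * ‖A x‖ := norm_inner_le_norm _ _
  _ ≤ ‖x‖ * (‖A‖ * ‖x‖) := by gcongr; exact A.le_opNorm x
  _ = ‖A‖ := by rw [hx]; ring

lemma E_subset_Icc (A₀ A₁ : H →L[ℂ] H) (F : Finset H) :
    E A₀ A₁ F ⊆ Set.Icc (-‖A₀‖, -‖A₁‖) (‖A₀‖, ‖A₁‖) := by
  apply closure_minimal _ isClosed_Icc
  rintro p ⟨x, ⟨hx1, -⟩, rfl⟩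
  have h0 := abs_le.mp (abs_re_inner_le A₀ hx1)
  have h1 := abs_le.mp (abs_re_inner_le A₁ hx1)
  exact ⟨⟨h0.1, h1.1⟩, ⟨h0.2, h1.2⟩⟩

lemma isClosed_E (A₀ A₁ : H →L[ℂ] H) (F : Finset H) : IsClosed (E A₀ A₁ F) := isClosed_closure

lemma isCompact_E (A₀ A₁ : H →L[ℂ] H) (F : Finset H) : IsCompact (E A₀ A₁ F) :=
  IsCompact.of_isClosed_subset isCompact_Icc (isClosed_E A₀ A₁ F) (E_subset_Icc A₀ A₁ F)

lemma SF_nonempty (hinf : ¬ FiniteDimensional ℂ H) (F : Finset H) : (SF F).Nonempty := by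
  classical
  set V : Submodule ℂ H := Submodule.span ℂ (F : Set H) with hV
  haveI : FiniteDimensional ℂ V := FiniteDimensional.span_of_finite ℂ (F.finite_toSet)
  have hVne : V ≠ ⊤ := by
    intro h
    apply hinf
    haveI : FiniteDimensional ℂ (⊤ : Submodule ℂ H) := h ▸ ‹FiniteDimensional ℂ V›
    exact (Submodule.topEquiv : (⊤ : Submodule ℂ H) ≃ₗ[ℂ] H).finiteDimensional
  have hbot : Vᗮ ≠ ⊥ := fun h => hVne (Submodule.orthogonal_eq_bot_iff.mp h)
  obtain ⟨v, hvV, hv0⟩ := (Submodule.ne_bot_iff _).mp hbot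
  refine ⟨(‖v‖⁻¹ : ℂ) • v, norm_smul_inv_norm hv0, fun y hy => ?_⟩
  rw [inner_smul_left]
  have : ⟪y, v⟫_ℂ = 0 := (Submodule.mem_orthogonal V v).mp hvV y (Submodule.subset_span hy)
  rw [← inner_conj_symm, this]
  simp

lemma re_inner_self_diff (A : H →L[ℂ] H) {a b : H} (ha : ‖a‖ ≤ 1) (hb : ‖b‖ ≤ 1) :
    |(⟪b, A b⟫_ℂ).re - (⟪a, A a⟫_ℂ).re| ≤ 2 * ‖A‖ * ‖b - a‖ := by
  have key : ⟪b, A b⟫_ℂ - ⟪a, A a⟫_ℂ = ⟪b - a, A b⟫_ℂ + ⟪a, A (b - a)⟫_ℂ := by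
    rw [inner_sub_left, map_sub, inner_sub_right]; ring
  have h1 : |(⟪b, A b⟫_ℂ).re - (⟪a, A a⟫_ℂ).re| ≤ ‖⟪b, A b⟫_ℂ - ⟪a, A a⟫_ℂ‖ := by
    rw [show (⟪b, A b⟫_ℂ).re - (⟪a, A a⟫_ℂ).re = (⟪b, A b⟫_ℂ - ⟪a, A a⟫_ℂ).re by simp]
    exact Complex.abs_re_le_norm _
  refine h1.trans ?_
  rw [key]
  have hAb : ‖A b‖ ≤ ‖A‖ := by
    have := A.le_opNorm b
    nlinarith [norm_nonneg A, norm_nonneg (A b)]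
  have h2 : ‖⟪b - a, A b⟫_ℂ‖ ≤ ‖A‖ * ‖b - a‖ := by
    calc ‖⟪b - a, A b⟫_ℂ‖ ≤ ‖b - a‖ * ‖A b‖ := norm_inner_le_norm _ _
    _ ≤ ‖b - a‖ * ‖A‖ := by gcongr
    _ = ‖A‖ * ‖b - a‖ := by ring
  have h3 : ‖⟪a, A (b - a)⟫_ℂ‖ ≤ ‖A‖ * ‖b - a‖ := by
    calc ‖⟪a, A (b - a)⟫_ℂ‖ ≤ ‖a‖ * ‖A (b - a)‖ := norm_inner_le_norm _ _
    _ ≤ 1 * (‖A‖ * ‖b - a‖) := by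
        refine mul_le_mul ha (A.le_opNorm _) (norm_nonneg _) zero_le_one
    _ = ‖A‖ * ‖b - a‖ := by ring
  calc ‖⟪b - a, A b⟫_ℂ + ⟪a, A (b - a)⟫_ℂ‖ ≤ ‖⟪b - a, A b⟫_ℂ‖ + ‖⟪a, A (b - a)⟫_ℂ‖ :=
        norm_add_le _ _
  _ ≤ ‖A‖ * ‖b - a‖ + ‖A‖ * ‖b - a‖ := add_le_add h2 h3
  _ = 2 * ‖A‖ * ‖b - a‖ := by ring

lemma mem_K_of_seq (A₀ A₁ : H →L[ℂ] H) (x : ℕ → H) (hx1 : ∀ n, ‖x n‖ = 1)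
    (hxw : ∀ y : H, Tendsto (fun n => ⟪x n, y⟫_ℂ) atTop (𝓝 0)) {p : ℝ × ℝ}
    (hq : Tendsto (fun n => q A₀ A₁ (x n)) atTop (𝓝 p)) : p ∈ K A₀ A₁ := by
  classical
  rw [K, Set.mem_iInter]
  intro F
  set V : Submodule ℂ H := Submodule.span ℂ (F : Set H) with hV
  haveI : FiniteDimensional ℂ V := FiniteDimensional.span_of_finite ℂ (F.finite_toSet)
  set P := V.orthogonalProjectionOnto with hP
  set b := stdOrthonormalBasis ℂ V with hb
  -- the projections tend to zero in norm
  have hPn : ∀ n, ‖(P (x n) : H)‖ ≤ ∑ i, ‖⟪((b i : V) : H), x n⟫_ℂ‖ := by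
    intro n
    rw [b.orthogonalProjectionOnto_apply_eq_sum]
    push_cast
    refine (norm_sum_le _ _).trans ?_
    refine Finset.sum_le_sum fun i _ => ?_
    rw [norm_smul]
    have : ‖((b i : V) : H)‖ = 1 := by
      rw [← Submodule.coe_norm]; exact b.orthonormal.1 i
    rw [this, mul_one]
  have hP0 : Tendsto (fun n => ‖(P (x n) : H)‖) atTop (𝓝 0) := by
    refine squeeze_zero (fun n => norm_nonneg _) hPn ?_
    have : ∀ i : Fin (Module.finrank ℂ V),
        Tendsto (fun n => ‖⟪((b i : V) : H), x n⟫_ℂ‖) atTop (𝓝 0) := by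
      intro i
      have h1 : Tendsto (fun n => ⟪x n, ((b i : V) : H)⟫_ℂ) atTop (𝓝 0) := hxw _
      have h2 := h1.norm
      rw [norm_zero] at h2
      refine h2.congr fun n => ?_
      rw [← inner_conj_symm, RCLike.norm_conj]
    have hsum := tendsto_finset_sum Finset.univ (fun i _ => this i)
    simpa using hsum
  set u : ℕ → H := fun n => x n - (P (x n) : H) with hu
  set z : ℕ → H := fun n => (‖u n‖⁻¹ : ℂ) • u n with hz
  have hxu : ∀ n, ‖x n - u n‖ = ‖(P (x n) : H)‖ := by intro n; simp [hu]
  have hev : ∀ᶠ n in atTop, ‖(P (x n) : H)‖ < 1/2 :=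
    hP0.eventually (eventually_lt_nhds (by norm_num : (0:ℝ) < 1/2))
  have hune : ∀ n, ‖(P (x n) : H)‖ < 1/2 → u n ≠ 0 := by
    intro n hn hu0
    have hx : x n = (P (x n) : H) := by
      have : x n - (P (x n) : H) = 0 := hu0
      rwa [sub_eq_zero] at this
    rw [← hx, hx1 n] at hn; norm_num at hn
  have hzx : ∀ n, ‖(P (x n) : H)‖ < 1/2 → ‖z n - x n‖ ≤ 2 * ‖(P (x n) : H)‖ := by
    intro n hn
    have hun : u n ≠ 0 := hune n hn
    have hunpos : 0 < ‖u n‖ := norm_pos_iff.mpr hun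
    have h1 : ‖z n - u n‖ = |1 - ‖u n‖| := by
      have hzu : z n - u n = ((‖u n‖⁻¹ - 1 : ℝ) : ℂ) • u n := by
        show (‖u n‖⁻¹ : ℂ) • u n - u n = _
        push_cast
        rw [sub_smul, one_smul]
      rw [hzu, norm_smul, Complex.norm_real, Real.norm_eq_abs]
      have : |‖u n‖⁻¹ - 1| * ‖u n‖ = |(‖u n‖⁻¹ - 1) * ‖u n‖| := by
        rw [abs_mul, abs_of_pos hunpos]
      rw [this, sub_mul, inv_mul_cancel₀ hunpos.ne', one_mul]
    have h2 : |1 - ‖u n‖| ≤ ‖(P (x n) : H)‖ := by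
      have := abs_norm_sub_norm_le (x n) (u n)
      rw [hx1 n, hxu n] at this
      exact this
    calc ‖z n - x n‖ ≤ ‖z n - u n‖ + ‖u n - x n‖ := norm_sub_le_norm_sub_add_norm_sub _ _ _
    _ ≤ ‖(P (x n) : H)‖ + ‖(P (x n) : H)‖ := by
        refine add_le_add (h1.le.trans h2) ?_
        rw [norm_sub_rev, hxu n]
    _ = 2 * ‖(P (x n) : H)‖ := by ring
  have hz1 : ∀ n, ‖z n‖ ≤ 1 := by
    intro n
    show ‖(‖u n‖⁻¹ : ℂ) • u n‖ ≤ 1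
    rcases eq_or_ne (u n) 0 with h | h
    · simp [h]
    · have hpos : 0 < ‖u n‖ := norm_pos_iff.mpr h
      rw [norm_smul, norm_inv, Complex.norm_real, Real.norm_eq_abs, abs_of_pos hpos,
        inv_mul_cancel₀ hpos.ne']
  have hzx0 : Tendsto (fun n => ‖z n - x n‖) atTop (𝓝 0) := by
    refine squeeze_zero' (Eventually.of_forall fun n => norm_nonneg _)
      (hev.mono fun n hn => hzx n hn) ?_
    have := hP0.const_mul 2
    simpa using this
  have hzx0' : ∀ c : ℝ, Tendsto (fun n => c * ‖z n - x n‖) atTop (𝓝 0) := fun c => by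
    simpa using hzx0.const_mul c
  have hqz : Tendsto (fun n => q A₀ A₁ (z n)) atTop (𝓝 p) := by
    have hdiff : Tendsto (fun n => q A₀ A₁ (z n) - q A₀ A₁ (x n)) atTop (𝓝 0) := by
      rw [Prod.tendsto_iff]
      constructor
      · refine squeeze_zero_norm' (Eventually.of_forall fun n => ?_) (hzx0' (2 * ‖A₀‖))
        simpa [q] using re_inner_self_diff A₀ (le_of_eq (hx1 n)) (hz1 n)
      · refine squeeze_zero_norm' (Eventually.of_forall fun n => ?_) (hzx0' (2 * ‖A₁‖))
        simpa [q] using re_inner_self_diff A₁ (le_of_eq (hx1 n)) (hz1 n)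
    have := hdiff.add hq
    simpa using this
  refine mem_closure_of_tendsto hqz (hev.mono fun n hn => ?_)
  refine ⟨z n, ⟨norm_smul_inv_norm (hune n hn), fun y hy => ?_⟩, rfl⟩
  have hzV : z n ∈ Vᗮ := by
    refine Submodule.smul_mem _ _ ?_
    exact Submodule.sub_starProjection_mem_orthogonal (x n)
  exact (Submodule.mem_orthogonal' V (z n)).mp hzV y (Submodule.subset_span hy)

lemma seq_of_mem_K (A₀ A₁ : H →L[ℂ] H) {p : ℝ × ℝ} (hp : p ∈ K A₀ A₁) :
    ∃ x : ℕ → H, (∀ n, ‖x n‖ = 1) ∧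
      (∀ y : H, Tendsto (fun n => ⟪x n, y⟫_ℂ) atTop (𝓝 0)) ∧
      Tendsto (fun n => q A₀ A₁ (x n)) atTop (𝓝 p) := by
  classical
  rw [K, Set.mem_iInter] at hp
  set Pr : ℕ × H → Prop := fun a => ‖a.2‖ = 1 ∧ dist (q A₀ A₁ a.2) p < 1/(a.1+1) with hPr
  set r : ℕ × H → ℕ × H → Prop :=
    fun a c => a.1 < c.1 ∧ ⟪a.2, c.2⟫_ℂ = 0 ∧ ⟪c.2, a.2⟫_ℂ = 0 with hr
  have h : ∀ s : Finset (ℕ × H), (∀ a ∈ s, Pr a) → ∃ c, Pr c ∧ ∀ a ∈ s, r a c := by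
    intro s _
    set n : ℕ := (s.sup Prod.fst) + 1 with hn
    set F : Finset H := s.image Prod.snd with hF
    have hmem := hp F
    rw [E, Metric.mem_closure_iff] at hmem
    obtain ⟨v, ⟨w, hwSF, rfl⟩, hvdist⟩ := hmem (1/(n+1)) (by positivity)
    refine ⟨(n, w), ⟨hwSF.1, by rw [dist_comm] at hvdist; exact_mod_cast hvdist⟩, ?_⟩
    intro a ha
    have h1 : a.1 < n := Nat.lt_succ_of_le (Finset.le_sup (f := Prod.fst) ha)
    have h2 : ⟪w, a.2⟫_ℂ = 0 := hwSF.2 _ (Finset.mem_image_of_mem Prod.snd ha)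
    refine ⟨h1, ?_, h2⟩
    rw [← inner_conj_symm, h2]; simp
  obtain ⟨f, hfP, hfr⟩ := exists_seq_of_forall_finset_exists Pr r h
  set x : ℕ → H := fun k => (f k).2 with hx
  have hmono : StrictMono fun k => (f k).1 := fun i j hij => (hfr i j hij).1
  have hidx : ∀ k, k ≤ (f k).1 := fun k => hmono.le_apply
  have hx1 : ∀ k, ‖x k‖ = 1 := fun k => (hfP k).1
  have hON : Orthonormal ℂ x := by
    refine ⟨hx1, fun i j hij => ?_⟩
    rcases lt_or_gt_of_ne hij with h | h
    · exact (hfr i j h).2.1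
    · exact (hfr j i h).2.2
  refine ⟨x, hx1, fun y => ?_, ?_⟩
  · have hsum : Summable fun k => ‖⟪x k, y⟫_ℂ‖ ^ 2 := hON.inner_products_summable y
    have h2 := hsum.tendsto_atTop_zero
    have h3 : Tendsto (fun k => ‖⟪x k, y⟫_ℂ‖) atTop (𝓝 0) := by
      have := (Real.continuous_sqrt.tendsto 0).comp h2
      simp only [Real.sqrt_zero, Function.comp_def] at this
      refine this.congr fun k => ?_
      rw [Real.sqrt_sq (norm_nonneg _)]
    exact tendsto_zero_iff_norm_tendsto_zero.mpr h3
  · rw [tendsto_iff_dist_tendsto_zero]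
    refine squeeze_zero (fun k => dist_nonneg) (fun k => ?_) 
      tendsto_one_div_add_atTop_nhds_zero_nat
    have h1 := (hfP k).2
    have h2 : (1 : ℝ)/((f k).1 + 1) ≤ 1/(k+1) := by
      apply one_div_le_one_div_of_le (by positivity)
      have h4 : ((k : ℕ) : ℝ) ≤ (((f k).1 : ℕ) : ℝ) := by exact_mod_cast hidx k
      linarith
    exact (le_of_lt h1).trans h2

lemma K_isClosed (A₀ A₁ : H →L[ℂ] H) : IsClosed (K A₀ A₁) :=
  isClosed_iInter fun F => isClosed_closure

lemma K_subset_Icc (A₀ A₁ : H →L[ℂ] H) :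
    K A₀ A₁ ⊆ Set.Icc (-‖A₀‖, -‖A₁‖) (‖A₀‖, ‖A₁‖) :=
  (Set.iInter_subset _ (∅ : Finset H)).trans (E_subset_Icc A₀ A₁ ∅)

lemma K_isCompact (A₀ A₁ : H →L[ℂ] H) : IsCompact (K A₀ A₁) :=
  IsCompact.of_isClosed_subset isCompact_Icc (K_isClosed A₀ A₁) (K_subset_Icc A₀ A₁)

lemma K_nonempty (hinf : ¬ FiniteDimensional ℂ H) (A₀ A₁ : H →L[ℂ] H) :
    (K A₀ A₁).Nonempty := by
  refine IsCompact.nonempty_iInter_of_directed_nonempty_isCompact_isClosed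
    (E A₀ A₁) ?_ ?_ (isCompact_E A₀ A₁) (isClosed_E A₀ A₁)
  · intro F G
    classical
    exact ⟨F ∪ G,
      closure_mono (Set.image_mono fun w hw =>
        ⟨hw.1, fun y hy => hw.2 y (Finset.mem_union_left _ hy)⟩),
      closure_mono (Set.image_mono fun w hw =>
        ⟨hw.1, fun y hy => hw.2 y (Finset.mem_union_right _ hy)⟩)⟩
  · intro F
    obtain ⟨w, hw⟩ := SF_nonempty hinf F
    exact ⟨q A₀ A₁ w, subset_closure ⟨w, hw, rfl⟩⟩

lemma inner_self_real (A : H →L[ℂ] H) (hA : IsSelfAdjoint A) (x : H) :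
    (((⟪x, A x⟫_ℂ).re : ℂ)) = ⟪x, A x⟫_ℂ := by
  rw [← Complex.conj_eq_iff_re]
  calc (starRingEnd ℂ) ⟪x, A x⟫_ℂ = ⟪A x, x⟫_ℂ := inner_conj_symm _ _
  _ = ⟪x, A x⟫_ℂ := (ContinuousLinearMap.isSelfAdjoint_iff_isSymmetric.mp hA) x x

lemma inner_comb (A₀ A₁ : H →L[ℂ] H) (hsa₀ : IsSelfAdjoint A₀) (hsa₁ : IsSelfAdjoint A₁)
    (c : ℂ) (x : H) :
    ⟪x, (A₀ + c • A₁) x⟫_ℂ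
      = (((q A₀ A₁ x).1 : ℂ)) + c * (((q A₀ A₁ x).2 : ℂ)) := by
  rw [ContinuousLinearMap.add_apply, ContinuousLinearMap.smul_apply, inner_add_right,
    inner_smul_right]
  rw [show ((q A₀ A₁ x).1 : ℂ) = ⟪x, A₀ x⟫_ℂ from inner_self_real A₀ hsa₀ x,
    show ((q A₀ A₁ x).2 : ℂ) = ⟪x, A₁ x⟫_ℂ from inner_self_real A₁ hsa₁ x]

lemma mem_of_K (A₀ A₁ : H →L[ℂ] H) (hsa₀ : IsSelfAdjoint A₀) (hsa₁ : IsSelfAdjoint A₁)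
    (c : ℂ) {p : ℝ × ℝ} (hp : p ∈ K A₀ A₁) :
    ((p.1 : ℂ) + c * (p.2 : ℂ)) ∈ essNumRangeB (A₀ + c • A₁) := by
  obtain ⟨x, hx1, hxw, hq⟩ := seq_of_mem_K A₀ A₁ hp
  refine ⟨x, hx1, hxw, ?_⟩
  have h1 : Tendsto (fun n => ((q A₀ A₁ (x n)).1 : ℂ)) atTop (𝓝 (p.1 : ℂ)) :=
    (Complex.continuous_ofReal.tendsto _).comp ((continuous_fst.tendsto _).comp hq)
  have h2 : Tendsto (fun n => ((q A₀ A₁ (x n)).2 : ℂ)) atTop (𝓝 (p.2 : ℂ)) :=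
    (Complex.continuous_ofReal.tendsto _).comp ((continuous_snd.tendsto _).comp hq)
  have := h1.add (h2.const_mul c)
  refine this.congr fun n => ?_
  exact (inner_comb A₀ A₁ hsa₀ hsa₁ c (x n)).symm

lemma slice_real (A₀ A₁ : H →L[ℂ] H) (hsa₀ : IsSelfAdjoint A₀) (hsa₁ : IsSelfAdjoint A₁)
    (t : ℝ) :
    {s : ℝ | (s : ℂ) ∈ essNumRangeB (A₀ + (t : ℂ) • A₁)} =
      (fun p : ℝ × ℝ => p.1 + t * p.2) '' K A₀ A₁ := by
  ext s
  constructor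
  · rintro ⟨x, hx1, hxw, hlim⟩
    have hbdd : ∀ n, q A₀ A₁ (x n) ∈ Set.Icc (-‖A₀‖, -‖A₁‖) (‖A₀‖, ‖A₁‖) := fun n => by
      have h0 := abs_le.mp (abs_re_inner_le A₀ (hx1 n))
      have h1 := abs_le.mp (abs_re_inner_le A₁ (hx1 n))
      exact ⟨⟨h0.1, h1.1⟩, ⟨h0.2, h1.2⟩⟩
    obtain ⟨p, -, φ, hφ, hlim2⟩ :=
      tendsto_subseq_of_bounded (Metric.isBounded_Icc _ _) hbdd
    have hpK : p ∈ K A₀ A₁ :=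
      mem_K_of_seq A₀ A₁ (fun n => x (φ n)) (fun n => hx1 (φ n))
        (fun y => (hxw y).comp hφ.tendsto_atTop) hlim2
    have hval : Tendsto (fun n => ⟪x (φ n), (A₀ + (t : ℂ) • A₁) (x (φ n))⟫_ℂ) atTop
        (𝓝 ((p.1 : ℂ) + (t : ℂ) * (p.2 : ℂ))) := by
      have h1 : Tendsto (fun n => ((q A₀ A₁ (x (φ n))).1 : ℂ)) atTop (𝓝 (p.1 : ℂ)) :=
        (Complex.continuous_ofReal.tendsto _).comp ((continuous_fst.tendsto _).comp hlim2)
      have h2 : Tendsto (fun n => ((q A₀ A₁ (x (φ n))).2 : ℂ)) atTop (𝓝 (p.2 : ℂ)) :=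
        (Complex.continuous_ofReal.tendsto _).comp ((continuous_snd.tendsto _).comp hlim2)
      refine (h1.add (h2.const_mul _)).congr fun n => ?_
      exact (inner_comb A₀ A₁ hsa₀ hsa₁ _ (x (φ n))).symm
    have hval2 : Tendsto (fun n => ⟪x (φ n), (A₀ + (t : ℂ) • A₁) (x (φ n))⟫_ℂ) atTop
        (𝓝 (s : ℂ)) := hlim.comp hφ.tendsto_atTop
    have heq : (s : ℂ) = (p.1 : ℂ) + (t : ℂ) * (p.2 : ℂ) := tendsto_nhds_unique hval2 hval
    refine ⟨p, hpK, ?_⟩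
    have : ((p.1 + t * p.2 : ℝ) : ℂ) = (s : ℂ) := by push_cast; rw [heq]
    exact_mod_cast this
  · rintro ⟨p, hp, rfl⟩
    have := mem_of_K A₀ A₁ hsa₀ hsa₁ (t : ℂ) hp
    simp only [Set.mem_setOf_eq]
    rw [show ((p.1 + t * p.2 : ℝ) : ℂ) = (p.1 : ℂ) + (t : ℂ) * (p.2 : ℂ) by push_cast; ring]
    exact this

lemma slice_I (A₀ A₁ : H →L[ℂ] H) (hsa₀ : IsSelfAdjoint A₀) (hsa₁ : IsSelfAdjoint A₁) :
    {s : ℝ | Complex.I * (s : ℂ) ∈ essNumRangeB (A₀ + Complex.I • A₁)} =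
      {b : ℝ | ((0 : ℝ), b) ∈ K A₀ A₁} := by
  ext s
  constructor
  · rintro ⟨x, hx1, hxw, hlim⟩
    have hre : Tendsto (fun n => (⟪x n, (A₀ + Complex.I • A₁) (x n)⟫_ℂ).re) atTop
        (𝓝 ((Complex.I * (s : ℂ)).re)) := (Complex.continuous_re.tendsto _).comp hlim
    have him : Tendsto (fun n => (⟪x n, (A₀ + Complex.I • A₁) (x n)⟫_ℂ).im) atTop
        (𝓝 ((Complex.I * (s : ℂ)).im)) := (Complex.continuous_im.tendsto _).comp hlim
    have hre' : ∀ n, (⟪x n, (A₀ + Complex.I • A₁) (x n)⟫_ℂ).re = (q A₀ A₁ (x n)).1 := by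
      intro n; rw [inner_comb A₀ A₁ hsa₀ hsa₁ Complex.I (x n)]; simp
    have him' : ∀ n, (⟪x n, (A₀ + Complex.I • A₁) (x n)⟫_ℂ).im = (q A₀ A₁ (x n)).2 := by
      intro n; rw [inner_comb A₀ A₁ hsa₀ hsa₁ Complex.I (x n)]; simp
    have hIre : (Complex.I * (s : ℂ)).re = 0 := by simp
    have hIim : (Complex.I * (s : ℂ)).im = s := by simp
    have hq : Tendsto (fun n => q A₀ A₁ (x n)) atTop (𝓝 ((0 : ℝ), s)) := by
      rw [Prod.tendsto_iff]
      constructor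
      · rw [← hIre]; exact hre.congr fun n => hre' n
      · rw [← hIim]; exact him.congr fun n => him' n
    exact mem_K_of_seq A₀ A₁ x hx1 hxw hq
  · intro hb
    have := mem_of_K A₀ A₁ hsa₀ hsa₁ Complex.I hb
    simp only [Set.mem_setOf_eq]
    rw [show Complex.I * (s : ℂ)
        = (((0:ℝ) : ℂ)) + Complex.I * ((s : ℂ)) by push_cast; ring]
    exact this

end ENRaux

/-- if `A₀, A₁` are bounded self-adjoint operators on an infinite-dimensional
complex Hilbert space with `min W_e(A₀) = 0`, then `{s : ℝ | i s ∈ W_e(A₀ + i A₁)}` has a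
least element `ω`, and `(min W_e(A₀ + t A₁))/t → ω` as `t → 0⁺`. -/
theorem min_essNumRange_slope (hinf : ¬ FiniteDimensional ℂ H)
    (A₀ A₁ : H →L[ℂ] H) (hsa₀ : IsSelfAdjoint A₀) (hsa₁ : IsSelfAdjoint A₁)
    (h0 : sInf {s : ℝ | (s : ℂ) ∈ essNumRangeB A₀} = 0) :
    ∃ ω : ℝ,
      IsLeast {s : ℝ | Complex.I * (s : ℂ) ∈ essNumRangeB (A₀ + Complex.I • A₁)} ω ∧
      Tendsto (fun t : ℝ => sInf {s : ℝ | (s : ℂ) ∈ essNumRangeB (A₀ + (t : ℂ) • A₁)} / t)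
        (𝓝[>] (0 : ℝ)) (𝓝 ω) := by
  classical
  have hcomp := ENRaux.K_isCompact A₀ A₁
  have hne := ENRaux.K_nonempty hinf A₀ A₁
  have hKIcc := ENRaux.K_subset_Icc A₀ A₁
  have hslice : ∀ t : ℝ, {s : ℝ | (s : ℂ) ∈ essNumRangeB (A₀ + (t : ℂ) • A₁)} =
      (fun p : ℝ × ℝ => p.1 + t * p.2) '' ENRaux.K A₀ A₁ :=
    ENRaux.slice_real A₀ A₁ hsa₀ hsa₁
  have hcont : ∀ t : ℝ, Continuous fun p : ℝ × ℝ => p.1 + t * p.2 := fun t =>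
    continuous_fst.add (continuous_const.mul continuous_snd)
  have himg : ∀ t : ℝ, IsCompact ((fun p : ℝ × ℝ => p.1 + t * p.2) '' ENRaux.K A₀ A₁) :=
    fun t => hcomp.image (hcont t)
  -- rewrite `h0`
  have hA0 : {s : ℝ | (s : ℂ) ∈ essNumRangeB A₀} =
      (fun p : ℝ × ℝ => p.1 + (0:ℝ) * p.2) '' ENRaux.K A₀ A₁ := by
    have hop : A₀ + ((0:ℝ) : ℂ) • A₁ = A₀ := by simp
    have := hslice 0
    rwa [hop] at this
  rw [hA0] at h0
  have hfst_nonneg : ∀ p ∈ ENRaux.K A₀ A₁, 0 ≤ p.1 := by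
    intro p hp
    have h1 : sInf ((fun p : ℝ × ℝ => p.1 + (0:ℝ) * p.2) '' ENRaux.K A₀ A₁) ≤ p.1 + 0 * p.2 :=
      csInf_le (himg 0).bddBelow ⟨p, hp, rfl⟩
    rw [h0] at h1; linarith
  have hfst_attain : ∃ p ∈ ENRaux.K A₀ A₁, p.1 = 0 := by
    have := (himg 0).sInf_mem (hne.image _)
    rw [h0] at this
    obtain ⟨p, hp, hp0⟩ := this
    exact ⟨p, hp, by simpa using hp0⟩
  -- the slice set
  set S₀ : Set ℝ := {b : ℝ | ((0 : ℝ), b) ∈ ENRaux.K A₀ A₁} with hS₀def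
  have hS₀closed : IsClosed S₀ :=
    (ENRaux.K_isClosed A₀ A₁).preimage (continuous_const.prodMk continuous_id)
  have hS₀ne : S₀.Nonempty := by
    obtain ⟨p, hp, hp0⟩ := hfst_attain
    refine ⟨p.2, ?_⟩
    have : ((0 : ℝ), p.2) = p := Prod.ext hp0.symm rfl
    rw [hS₀def]; simpa [this] using hp
  have hS₀bdd : BddBelow S₀ := ⟨-‖A₁‖, fun b hb => (hKIcc hb).1.2⟩
  set ω := sInf S₀ with hωdef
  have hωmem : ω ∈ S₀ := hS₀closed.csInf_mem hS₀ne hS₀bdd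
  have hωleast : IsLeast S₀ ω := ⟨hωmem, fun b hb => csInf_le hS₀bdd hb⟩
  refine ⟨ω, ?_, ?_⟩
  · rw [ENRaux.slice_I A₀ A₁ hsa₀ hsa₁]
    exact hωleast
  · set f : ℝ → ℝ := fun t => sInf {s : ℝ | (s : ℂ) ∈ essNumRangeB (A₀ + (t : ℂ) • A₁)}
      with hfdef
    have hfle : ∀ t : ℝ, ∀ p ∈ ENRaux.K A₀ A₁, f t ≤ p.1 + t * p.2 := by
      intro t p hp
      rw [hfdef]
      simp only
      rw [hslice t]
      exact csInf_le (himg t).bddBelow ⟨p, hp, rfl⟩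
    have hfmem : ∀ t : ℝ, ∃ p ∈ ENRaux.K A₀ A₁, f t = p.1 + t * p.2 := by
      intro t
      have h1 : f t ∈ (fun p : ℝ × ℝ => p.1 + t * p.2) '' ENRaux.K A₀ A₁ := by
        rw [hfdef]; simp only; rw [hslice t]
        exact (himg t).sInf_mem (hne.image _)
      obtain ⟨p, hp, hpe⟩ := h1
      exact ⟨p, hp, hpe.symm⟩
    rw [Metric.tendsto_nhdsWithin_nhds]
    intro ε hε
    have hε2 : 0 < ε / 2 := by linarith
    have hδ : ∃ δ₀ > 0, ∀ p ∈ ENRaux.K A₀ A₁, p.2 ≤ ω - ε/2 → δ₀ ≤ p.1 := by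
      set C : Set (ℝ × ℝ) := ENRaux.K A₀ A₁ ∩ {p : ℝ × ℝ | p.2 ≤ ω - ε/2} with hCdef
      rcases Set.eq_empty_or_nonempty C with hC | hCne
      · refine ⟨1, one_pos, fun p hp hple => ?_⟩
        exfalso
        have hmem : p ∈ C := ⟨hp, hple⟩
        rw [hC] at hmem
        exact Set.notMem_empty p hmem
      · have hCcomp : IsCompact C :=
          hcomp.inter_right (isClosed_le continuous_snd continuous_const)
      
        have hCmem := (hCcomp.image continuous_fst).sInf_mem (hCne.image _)
        obtain ⟨p, ⟨hpK, hple⟩, hpeq⟩ := hCmem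
        refine ⟨p.1, ?_, fun r hr hr2 => ?_⟩
        · rcases (hfst_nonneg p hpK).lt_or_eq with h | h
          · exact h
          · exfalso
            have hmem : p.2 ∈ S₀ := by
              rw [hS₀def]
              have : ((0 : ℝ), p.2) = p := Prod.ext h rfl
              simpa [this] using hpK
            have h5 := hωleast.2 hmem
            have h6 : p.2 ≤ ω - ε/2 := hple
            linarith
        · rw [hpeq]
          exact csInf_le (hCcomp.image continuous_fst).bddBelow ⟨r, ⟨hr, hr2⟩, rfl⟩
    obtain ⟨δ₀, hδ₀pos, hδ₀⟩ := hδ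
    refine ⟨δ₀ / (‖A₁‖ + |ω - ε/2| + 1), by positivity, ?_⟩
    intro t ht hdist
    have htpos : (0 : ℝ) < t := ht
    have htsmall : t < δ₀ / (‖A₁‖ + |ω - ε/2| + 1) := by
      rw [Real.dist_eq, sub_zero, abs_of_pos htpos] at hdist
      exact hdist
    have hden : (0 : ℝ) < ‖A₁‖ + |ω - ε/2| + 1 := by positivity
    have htd : t * (‖A₁‖ + |ω - ε/2| + 1) < δ₀ := by
      rw [div_eq_mul_inv] at htsmall
      calc t * (‖A₁‖ + |ω - ε/2| + 1) < δ₀ * (‖A₁‖ + |ω - ε/2| + 1)⁻¹ *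
            (‖A₁‖ + |ω - ε/2| + 1) := by
            exact mul_lt_mul_of_pos_right htsmall hden
      _ = δ₀ := by field_simp
    have hub : f t ≤ t * ω := by
      have := hfle t ((0 : ℝ), ω) hωmem
      simpa using this
    have hlb : t * (ω - ε/2) ≤ f t := by
      obtain ⟨p, hpK, heq⟩ := hfmem t
      rw [heq]
      rcases le_or_gt p.2 (ω - ε/2) with h | h
      · have h1 : δ₀ ≤ p.1 := hδ₀ p hpK h
        have h2 : -‖A₁‖ ≤ p.2 := (hKIcc hpK).1.2
        have h3 : ω - ε/2 ≤ |ω - ε/2| := le_abs_self _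
        nlinarith
      · have := hfst_nonneg p hpK
        nlinarith
    rw [Real.dist_eq]
    have hd1 : f t / t ≤ ω := by
      rw [div_le_iff₀ htpos]
      linarith [hub, mul_comm t ω]
    have hd2 : ω - ε/2 ≤ f t / t := by
      rw [le_div_iff₀ htpos]
      linarith [hlb, mul_comm t (ω - ε/2)]
    exact abs_lt.mpr ⟨by linarith, by linarith⟩
end
end

section
/- Let θ ∈ ℝ and n ∈ ℤ with 2θ + 2nπ ≠ 0, and set λ_n = sin θ / (2θ + 2nπ) and f_n(s) = exp(−i s (2θ + 2nπ)) for s ∈ [0,1]. Then for every x ∈ [0,1], (1/2) e^{−iθ} ∫₀ˣ f_n(s) ds + (1/2) e^{iθ} ∫ₓ¹ f_n(s) ds = λ_n f_n(x). (Thus f_n is a unit eigenfunction of the operator V(θ) = (1/2)(e^{−iθ}V + e^{iθ}V*), the real part of e^{−iθ} times the Volterra operator on L²(0,1), with eigenvalue λ_n.) -/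
open Filter Topology

noncomputable section

/-- the functions `f_n(s) = exp(-i s (2θ + 2nπ))` are unit eigenfunctions of
`V(θ) = (1/2)(e^{-iθ} V + e^{iθ} V*)`, the real part of `e^{-iθ}` times the Volterra operator,
with eigenvalues `λ_n = sin θ / (2θ + 2nπ)`: pointwise, for every `x ∈ [0, 1]`,
`(1/2) e^{-iθ} ∫₀ˣ f_n + (1/2) e^{iθ} ∫ₓ¹ f_n = λ_n f_n(x)`. -/
theorem volterra_eigenfunction (θ : ℝ) (n : ℤ)
    (h : 2 * θ + 2 * (n : ℝ) * Real.pi ≠ 0) :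
    ∀ x ∈ Set.Icc (0 : ℝ) 1,
      (1 / 2 : ℂ) * Complex.exp (-Complex.I * (θ : ℂ)) *
          (∫ s in (0 : ℝ)..x,
            Complex.exp (-Complex.I * (s : ℂ) * ((2 * θ + 2 * (n : ℝ) * Real.pi : ℝ) : ℂ))) +
        (1 / 2 : ℂ) * Complex.exp (Complex.I * (θ : ℂ)) *
          (∫ s in x..(1 : ℝ),
            Complex.exp (-Complex.I * (s : ℂ) * ((2 * θ + 2 * (n : ℝ) * Real.pi : ℝ) : ℂ))) =
      ((Real.sin θ / (2 * θ + 2 * (n : ℝ) * Real.pi) : ℝ) : ℂ) *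
        Complex.exp (-Complex.I * (x : ℂ) * ((2 * θ + 2 * (n : ℝ) * Real.pi : ℝ) : ℂ)) := by
  intro x _
  set a : ℝ := 2 * θ + 2 * (n : ℝ) * Real.pi with ha
  set c : ℂ := -Complex.I * (a : ℂ) with hc
  have hc0 : c ≠ 0 := by
    simp [hc, Complex.ext_iff, h]
  have hint : ∀ p q : ℝ, (∫ s in p..q,
      Complex.exp (-Complex.I * (s : ℂ) * (a : ℂ))) =
      (Complex.exp (c * q) - Complex.exp (c * p)) / c := by
    intro p q
    rw [← integral_exp_mul_complex hc0]
    congr 1; ext s; rw [hc]; ring_nf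
  rw [hint, hint]
  simp only [Complex.ofReal_one, Complex.ofReal_zero, mul_zero]
  have he1 : Complex.exp (c * 1) = Complex.exp (-2 * Complex.I * θ) := by
    have : c * 1 = -2 * Complex.I * θ + (-n : ℤ) * (2 * Real.pi * Complex.I) := by
      simp [hc, ha]; ring
    rw [this, Complex.exp_add, Complex.exp_int_mul_two_pi_mul_I, mul_one]
  rw [he1]
  have hsin : ((Real.sin θ : ℝ) : ℂ) = Complex.sin (θ : ℂ) := by
    simp [Complex.ofReal_sin]
  have hsin' : Complex.sin (θ : ℂ) =
      (Complex.exp (-(θ : ℂ) * Complex.I) - Complex.exp ((θ : ℂ) * Complex.I)) * Complex.I / 2 :=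
    rfl
  have ha0 : (a : ℂ) ≠ 0 := by exact_mod_cast h
  rw [Complex.ofReal_div, hsin, hsin']
  have hI : Complex.I ≠ 0 := Complex.I_ne_zero
  have key : Complex.exp (-2 * Complex.I * θ) * Complex.exp (Complex.I * θ) =
      Complex.exp (-Complex.I * θ) := by
    rw [← Complex.exp_add]; ring_nf
  field_simp [hc]
  have e1 : Complex.exp (c * x) = Complex.exp (-Complex.I * x * a) := by rw [hc]; ring_nf
  have k2 : Complex.exp (Complex.I * θ) * Complex.exp (-(2 * Complex.I * θ)) =
      Complex.exp (-(Complex.I * θ)) := by rw [← Complex.exp_add]; ring_nf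
  rw [e1, Complex.exp_zero, hc,
    show Complex.exp (-Complex.I * (x:ℂ) * a) = Complex.exp (-(Complex.I * (x:ℂ) * a)) from by
      ring_nf]
  linear_combination (a:ℂ) * k2 + (a:ℂ) * (Complex.exp (-(Complex.I * θ)) -
    Complex.exp (Complex.I * θ)) * Complex.exp (-(Complex.I * (x:ℂ) * a)) * Complex.I_sq
end
end

section
/- For λ < 0 define f_a(λ) = 1/(−λ) + Σ_{n=1}^∞ (3/4ⁿ)/(e^{−(4n)²} − λ) and f_b(λ) = 1/(−λ) + (1/2)/(e^{−2} − λ) + Σ_{n=1}^∞ (3/(2·4ⁿ))/(e^{−(4n+2)²} − λ). Then for every integer n ≥ 1: f_a(−e^{−(4n+1)²}) < f_b(−e^{−(4n+1)²}) and f_b(−e^{−(4n+3)²}) < f_a(−e^{−(4n+3)²}). -/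
open Filter Topology

noncomputable section

/-- `f_a(λ) = 1/(-λ) + Σ_{n≥1} (3/4ⁿ)/(e^{-(4n)²} - λ)`. -/
def fa (lam : ℝ) : ℝ :=
  1 / (-lam) +
    ∑' n : ℕ, (3 / 4 ^ (n + 1)) / (Real.exp (-((4 * ((n : ℝ) + 1)) ^ 2)) - lam)

/-- `f_b(λ) = 1/(-λ) + (1/2)/(e^{-2} - λ) + Σ_{n≥1} (3/(2·4ⁿ))/(e^{-(4n+2)²} - λ)`. -/
def fb (lam : ℝ) : ℝ :=
  1 / (-lam) + (1 / 2) / (Real.exp (-2) - lam) +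
    ∑' n : ℕ, (3 / (2 * 4 ^ (n + 1))) / (Real.exp (-((4 * ((n : ℝ) + 1) + 2) ^ 2)) - lam)

namespace FaFbAux

open Real

lemma geom_summable : Summable (fun m : ℕ => (1/4 : ℝ)^m) :=
  summable_geometric_of_lt_one (by norm_num) (by norm_num)

lemma tsum_geom (C : ℝ) : ∑' m : ℕ, C * (1/4:ℝ)^m = C * (4/3) := by
  rw [tsum_mul_left, tsum_geometric_of_lt_one (by norm_num) (by norm_num)]
  norm_num

/-- generic summability of our series -/
lemma summable_aux (C ε : ℝ) (hε : 0 < ε) (c d : ℕ → ℝ)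
    (hc : ∀ m, 0 ≤ c m) (hC : ∀ m, c m ≤ C / 4 ^ m) (hd : ∀ m, 0 < d m) :
    Summable (fun m : ℕ => c m / (d m + ε)) := by
  have hC0 : 0 ≤ C := by
    have := (hc 0).trans (hC 0); simpa using this
  refine Summable.of_nonneg_of_le (fun m => ?_) (fun m => ?_)
    (geom_summable.mul_left (C/ε))
  · have h1 := hc m
    have h2 := (hd m).trans_le (le_add_of_nonneg_right hε.le)
    positivity
  · have h2 : ε ≤ d m + ε := le_add_of_nonneg_left (hd m).le
    have h3 : c m / (d m + ε) ≤ (C / 4 ^ m) / ε := by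
      gcongr
      exact hC m
    calc c m / (d m + ε) ≤ C / 4 ^ m / ε := h3
      _ = C / ε * (1/4:ℝ)^m := by rw [one_div, inv_pow]; ring

/-- denominator bound: if `b + 11 ≤ a` then `e^{-a} + e^{-b} ≤ (13/12) e^{-b}`. -/
lemma denom_bound {a b : ℝ} (h : b + 11 ≤ a) :
    Real.exp (-a) + Real.exp (-b) ≤ 13/12 * Real.exp (-b) := by
  have e1 : Real.exp (-a) = Real.exp (-b) * Real.exp (b - a) := by
    rw [← Real.exp_add]; ring_nf
  have e2 : Real.exp (b - a) ≤ Real.exp (-11) := Real.exp_le_exp.mpr (by linarith)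
  have e4 : (12:ℝ) ≤ Real.exp 11 := by have := Real.add_one_le_exp (11:ℝ); linarith
  have e3 : Real.exp (-11) * Real.exp 11 = 1 := by rw [← Real.exp_add]; simp
  have e5 : Real.exp (-11) ≤ 1/12 := by nlinarith [Real.exp_pos (-11)]
  nlinarith [Real.exp_pos (-b), Real.exp_pos (b - a)]

lemma pow4_le_exp (m : ℕ) : (4:ℝ)^m ≤ Real.exp (2 * m) := by
  have h4 : (4:ℝ) ≤ Real.exp 2 := by
    have h1 := Real.exp_one_gt_d9
    have h2 : Real.exp 2 = Real.exp 1 * Real.exp 1 := by rw [← Real.exp_add]; norm_num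
    nlinarith
  calc (4:ℝ)^m ≤ (Real.exp 2)^m := pow_le_pow_left₀ (by norm_num) h4 m
    _ = Real.exp (m * 2) := (Real.exp_nat_mul 2 m).symm
    _ = Real.exp (2 * m) := by ring_nf

/-- key growth estimate: `N * 4^(k+1) ≤ exp (3N)` where `N = k+1`. -/
lemma growth (k : ℕ) : ((k:ℝ) + 1) * 4 ^ (k+1) ≤ Real.exp (3 * ((k:ℝ)+1)) := by
  set N : ℝ := (k:ℝ) + 1 with hN
  have h1 : N ≤ Real.exp N := by
    have := Real.add_one_le_exp (k:ℝ)
    have h2 : Real.exp (k:ℝ) ≤ Real.exp N := Real.exp_le_exp.mpr (by simp [hN])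
    linarith
  have h2 : (4:ℝ)^(k+1) ≤ Real.exp (2 * N) := by
    have := pow4_le_exp (k+1)
    have hcast : (2:ℝ) * ((k+1:ℕ):ℝ) = 2 * N := by push_cast [hN]; ring
    rwa [hcast] at this
  calc N * 4^(k+1) ≤ Real.exp N * Real.exp (2*N) := by
        apply mul_le_mul h1 h2 (by positivity) (by positivity)
    _ = Real.exp (3*N) := by rw [← Real.exp_add]; ring_nf

/-- `exp 3 ≥ 4`, so `exp (x) ≥ 16` for `x ≥ 6`. -/
lemma exp_ge_16 {x : ℝ} (hx : 6 ≤ x) : (16:ℝ) ≤ Real.exp x := by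
  have h3 : (4:ℝ) ≤ Real.exp 3 := by have := Real.add_one_le_exp (3:ℝ); linarith
  have h6 : Real.exp 6 = Real.exp 3 * Real.exp 3 := by rw [← Real.exp_add]; norm_num
  have := Real.exp_le_exp.mpr hx
  nlinarith [Real.exp_pos (3:ℝ)]

/-- per-term upper bound by dropping `ε` from the denominator. -/
lemma term_upper {c y Y ε : ℝ} (hc0 : 0 ≤ c) (hc : c ≤ 3) (hε : 0 < ε) (hy : y ≤ Y) :
    c / (Real.exp (-y) + ε) ≤ 3 * Real.exp Y := by
  have h1 : c / (Real.exp (-y) + ε) ≤ c / Real.exp (-y) := by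
    gcongr
    exact le_add_of_nonneg_right hε.le
  have h2 : c / Real.exp (-y) = c * Real.exp y := by
    rw [Real.exp_neg]
    field_simp
  have h3 : Real.exp y ≤ Real.exp Y := Real.exp_le_exp.mpr hy
  have h4 : c * Real.exp y ≤ 3 * Real.exp Y :=
    mul_le_mul hc h3 (Real.exp_pos _).le (by norm_num)
  linarith

/-- per-term sharp lower bound when the denominator's exponential is negligible. -/
lemma term_lower {c y X : ℝ} (hc : 0 ≤ c) (h : X + 11 ≤ y) :
    12/13 * c * Real.exp X ≤ c / (Real.exp (-y) + Real.exp (-X)) := by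
  have hd := denom_bound h
  have hpos : (0:ℝ) < 13/12 * Real.exp (-X) := by positivity
  have h1 : c / (13/12 * Real.exp (-X)) ≤ c / (Real.exp (-y) + Real.exp (-X)) :=
    div_le_div_of_nonneg_left hc (by positivity) hd
  have h2 : c / (13/12 * Real.exp (-X)) = 12/13 * c * Real.exp X := by
    rw [Real.exp_neg]
    field_simp
  linarith

/-- geometric bound on the tail of the series. -/
lemma tail_bound (ε : ℝ) (hε : 0 < ε) (K : ℕ) (C : ℝ) (hC0 : 0 ≤ C) (c d : ℕ → ℝ)
    (hc0 : ∀ m, 0 ≤ c m) (hc : ∀ m, c m ≤ C / 4 ^ m) (hd : ∀ m, 0 < d m)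
    (hsum : Summable (fun m => c m / (d m + ε))) :
    ∑' i : ℕ, c (i + K) / (d (i + K) + ε) ≤ C / (4 ^ K * ε) * (4/3) := by
  have hb : ∀ i : ℕ, c (i+K) / (d (i+K) + ε) ≤ (C/(4^K * ε)) * (1/4:ℝ)^i := by
    intro i
    have h1 : c (i+K)/(d (i+K)+ε) ≤ (C/4^(i+K))/ε := by
      gcongr
      · exact hc _
      · exact le_add_of_nonneg_left (hd _).le
    have h2 : (C/4^(i+K))/ε = (C/(4^K*ε)) * (1/4:ℝ)^i := by
      rw [pow_add, one_div, inv_pow]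
      ring
    linarith
  calc ∑' i : ℕ, c (i + K) / (d (i + K) + ε)
      ≤ ∑' i : ℕ, (C/(4^K * ε)) * (1/4:ℝ)^i :=
        Summable.tsum_le_tsum hb ((summable_nat_add_iff K).2 hsum) (geom_summable.mul_left _)
    _ = C/(4^K * ε) * (4/3) := tsum_geom _

lemma exp_ge_36 {x : ℝ} (hx : 10 ≤ x) : (36:ℝ) ≤ Real.exp x := by
  have h5 : (6:ℝ) ≤ Real.exp 5 := by have := Real.add_one_le_exp (5:ℝ); linarith
  have h10 : Real.exp 10 = Real.exp 5 * Real.exp 5 := by rw [← Real.exp_add]; norm_num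
  have := Real.exp_le_exp.mpr hx
  nlinarith [Real.exp_pos (5:ℝ)]

end FaFbAux

open FaFbAux Real

set_option maxHeartbeats 2000000 in
lemma case1 (k : ℕ) :
    fa (-Real.exp (-((4 * ((k+1 : ℕ) : ℝ) + 1) ^ 2))) <
      fb (-Real.exp (-((4 * ((k+1 : ℕ) : ℝ) + 1) ^ 2))) := by
  have hcast : ((k+1 : ℕ) : ℝ) = (k:ℝ) + 1 := by push_cast; ring
  rw [hcast]
  set X : ℝ := (4 * ((k:ℝ) + 1) + 1) ^ 2 with hX
  set ε : ℝ := Real.exp (-X) with hε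
  have hεpos : 0 < ε := Real.exp_pos _
  have hEinv : Real.exp X = 1/ε := by
    rw [hε, Real.exp_neg, one_div, inv_inv]
  unfold fa fb
  simp only [sub_neg_eq_add, neg_neg]
  -- summability
  have hSa : Summable (fun m : ℕ => 3 / 4 ^ (m + 1) /
      (Real.exp (-((4 * ((m:ℝ) + 1)) ^ 2)) + ε)) := by
    exact summable_aux (3/4) ε hεpos (fun m => 3 / 4 ^ (m+1))
      (fun m => Real.exp (-((4 * ((m:ℝ) + 1)) ^ 2)))
      (fun m => by positivity)
      (fun m => le_of_eq (show (3:ℝ)/4^(m+1) = 3/4/4^m by ring))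
      (fun m => Real.exp_pos _)
  have hSb : Summable (fun m : ℕ => 3 / (2 * 4 ^ (m + 1)) /
      (Real.exp (-((4 * ((m:ℝ) + 1) + 2) ^ 2)) + ε)) := by
    exact summable_aux (3/8) ε hεpos (fun m => 3 / (2 * 4 ^ (m+1)))
      (fun m => Real.exp (-((4 * ((m:ℝ) + 1) + 2) ^ 2)))
      (fun m => by positivity)
      (fun m => le_of_eq (show (3:ℝ)/(2*4^(m+1)) = 3/8/4^m by ring))
      (fun m => Real.exp_pos _)
  -- head bound for the a-series
  have hhead : ∑ i ∈ Finset.range (k+1), 3 / 4 ^ (i + 1) /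
      (Real.exp (-((4 * ((i:ℝ) + 1)) ^ 2)) + ε)
      ≤ ((k:ℝ)+1) * (3 * Real.exp ((4*((k:ℝ)+1))^2)) := by
    have h := Finset.sum_le_card_nsmul (Finset.range (k+1))
      (fun i => 3 / 4 ^ (i + 1) / (Real.exp (-((4 * ((i:ℝ) + 1)) ^ 2)) + ε))
      (3 * Real.exp ((4*((k:ℝ)+1))^2)) ?_
    · have hcard : (Finset.range (k+1)).card = k + 1 := Finset.card_range _
      rw [hcard, nsmul_eq_mul] at h
      push_cast at h ⊢
      linarith
    · intro i hi
      have h2 : i < k + 1 := Finset.mem_range.mp hi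
      have h3 : (i:ℝ) ≤ (k:ℝ) := by exact_mod_cast Nat.lt_succ_iff.mp h2
      have h14 : (1:ℝ) ≤ 4 ^ (i+1) := one_le_pow₀ (by norm_num)
      refine term_upper (by positivity) ?_ hεpos ?_
      · exact div_le_self (by norm_num) h14
      · have h0 : (0:ℝ) ≤ (i:ℝ) + 1 := by positivity
        nlinarith
  -- tail bound for the a-series
  have htail := tail_bound ε hεpos (k+1) (3/4) (by norm_num) (fun m => 3 / 4 ^ (m+1))
      (fun m => Real.exp (-((4 * ((m:ℝ) + 1)) ^ 2)))
      (fun m => by positivity)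
      (fun m => le_of_eq (show (3:ℝ)/4^(m+1) = 3/4/4^m by ring))
      (fun m => Real.exp_pos _) hSa
  beta_reduce at htail
  have hSa_le : (∑' m : ℕ, 3 / 4 ^ (m + 1) /
      (Real.exp (-((4 * ((m:ℝ) + 1)) ^ 2)) + ε))
      ≤ ((k:ℝ)+1) * (3 * Real.exp ((4*((k:ℝ)+1))^2)) + (3/4) / (4^(k+1) * ε) * (4/3) := by
    rw [← hSa.sum_add_tsum_nat_add (k+1)]
    exact add_le_add hhead htail
  -- lower bound for the b-series : single term at index k
  have hlow : 12/13 * (3/(2*4^(k+1))) * Real.exp X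
      ≤ ∑' m : ℕ, 3 / (2 * 4 ^ (m + 1)) /
        (Real.exp (-((4 * ((m:ℝ) + 1) + 2) ^ 2)) + ε) := by
    have h1 : X + 11 ≤ (4 * ((k:ℝ)+1) + 2)^2 := by
      have h0 : (0:ℝ) ≤ (k:ℝ) := Nat.cast_nonneg k
      rw [hX]; nlinarith
    have h2 := term_lower (c := 3/(2*4^(k+1))) (by positivity) h1
    have h3 := hSb.le_tsum k (fun j _ => by positivity)
    calc 12/13 * (3/(2*4^(k+1))) * Real.exp X
        ≤ 3/(2*4^(k+1)) / (Real.exp (-((4 * ((k:ℝ)+1) + 2)^2)) + ε) := by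
          rw [hε]; exact h2
      _ ≤ _ := h3
  -- numeric comparison
  have hnum : ((k:ℝ)+1) * (3 * Real.exp ((4*((k:ℝ)+1))^2)) + (3/4) / (4^(k+1) * ε) * (4/3)
      < 12/13 * (3/(2*4^(k+1))) * Real.exp X := by
    have hQpos : (0:ℝ) < (4:ℝ)^(k+1) := by positivity
    have hE0 : (0:ℝ) < Real.exp ((4*((k:ℝ)+1))^2) := Real.exp_pos _
    have hεinv : (3/4) / (4^(k+1) * ε) * (4/3) = Real.exp X / 4^(k+1) := by
      rw [hEinv]
      field_simp
    have hEX : Real.exp X = Real.exp ((4*((k:ℝ)+1))^2) *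
        (Real.exp (3*((k:ℝ)+1)) * Real.exp (5*((k:ℝ)+1)+1)) := by
      rw [hX, ← Real.exp_add, ← Real.exp_add]; congr 1; ring
    have hgrow : ((k:ℝ)+1) * 4^(k+1) ≤ Real.exp (3*((k:ℝ)+1)) := growth k
    have h16 : (16:ℝ) ≤ Real.exp (5*((k:ℝ)+1)+1) := by
      apply exp_ge_16
      have h0 : (0:ℝ) ≤ (k:ℝ) := Nat.cast_nonneg k
      linarith
    rw [hεinv, hEX]
    set E0 := Real.exp ((4*((k:ℝ)+1))^2)
    set e3 := Real.exp (3*((k:ℝ)+1))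
    set e5 := Real.exp (5*((k:ℝ)+1)+1)
    have he3 : (0:ℝ) < e3 := Real.exp_pos _
    have he5 : (0:ℝ) < e5 := Real.exp_pos _
    have key : ((k:ℝ)+1) * (3 * E0) * 4^(k+1) + E0 * (e3 * e5)
        < 12/13 * (3/2) * (E0 * (e3 * e5)) := by
      nlinarith [mul_le_mul_of_nonneg_right hgrow hE0.le, mul_pos he3 (mul_pos hE0 he5),
        mul_pos hE0 he3]
    have hL : ((k:ℝ)+1) * (3 * E0) + E0 * (e3 * e5) / 4^(k+1)
        = (((k:ℝ)+1) * (3 * E0) * 4^(k+1) + E0 * (e3 * e5)) / 4^(k+1) := by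
      field_simp
    have hR : 12/13 * (3/(2*4^(k+1))) * (E0 * (e3 * e5))
        = (12/13 * (3/2) * (E0 * (e3 * e5))) / 4^(k+1) := by
      field_simp
    rw [hL, hR]
    gcongr
  -- combine
  have hkey : (∑' m : ℕ, 3 / 4 ^ (m + 1) /
      (Real.exp (-((4 * ((m:ℝ) + 1)) ^ 2)) + ε))
      < ∑' m : ℕ, 3 / (2 * 4 ^ (m + 1)) /
        (Real.exp (-((4 * ((m:ℝ) + 1) + 2) ^ 2)) + ε) :=
    lt_of_le_of_lt hSa_le (lt_of_lt_of_le hnum hlow)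
  have hhalf : (0:ℝ) < 1/2 / (Real.exp (-2) + ε) := by positivity
  linarith

set_option maxHeartbeats 2000000 in
lemma case2 (k : ℕ) :
    fb (-Real.exp (-((4 * ((k+1 : ℕ) : ℝ) + 3) ^ 2))) <
      fa (-Real.exp (-((4 * ((k+1 : ℕ) : ℝ) + 3) ^ 2))) := by
  have hcast : ((k+1 : ℕ) : ℝ) = (k:ℝ) + 1 := by push_cast; ring
  rw [hcast]
  set X : ℝ := (4 * ((k:ℝ) + 1) + 3) ^ 2 with hX
  set ε : ℝ := Real.exp (-X) with hε
  have hεpos : 0 < ε := Real.exp_pos _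
  have hEinv : Real.exp X = 1/ε := by
    rw [hε, Real.exp_neg, one_div, inv_inv]
  unfold fa fb
  simp only [sub_neg_eq_add, neg_neg]
  -- summability
  have hSa : Summable (fun m : ℕ => 3 / 4 ^ (m + 1) /
      (Real.exp (-((4 * ((m:ℝ) + 1)) ^ 2)) + ε)) := by
    exact summable_aux (3/4) ε hεpos (fun m => 3 / 4 ^ (m+1))
      (fun m => Real.exp (-((4 * ((m:ℝ) + 1)) ^ 2)))
      (fun m => by positivity)
      (fun m => le_of_eq (show (3:ℝ)/4^(m+1) = 3/4/4^m by ring))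
      (fun m => Real.exp_pos _)
  have hSb : Summable (fun m : ℕ => 3 / (2 * 4 ^ (m + 1)) /
      (Real.exp (-((4 * ((m:ℝ) + 1) + 2) ^ 2)) + ε)) := by
    exact summable_aux (3/8) ε hεpos (fun m => 3 / (2 * 4 ^ (m+1)))
      (fun m => Real.exp (-((4 * ((m:ℝ) + 1) + 2) ^ 2)))
      (fun m => by positivity)
      (fun m => le_of_eq (show (3:ℝ)/(2*4^(m+1)) = 3/8/4^m by ring))
      (fun m => Real.exp_pos _)
  -- the extra half-term of `fb`
  have hhalf : 1/2 / (Real.exp (-2) + ε) ≤ 3 * Real.exp 2 :=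
    term_upper (by norm_num) (by norm_num) hεpos le_rfl
  -- head bound for the b-series
  have hhead : ∑ i ∈ Finset.range (k+1), 3 / (2 * 4 ^ (i + 1)) /
      (Real.exp (-((4 * ((i:ℝ) + 1) + 2) ^ 2)) + ε)
      ≤ ((k:ℝ)+1) * (3 * Real.exp ((4*((k:ℝ)+1)+2)^2)) := by
    have h := Finset.sum_le_card_nsmul (Finset.range (k+1))
      (fun i => 3 / (2 * 4 ^ (i + 1)) / (Real.exp (-((4 * ((i:ℝ) + 1) + 2) ^ 2)) + ε))
      (3 * Real.exp ((4*((k:ℝ)+1)+2)^2)) ?_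
    · have hcard : (Finset.range (k+1)).card = k + 1 := Finset.card_range _
      rw [hcard, nsmul_eq_mul] at h
      push_cast at h ⊢
      linarith
    · intro i hi
      have h2 : i < k + 1 := Finset.mem_range.mp hi
      have h3 : (i:ℝ) ≤ (k:ℝ) := by exact_mod_cast Nat.lt_succ_iff.mp h2
      have h14 : (1:ℝ) ≤ 2 * 4 ^ (i+1) := by
        have : (1:ℝ) ≤ 4 ^ (i+1) := one_le_pow₀ (by norm_num)
        linarith
      refine term_upper (by positivity) ?_ hεpos ?_
      · exact div_le_self (by norm_num) h14
      · have h0 : (0:ℝ) ≤ (i:ℝ) + 1 := by positivity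
        nlinarith
  -- tail bound for the b-series
  have htail := tail_bound ε hεpos (k+1) (3/8) (by norm_num) (fun m => 3 / (2 * 4 ^ (m+1)))
      (fun m => Real.exp (-((4 * ((m:ℝ) + 1) + 2) ^ 2)))
      (fun m => by positivity)
      (fun m => le_of_eq (show (3:ℝ)/(2*4^(m+1)) = 3/8/4^m by ring))
      (fun m => Real.exp_pos _) hSb
  beta_reduce at htail
  have hSb_le : (∑' m : ℕ, 3 / (2 * 4 ^ (m + 1)) /
      (Real.exp (-((4 * ((m:ℝ) + 1) + 2) ^ 2)) + ε))
      ≤ ((k:ℝ)+1) * (3 * Real.exp ((4*((k:ℝ)+1)+2)^2)) + (3/8) / (4^(k+1) * ε) * (4/3) := by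
    rw [← hSb.sum_add_tsum_nat_add (k+1)]
    exact add_le_add hhead htail
  -- lower bound for the a-series : single term at index k+1
  have hlow : 12/13 * (3/4^(k+1+1)) * Real.exp X
      ≤ ∑' m : ℕ, 3 / 4 ^ (m + 1) /
        (Real.exp (-((4 * ((m:ℝ) + 1)) ^ 2)) + ε) := by
    have h1 : X + 11 ≤ (4 * (((k+1:ℕ)):ℝ) + 4)^2 := by
      have h0 : (0:ℝ) ≤ (k:ℝ) := Nat.cast_nonneg k
      rw [hX]; push_cast; nlinarith
    have h1' : X + 11 ≤ (4 * ((((k+1:ℕ)):ℝ) + 1))^2 := by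
      have h0 : (4 * (((k+1:ℕ)):ℝ) + 4)^2 = (4 * ((((k+1:ℕ)):ℝ) + 1))^2 := by ring
      linarith [h1, le_of_eq h0]
    have h2 := term_lower (c := 3/4^(k+1+1)) (by positivity) h1'
    have h3 := hSa.le_tsum (k+1) (fun j _ => by positivity)
    calc 12/13 * (3/4^(k+1+1)) * Real.exp X
        ≤ 3/4^(k+1+1) / (Real.exp (-((4 * ((((k+1:ℕ)):ℝ) + 1))^2)) + ε) := by
          rw [hε]; exact h2
      _ ≤ _ := h3
  -- numeric comparison
  have hnum : 3 * Real.exp 2 + (((k:ℝ)+1) * (3 * Real.exp ((4*((k:ℝ)+1)+2)^2))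
        + (3/8) / (4^(k+1) * ε) * (4/3))
      < 12/13 * (3/4^(k+1+1)) * Real.exp X := by
    have hQpos : (0:ℝ) < (4:ℝ)^(k+1) := by positivity
    have hE2 : (0:ℝ) < Real.exp ((4*((k:ℝ)+1)+2)^2) := Real.exp_pos _
    have hεinv : (3/8) / (4^(k+1) * ε) * (4/3) = Real.exp X / (2 * 4^(k+1)) := by
      rw [hEinv]
      field_simp
      ring
    have hEX : Real.exp X = Real.exp ((4*((k:ℝ)+1)+2)^2) *
        (Real.exp (3*((k:ℝ)+1)) * Real.exp (5*((k:ℝ)+1)+5)) := by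
      rw [hX, ← Real.exp_add, ← Real.exp_add]; congr 1; ring
    have hEX2 : Real.exp X = Real.exp (2*((k:ℝ)+1)+2) *
        Real.exp (X - (2*((k:ℝ)+1)+2)) := by
      rw [← Real.exp_add]; congr 1; ring
    have hgrow : ((k:ℝ)+1) * 4^(k+1) ≤ Real.exp (3*((k:ℝ)+1)) := growth k
    have h36a : (36:ℝ) ≤ Real.exp (5*((k:ℝ)+1)+5) := by
      apply exp_ge_36
      have h0 : (0:ℝ) ≤ (k:ℝ) := Nat.cast_nonneg k
      linarith
    have h36b : (36:ℝ) ≤ Real.exp (X - (2*((k:ℝ)+1)+2)) := by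
      apply exp_ge_36
      have h0 : (0:ℝ) ≤ (k:ℝ) := Nat.cast_nonneg k
      rw [hX]; nlinarith
    have hQ4 : (4:ℝ)^(k+1) ≤ Real.exp (2*((k:ℝ)+1)) := by
      have := pow4_le_exp (k+1)
      have hc2 : (2:ℝ) * ((k+1:ℕ):ℝ) = 2*((k:ℝ)+1) := by push_cast; ring
      rwa [hc2] at this
    rw [hεinv, hEX]
    set c1 : ℝ := (k:ℝ) + 1 with hc1
    set Q : ℝ := (4:ℝ)^(k+1) with hQ
    set E2 := Real.exp ((4*c1+2)^2) with hE2d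
    set e3 := Real.exp (3*c1)
    set e5 := Real.exp (5*c1+5)
    set e22 := Real.exp (2*c1+2)
    set eR := Real.exp (X - (2*c1+2))
    have he3 : (0:ℝ) < e3 := Real.exp_pos _
    have he5 : (0:ℝ) < e5 := Real.exp_pos _
    have he22 : (0:ℝ) < e22 := Real.exp_pos _
    have heR : (0:ℝ) < eR := Real.exp_pos _
    have heq2 : e22 * eR = E2 * (e3 * e5) := by rw [← hEX2, hEX]
    have hm22 : Real.exp 2 * Real.exp (2*c1) = e22 := by
      rw [← Real.exp_add]; congr 1; ring
    clear_value X ε c1 Q E2 e3 e5 e22 eR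
    -- individual linear pieces
    have A1 : c1 * (3 * E2) * Q ≤ 3 * (e3 * E2) := by nlinarith
    have A2 : 3 * Real.exp 2 * Q ≤ 3 * e22 := by
      have h := mul_le_mul_of_nonneg_left hQ4 (Real.exp_pos 2).le
      rw [hm22] at h
      linarith
    have A3 : 36 * (e3 * E2) ≤ E2 * (e3 * e5) := by
      nlinarith [mul_le_mul_of_nonneg_right h36a (by positivity : (0:ℝ) ≤ e3 * E2)]
    have A4 : 36 * e22 ≤ E2 * (e3 * e5) := by
      nlinarith [mul_le_mul_of_nonneg_left h36b he22.le, heq2]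
    have key : 3 * Real.exp 2 * Q + c1 * (3 * E2) * Q + E2 * (e3 * e5) / 2
        < 9/13 * (E2 * (e3 * e5)) := by
      have hp1 : (0:ℝ) < e3 * E2 := by positivity
      linarith
    have hL : 3 * Real.exp 2 + (c1 * (3 * E2) + E2 * (e3 * e5) / (2 * Q))
        = (3 * Real.exp 2 * Q + c1 * (3 * E2) * Q + E2 * (e3 * e5) / 2) / Q := by
      field_simp
      ring
    have hR : 12/13 * (3/4^(k+1+1)) * (E2 * (e3 * e5))
        = (9/13 * (E2 * (e3 * e5))) / Q := by
      rw [pow_succ, hQ]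
      field_simp
      ring
    rw [hL, hR]
    gcongr
  -- combine
  have hhalfpos : (0:ℝ) < 1/2 / (Real.exp (-2) + ε) := by positivity
  linarith

/-- the functions `f_a` and `f_b` cross infinitely often: for every `n ≥ 1`,
`f_a < f_b` at `λ = -e^{-(4n+1)²}` and `f_b < f_a` at `λ = -e^{-(4n+3)²}`. -/
theorem fa_fb_crossings :
    ∀ n : ℕ, 1 ≤ n →
      fa (-Real.exp (-((4 * (n : ℝ) + 1) ^ 2))) < fb (-Real.exp (-((4 * (n : ℝ) + 1) ^ 2))) ∧
      fb (-Real.exp (-((4 * (n : ℝ) + 3) ^ 2))) < fa (-Real.exp (-((4 * (n : ℝ) + 3) ^ 2))) := by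
  intro n hn
  obtain ⟨k, rfl⟩ : ∃ k, n = k + 1 := ⟨n - 1, (Nat.succ_pred_eq_of_pos hn).symm⟩
  exact ⟨case1 k, case2 k⟩
end
end
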